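/- arXiv:1006.5780 — 7 statements merged into one kernel-verified Lean document; each statement's English description precedes it below -/
import Mathlib

section
/- Let ε ∈ (0,1), let h ∈ W₂¹(0,L) satisfy h(x) ≥ √ε for all x ∈ [0,L], and let H ∈ W₂²(0,L) be the solution of H − ε² ∂ₓ²H = h on (0,L) with ∂ₓH(0) = ∂ₓH(L) = 0. Then: (i) ‖H‖_p ≤ ‖h‖_p for every p ∈ [1,∞]; (ii) H(x) ≥ √ε for all x ∈ [0,L]; (iii) ‖∂ₓH‖₂² + 2ε² ‖∂ₓ²H‖₂² ≤ ‖∂ₓh‖₂²; (iv) ε² ‖∂ₓH‖_∞ ≤ ‖h‖₁. -/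
open MeasureTheory Set
open scoped ENNReal NNReal


lemma minp (L ε : ℝ) (hL : 0 < L) (hε : 0 < ε)
    (h H : ℝ → ℝ) (c : ℝ)
    (hHreg : ∀ x ∈ Icc (0:ℝ) L, DifferentiableAt ℝ H x ∧ DifferentiableAt ℝ (deriv H) x)
    (hHeq : ∀ x ∈ Ioo (0:ℝ) L, H x - ε ^ 2 * deriv (deriv H) x = h x)
    (hbc0 : deriv H 0 = 0) (hbcL : deriv H L = 0)
    (hlb : ∀ x ∈ Icc (0:ℝ) L, c ≤ h x) :
    ∀ x ∈ Icc (0:ℝ) L, c ≤ H x := by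
  have hε2 : 0 < ε ^ 2 := by positivity
  have contH : ContinuousOn H (Icc 0 L) := fun x hx => (hHreg x hx).1.continuousAt.continuousWithinAt
  have contH' : ContinuousOn (deriv H) (Icc 0 L) :=
    fun x hx => (hHreg x hx).2.continuousAt.continuousWithinAt
  obtain ⟨x₀, hx₀, hmin⟩ := isCompact_Icc.exists_isMinOn (nonempty_Icc.2 hL.le) contH
  intro x hx
  by_contra hcon
  push_neg at hcon
  have hH0 : H x₀ < c := lt_of_le_of_lt (hmin hx) hcon
  -- the set where H < c is relatively open and contains x₀
  have hev : ∀ᶠ y in nhdsWithin x₀ (Icc 0 L), H y < c :=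
    (contH x₀ hx₀).eventually_lt continuousWithinAt_const hH0
  obtain ⟨U, hUopen, hx₀U, hU⟩ := mem_nhdsWithin.1 hev
  obtain ⟨δ₁, hδ₁, hball⟩ := Metric.isOpen_iff.1 hUopen x₀ hx₀U
  -- second derivative is negative where H < c
  have hneg : ∀ y ∈ Ioo (0:ℝ) L, H y < c → deriv (deriv H) y < 0 := by
    intro y hy hyc
    have := hHeq y hy
    have hhy : c ≤ h y := hlb y (Ioo_subset_Icc_self hy)
    nlinarith
  rcases lt_or_eq_of_le hx₀.2 with hx₀L | hx₀L
  · -- case x₀ < L : argue on a right interval [x₀, x₀+δ]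
    have hd0 : deriv H x₀ = 0 := by
      rcases eq_or_lt_of_le hx₀.1 with h0 | h0
      · rw [← h0]; exact hbc0
      · exact (hmin.isLocalMin (Icc_mem_nhds h0 hx₀L)).deriv_eq_zero
    set δ : ℝ := min (δ₁ / 2) (L - x₀) with hδdef
    have hδpos : 0 < δ := lt_min (by linarith) (by linarith)
    have hsub : Icc x₀ (x₀ + δ) ⊆ Icc 0 L := by
      apply Icc_subset_Icc hx₀.1
      have : δ ≤ L - x₀ := min_le_right _ _
      linarith
    have hsubU : Icc x₀ (x₀ + δ) ⊆ U := by
      intro y hy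
      apply hball
      have h1 : δ ≤ δ₁ / 2 := min_le_left _ _
      simp only [Metric.mem_ball, Real.dist_eq, abs_sub_lt_iff]
      constructor <;> [skip; skip] <;>
        · rcases hy with ⟨hy1, hy2⟩; linarith
    have hlt : ∀ y ∈ Icc x₀ (x₀ + δ), H y < c := fun y hy => hU ⟨hsubU hy, hsub hy⟩
    have hanti : StrictAntiOn (deriv H) (Icc x₀ (x₀ + δ)) := by
      apply strictAntiOn_of_deriv_neg (convex_Icc _ _) (contH'.mono hsub)
      intro y hy
      rw [interior_Icc] at hy
      have hyIoo : y ∈ Ioo (0:ℝ) L := by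
        constructor
        · exact lt_of_le_of_lt hx₀.1 hy.1
        · calc y < x₀ + δ := hy.2
            _ ≤ L := by have : δ ≤ L - x₀ := min_le_right _ _; linarith
      exact hneg y hyIoo (hlt y (Ioo_subset_Icc_self hy))
    have hanti2 : StrictAntiOn H (Icc x₀ (x₀ + δ)) := by
      apply strictAntiOn_of_deriv_neg (convex_Icc _ _) (contH.mono hsub)
      intro y hy
      rw [interior_Icc] at hy
      have : deriv H y < deriv H x₀ :=
        hanti (left_mem_Icc.2 (by linarith)) (Ioo_subset_Icc_self hy) hy.1
      rw [hd0] at this; exact this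
    have : H (x₀ + δ) < H x₀ :=
      hanti2 (left_mem_Icc.2 (by linarith)) (right_mem_Icc.2 (by linarith)) (by linarith)
    exact absurd (hmin (hsub (right_mem_Icc.2 (by linarith)))) (not_le.2 this)
  · -- case x₀ = L : argue on a left interval [L-δ, L]
    have hd0 : deriv H x₀ = 0 := by rw [hx₀L]; exact hbcL
    set δ : ℝ := min (δ₁ / 2) x₀ with hδdef
    have hx₀pos : 0 < x₀ := by rw [hx₀L]; exact hL
    have hδpos : 0 < δ := lt_min (by linarith) hx₀pos
    have hsub : Icc (x₀ - δ) x₀ ⊆ Icc 0 L := by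
      apply Icc_subset_Icc _ hx₀.2
      have : δ ≤ x₀ := min_le_right _ _
      linarith
    have hsubU : Icc (x₀ - δ) x₀ ⊆ U := by
      intro y hy
      apply hball
      have h1 : δ ≤ δ₁ / 2 := min_le_left _ _
      simp only [Metric.mem_ball, Real.dist_eq, abs_sub_lt_iff]
      constructor <;>
        · rcases hy with ⟨hy1, hy2⟩; linarith
    have hlt : ∀ y ∈ Icc (x₀ - δ) x₀, H y < c := fun y hy => hU ⟨hsubU hy, hsub hy⟩
    have hanti : StrictAntiOn (deriv H) (Icc (x₀ - δ) x₀) := by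
      apply strictAntiOn_of_deriv_neg (convex_Icc _ _) (contH'.mono hsub)
      intro y hy
      rw [interior_Icc] at hy
      have hyIoo : y ∈ Ioo (0:ℝ) L := by
        constructor
        · have : δ ≤ x₀ := min_le_right _ _; linarith [hy.1]
        · exact lt_of_lt_of_le hy.2 hx₀.2
      exact hneg y hyIoo (hlt y (Ioo_subset_Icc_self hy))
    have hmono2 : StrictMonoOn H (Icc (x₀ - δ) x₀) := by
      apply strictMonoOn_of_deriv_pos (convex_Icc _ _) (contH.mono hsub)
      intro y hy
      rw [interior_Icc] at hy
      have : deriv H x₀ < deriv H y :=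
        hanti (Ioo_subset_Icc_self hy) (right_mem_Icc.2 (by linarith)) hy.2
      rw [hd0] at this; linarith
    have : H (x₀ - δ) < H x₀ :=
      hmono2 (left_mem_Icc.2 (by linarith)) (right_mem_Icc.2 (by linarith)) (by linarith)
    exact absurd (hmin (hsub (left_mem_Icc.2 (by linarith)))) (not_le.2 this)

/-- Properties of the Neumann resolvent `H = (1 - ε²∂ₓ²)⁻¹ h`:
(i) `‖H‖_p ≤ ‖h‖_p` for all `p ∈ [1,∞]`; (ii) `H ≥ √ε`;
(iii) `‖∂ₓH‖₂² + 2ε²‖∂ₓ²H‖₂² ≤ ‖∂ₓh‖₂²`; (iv) `ε²‖∂ₓH‖_∞ ≤ ‖h‖₁`. -/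
theorem resolvent_properties
    (L ε : ℝ) (hL : 0 < L) (hε : ε ∈ Ioo (0:ℝ) 1)
    (h H : ℝ → ℝ)
    -- `h ∈ W₂¹(0,L)` with `h ≥ √ε`
    (hreg : ∀ x ∈ Icc (0:ℝ) L, DifferentiableAt ℝ h x)
    (hL2 : MemLp h 2 (volume.restrict (Ioo 0 L)))
    (hL2' : MemLp (deriv h) 2 (volume.restrict (Ioo 0 L)))
    (hlb : ∀ x ∈ Icc (0:ℝ) L, Real.sqrt ε ≤ h x)
    -- `H ∈ W₂²(0,L)` solves `H − ε²∂ₓ²H = h` with Neumann boundary conditions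
    (hHreg : ∀ x ∈ Icc (0:ℝ) L, DifferentiableAt ℝ H x ∧ DifferentiableAt ℝ (deriv H) x)
    (hHL2 : MemLp (deriv (deriv H)) 2 (volume.restrict (Ioo 0 L)))
    (hHeq : ∀ x ∈ Ioo (0:ℝ) L, H x - ε ^ 2 * deriv (deriv H) x = h x)
    (hHbc : deriv H 0 = 0 ∧ deriv H L = 0) :
    -- (i) contraction in every `L_p`, `1 ≤ p ≤ ∞`
    (∀ p : ENNReal, 1 ≤ p →
      eLpNorm H p (volume.restrict (Ioo 0 L)) ≤ eLpNorm h p (volume.restrict (Ioo 0 L))) ∧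
    -- (ii) lower bound
    (∀ x ∈ Icc (0:ℝ) L, Real.sqrt ε ≤ H x) ∧
    -- (iii) gradient estimate
    ((∫ x in (0:ℝ)..L, (deriv H x) ^ 2) + 2 * ε ^ 2 * ∫ x in (0:ℝ)..L, (deriv (deriv H) x) ^ 2)
      ≤ (∫ x in (0:ℝ)..L, (deriv h x) ^ 2) ∧
    -- (iv) uniform gradient bound
    ε ^ 2 * sSup ((fun x => |deriv H x|) '' Icc (0:ℝ) L) ≤ ∫ x in (0:ℝ)..L, |h x| := by
  obtain ⟨hε0, hε1⟩ := hε
  have hε2 : (0:ℝ) < ε ^ 2 := by positivity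
  have sqε : 0 < Real.sqrt ε := Real.sqrt_pos.2 hε0
  -- continuity
  have conth : ContinuousOn h (Icc 0 L) :=
    fun x hx => (hreg x hx).continuousAt.continuousWithinAt
  have contH : ContinuousOn H (Icc 0 L) :=
    fun x hx => (hHreg x hx).1.continuousAt.continuousWithinAt
  have contH' : ContinuousOn (deriv H) (Icc 0 L) :=
    fun x hx => (hHreg x hx).2.continuousAt.continuousWithinAt
  -- part (ii)
  have part2 : ∀ x ∈ Icc (0:ℝ) L, Real.sqrt ε ≤ H x :=
    minp L ε hL hε0 h H (Real.sqrt ε) hHreg hHeq hHbc.1 hHbc.2 hlb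
  have Hpos : ∀ x ∈ Icc (0:ℝ) L, 0 < H x := fun x hx => lt_of_lt_of_le sqε (part2 x hx)
  have hpos : ∀ x ∈ Icc (0:ℝ) L, 0 < h x := fun x hx => lt_of_lt_of_le sqε (hlb x hx)
  -- integrability helpers
  have intIoo : ∀ f : ℝ → ℝ, ContinuousOn f (Icc 0 L) → IntegrableOn f (Ioo 0 L) volume :=
    fun f hf => (hf.integrableOn_Icc).mono_set Ioo_subset_Icc_self
  have intInterval : ∀ f : ℝ → ℝ, ContinuousOn f (Icc 0 L) → IntervalIntegrable f volume 0 L :=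
    fun f hf => ContinuousOn.intervalIntegrable (by rwa [uIcc_of_le hL.le])
  have hres : volume.restrict (Ioc (0:ℝ) L) = volume.restrict (Ioo 0 L) :=
    Measure.restrict_congr_set Ioo_ae_eq_Ioc.symm
  have intIntervalOfAE : ∀ f g : ℝ → ℝ, ContinuousOn g (Icc 0 L) →
      (∀ x ∈ Ioo (0:ℝ) L, f x = g x) → IntervalIntegrable f volume 0 L := by
    intro f g hg hfg
    rw [intervalIntegrable_iff_integrableOn_Ioc_of_le hL.le, IntegrableOn, hres]
    exact ((intIoo g hg).congr_fun (fun x hx => (hfg x hx).symm) measurableSet_Ioo)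
  -- second derivative facts
  have hB : ∀ x ∈ Ioo (0:ℝ) L, deriv (deriv H) x = (H x - h x) / ε ^ 2 := by
    intro x hx
    have := hHeq x hx
    field_simp
    linarith
  have intH'' : IntervalIntegrable (deriv (deriv H)) volume 0 L :=
    intIntervalOfAE _ (fun x => (H x - h x) / ε ^ 2)
      ((contH.sub conth).div_const _) hB
  -- FTC for deriv H on subintervals
  have FTC : ∀ a b : ℝ, a ∈ Icc (0:ℝ) L → b ∈ Icc (0:ℝ) L → a ≤ b →
      (∫ t in a..b, deriv (deriv H) t) = deriv H b - deriv H a := by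
    intro a b ha hb hab
    apply intervalIntegral.integral_eq_sub_of_hasDerivAt
    · intro t ht
      rw [uIcc_of_le hab] at ht
      exact (hHreg t ⟨le_trans ha.1 ht.1, le_trans ht.2 hb.2⟩).2.hasDerivAt
    · apply intH''.mono_set
      rw [uIcc_of_le hab, uIcc_of_le hL.le]
      exact Icc_subset_Icc ha.1 hb.2
  -- a.e. congruence for interval integrals on subintervals of [0, L]
  have intCongr : ∀ (f g : ℝ → ℝ) (a b : ℝ), a ∈ Icc (0:ℝ) L → b ∈ Icc (0:ℝ) L →
      (∀ x ∈ Ioo (0:ℝ) L, f x = g x) →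
      (∫ t in a..b, f t) = ∫ t in a..b, g t := by
    intro f g a b ha hb hfg
    apply intervalIntegral.integral_congr_ae
    have hb' : (volume : Measure ℝ) {b} = 0 := measure_singleton b
    have ha' : (volume : Measure ℝ) {a} = 0 := measure_singleton a
    filter_upwards [measure_eq_zero_iff_ae_notMem.1 hb', measure_eq_zero_iff_ae_notMem.1 ha'] with x hxb hxa hx
    simp only [mem_singleton_iff] at hxa hxb
    rcases Set.mem_uIoc.1 hx with ⟨h1, h2⟩ | ⟨h1, h2⟩
    · refine hfg x ⟨lt_of_le_of_lt ha.1 h1, ?_⟩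
      rcases h2.lt_or_eq with hlt | he
      · exact lt_of_lt_of_le hlt hb.2
      · exact absurd he hxb
    · refine hfg x ⟨lt_of_le_of_lt hb.1 h1, ?_⟩
      rcases h2.lt_or_eq with hlt | he
      · exact lt_of_lt_of_le hlt ha.2
      · exact absurd he hxa
  -- interval integrability of h, H on subintervals
  have ih : IntervalIntegrable h volume 0 L := intInterval h conth
  have iH : IntervalIntegrable H volume 0 L := intInterval H contH
  have isub : ∀ (f : ℝ → ℝ), IntervalIntegrable f volume 0 L → ∀ a b : ℝ, a ∈ Icc (0:ℝ) L →
      b ∈ Icc (0:ℝ) L → IntervalIntegrable f volume a b := by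
    intro f hf a b ha hb
    apply hf.mono_set
    rw [uIcc_of_le hL.le]
    exact uIcc_subset_Icc ha hb
  -- FTC representations of the first derivative
  have rep1 : ∀ x ∈ Icc (0:ℝ) L, ε ^ 2 * deriv H x = ∫ t in (0:ℝ)..x, (H t - h t) := by
    intro x hx
    have h1 := FTC 0 x (left_mem_Icc.2 hL.le) hx hx.1
    have h2 : (∫ t in (0:ℝ)..x, deriv (deriv H) t) = ∫ t in (0:ℝ)..x, (H t - h t) / ε ^ 2 :=
      intCongr _ _ 0 x (left_mem_Icc.2 hL.le) hx hB
    rw [hHbc.1, sub_zero] at h1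
    rw [intervalIntegral.integral_div, h1] at h2
    field_simp at h2
    linarith
  have rep2 : ∀ x ∈ Icc (0:ℝ) L, ε ^ 2 * deriv H x = -(∫ t in x..L, (H t - h t)) := by
    intro x hx
    have h1 := FTC x L hx (right_mem_Icc.2 hL.le) hx.2
    have h2 : (∫ t in x..L, deriv (deriv H) t) = ∫ t in x..L, (H t - h t) / ε ^ 2 :=
      intCongr _ _ x L hx (right_mem_Icc.2 hL.le) hB
    rw [hHbc.2, zero_sub] at h1
    rw [intervalIntegral.integral_div, h1] at h2
    field_simp at h2
    linarith
  -- part (iv)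
  have Jh := ∫ t in (0:ℝ)..L, h t
  have grad_bound : ∀ x ∈ Icc (0:ℝ) L, ε ^ 2 * |deriv H x| ≤ ∫ t in (0:ℝ)..L, h t := by
    intro x hx
    have hhx0 : (0:ℝ) ≤ ∫ t in (0:ℝ)..x, h t :=
      intervalIntegral.integral_nonneg hx.1 (fun t ht => (hpos t ⟨ht.1, le_trans ht.2 hx.2⟩).le)
    have hhxL : (0:ℝ) ≤ ∫ t in x..L, h t :=
      intervalIntegral.integral_nonneg hx.2 (fun t ht => (hpos t ⟨le_trans hx.1 ht.1, ht.2⟩).le)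
    have hHx0 : (0:ℝ) ≤ ∫ t in (0:ℝ)..x, H t :=
      intervalIntegral.integral_nonneg hx.1 (fun t ht => (Hpos t ⟨ht.1, le_trans ht.2 hx.2⟩).le)
    have hHxL : (0:ℝ) ≤ ∫ t in x..L, H t :=
      intervalIntegral.integral_nonneg hx.2 (fun t ht => (Hpos t ⟨le_trans hx.1 ht.1, ht.2⟩).le)
    have hsplit : (∫ t in (0:ℝ)..x, h t) + ∫ t in x..L, h t = ∫ t in (0:ℝ)..L, h t :=
      intervalIntegral.integral_add_adjacent_intervals
        (isub h ih 0 x (left_mem_Icc.2 hL.le) hx) (isub h ih x L hx (right_mem_Icc.2 hL.le))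
    have e1 := rep1 x hx
    have e2 := rep2 x hx
    rw [intervalIntegral.integral_sub (isub H iH 0 x (left_mem_Icc.2 hL.le) hx)
      (isub h ih 0 x (left_mem_Icc.2 hL.le) hx)] at e1
    rw [intervalIntegral.integral_sub (isub H iH x L hx (right_mem_Icc.2 hL.le))
      (isub h ih x L hx (right_mem_Icc.2 hL.le))] at e2
    rw [← abs_of_pos hε2, ← abs_mul, abs_le]
    constructor
    · rw [e1]; linarith
    · rw [e2]; linarith
  have part4 : ε ^ 2 * sSup ((fun x => |deriv H x|) '' Icc (0:ℝ) L) ≤ ∫ x in (0:ℝ)..L, |h x| := by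
    have hJ : (∫ t in (0:ℝ)..L, h t) = ∫ t in (0:ℝ)..L, |h t| := by
      apply intervalIntegral.integral_congr
      intro t ht
      rw [uIcc_of_le hL.le] at ht
      exact (abs_of_pos (hpos t ht)).symm
    have hJnn : (0:ℝ) ≤ ∫ t in (0:ℝ)..L, h t := by
      have := grad_bound 0 (left_mem_Icc.2 hL.le)
      have : 0 ≤ ε ^ 2 * |deriv H 0| := by positivity
      linarith [grad_bound 0 (left_mem_Icc.2 hL.le)]
    have hsup : sSup ((fun x => |deriv H x|) '' Icc (0:ℝ) L) ≤ (∫ t in (0:ℝ)..L, h t) / ε ^ 2 := by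
      apply Real.sSup_le
      · rintro y ⟨x, hx, rfl⟩
        rw [le_div_iff₀ hε2, mul_comm]
        exact grad_bound x hx
      · positivity
    rw [← hJ]
    calc ε ^ 2 * sSup ((fun x => |deriv H x|) '' Icc (0:ℝ) L)
        ≤ ε ^ 2 * ((∫ t in (0:ℝ)..L, h t) / ε ^ 2) := by
          exact mul_le_mul_of_nonneg_left hsup hε2.le
      _ = ∫ t in (0:ℝ)..L, h t := by field_simp
  -- part (iii)
  have intervalOfIoo : ∀ f : ℝ → ℝ, Integrable f (volume.restrict (Ioo 0 L)) →
      IntervalIntegrable f volume 0 L := by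
    intro f hf
    rw [intervalIntegrable_iff_integrableOn_Ioc_of_le hL.le, IntegrableOn, hres]
    exact hf
  have ih' : IntervalIntegrable (deriv h) volume 0 L :=
    intervalOfIoo _ (hL2'.integrable (by norm_num))
  have ih'sq : IntervalIntegrable (fun x => deriv h x * deriv h x) volume 0 L := by
    have := hL2'.integrable_sq
    simp_rw [pow_two] at this
    exact intervalOfIoo _ this
  have contH'u : ContinuousOn (deriv H) (uIcc 0 L) := by rwa [uIcc_of_le hL.le]
  have ih'H' : IntervalIntegrable (fun x => deriv h x * deriv H x) volume 0 L :=
    ih'.mul_continuousOn contH'u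
  have ibp1 : (∫ x in (0:ℝ)..L, H x * deriv (deriv H) x)
      = -∫ x in (0:ℝ)..L, deriv H x * deriv H x := by
    have := intervalIntegral.integral_mul_deriv_eq_deriv_mul
      (u := H) (u' := deriv H) (v := deriv H) (v' := deriv (deriv H))
      (fun x hx => (hHreg x (by rwa [uIcc_of_le hL.le] at hx)).1.hasDerivAt)
      (fun x hx => (hHreg x (by rwa [uIcc_of_le hL.le] at hx)).2.hasDerivAt)
      (intInterval _ contH') intH''
    rw [hHbc.1, hHbc.2] at this
    simpa using this
  have ibp2 : (∫ x in (0:ℝ)..L, h x * deriv (deriv H) x)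
      = -∫ x in (0:ℝ)..L, deriv h x * deriv H x := by
    have := intervalIntegral.integral_mul_deriv_eq_deriv_mul
      (u := h) (u' := deriv h) (v := deriv H) (v' := deriv (deriv H))
      (fun x hx => (hreg x (by rwa [uIcc_of_le hL.le] at hx)).hasDerivAt)
      (fun x hx => (hHreg x (by rwa [uIcc_of_le hL.le] at hx)).2.hasDerivAt)
      ih' intH''
    rw [hHbc.1, hHbc.2] at this
    simpa using this
  have iHH'' : IntervalIntegrable (fun x => H x * deriv (deriv H) x) volume 0 L :=
    intIntervalOfAE _ (fun x => H x * ((H x - h x)/ε^2))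
      (contH.mul ((contH.sub conth).div_const _)) (fun x hx => by rw [hB x hx])
  have ihH'' : IntervalIntegrable (fun x => h x * deriv (deriv H) x) volume 0 L :=
    intIntervalOfAE _ (fun x => h x * ((H x - h x)/ε^2))
      (conth.mul ((contH.sub conth).div_const _)) (fun x hx => by rw [hB x hx])
  have iH''sq : IntervalIntegrable (fun x => deriv (deriv H) x * deriv (deriv H) x) volume 0 L :=
    intIntervalOfAE _ (fun x => ((H x - h x)/ε^2) * ((H x - h x)/ε^2))
      (((contH.sub conth).div_const _).mul ((contH.sub conth).div_const _))
      (fun x hx => by rw [hB x hx])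
  have key : (∫ x in (0:ℝ)..L, H x * deriv (deriv H) x)
      - ε ^ 2 * ∫ x in (0:ℝ)..L, deriv (deriv H) x * deriv (deriv H) x
      = ∫ x in (0:ℝ)..L, h x * deriv (deriv H) x := by
    have hcg : (∫ x in (0:ℝ)..L, (H x - ε ^ 2 * deriv (deriv H) x) * deriv (deriv H) x)
        = ∫ x in (0:ℝ)..L, h x * deriv (deriv H) x :=
      intCongr _ _ 0 L (left_mem_Icc.2 hL.le) (right_mem_Icc.2 hL.le)
        (fun x hx => by rw [hHeq x hx])
    rw [← hcg]
    have expand : ∀ x : ℝ, (H x - ε ^ 2 * deriv (deriv H) x) * deriv (deriv H) x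
        = H x * deriv (deriv H) x
          - ε ^ 2 * (deriv (deriv H) x * deriv (deriv H) x) := fun x => by ring
    simp_rw [expand]
    rw [intervalIntegral.integral_sub iHH'' (iH''sq.const_mul (ε ^ 2)),
      intervalIntegral.integral_const_mul]
  have energy : (∫ x in (0:ℝ)..L, deriv H x * deriv H x)
      + ε ^ 2 * ∫ x in (0:ℝ)..L, deriv (deriv H) x * deriv (deriv H) x
      = ∫ x in (0:ℝ)..L, deriv h x * deriv H x := by
    rw [ibp1, ibp2] at key; linarith
  have hCS : (∫ x in (0:ℝ)..L, deriv h x * deriv H x)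
      ≤ (∫ x in (0:ℝ)..L, deriv h x * deriv h x) / 2
        + (∫ x in (0:ℝ)..L, deriv H x * deriv H x) / 2 := by
    have iRHS : IntervalIntegrable
        (fun x => deriv h x * deriv h x / 2 + deriv H x * deriv H x / 2) volume 0 L :=
      (ih'sq.div_const 2).add (((intInterval _ contH').mul_continuousOn contH'u).div_const 2)
    have mono := intervalIntegral.integral_mono_on hL.le ih'H' iRHS
      (fun x _ => by nlinarith [sq_nonneg (deriv h x - deriv H x)])
    rw [intervalIntegral.integral_add (ih'sq.div_const 2)
      (((intInterval _ contH').mul_continuousOn contH'u).div_const 2),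
      intervalIntegral.integral_div, intervalIntegral.integral_div] at mono
    exact mono
  have part3 : ((∫ x in (0:ℝ)..L, (deriv H x) ^ 2)
      + 2 * ε ^ 2 * ∫ x in (0:ℝ)..L, (deriv (deriv H) x) ^ 2)
      ≤ ∫ x in (0:ℝ)..L, (deriv h x) ^ 2 := by
    simp_rw [pow_two]
    linarith
  -- maximum of h and maximum principle
  obtain ⟨xM, hxM, hmax⟩ := isCompact_Icc.exists_isMaxOn (nonempty_Icc.2 hL.le) conth
  set M := h xM with hMdef
  have hMpos : 0 < M := hpos xM hxM
  have maxH : ∀ x ∈ Icc (0:ℝ) L, H x ≤ M := by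
    have hdnegH : (deriv fun x => -H x) = fun x => -deriv H x :=
      funext fun x => deriv.neg
    have hmp := minp L ε hL hε0 (fun x => -h x) (fun x => -H x) (-M)
      (fun x hx => ⟨(hHreg x hx).1.neg, by rw [hdnegH]; exact (hHreg x hx).2.neg⟩)
      (fun x hx => by
        rw [hdnegH]
        have : deriv (fun x => -deriv H x) x = -deriv (deriv H) x := deriv.neg
        rw [this]
        have := hHeq x hx
        linarith)
      (by rw [hdnegH]; simp [hHbc.1])
      (by rw [hdnegH]; simp [hHbc.2])
      (fun x hx => neg_le_neg (hmax hx))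
    intro x hx
    have := hmp x hx
    linarith
  -- Lp machinery
  have memAll : ∀ (f : ℝ → ℝ) (q : ℝ≥0∞), ContinuousOn f (Icc 0 L) →
      MemLp f q (volume.restrict (Ioo 0 L)) := by
    intro f q hf
    obtain ⟨C, hC⟩ := isCompact_Icc.exists_bound_of_continuousOn hf
    exact MemLp.of_bound ((hf.mono Ioo_subset_Icc_self).aestronglyMeasurable measurableSet_Ioo) C
      ((ae_restrict_iff' measurableSet_Ioo).2 (ae_of_all _ fun x hx => hC x (Ioo_subset_Icc_self hx)))
  have intEq : ∀ f : ℝ → ℝ, (∫ x in (0:ℝ)..L, f x) = ∫ x in Ioo (0:ℝ) L, f x := by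
    intro f
    rw [intervalIntegral.integral_of_le hL.le, integral_Ioc_eq_integral_Ioo]
  have part1 : ∀ p : ENNReal, 1 ≤ p →
      eLpNorm H p (volume.restrict (Ioo 0 L)) ≤ eLpNorm h p (volume.restrict (Ioo 0 L)) := by
    intro p hp
    rcases eq_or_ne p ∞ with hptop | hptop
    · -- p = ∞ : essential supremum bound
      subst hptop
      rw [eLpNorm_exponent_top, eLpNorm_exponent_top]
      have step1 : eLpNormEssSup H (volume.restrict (Ioo 0 L)) ≤ ENNReal.ofReal M := by
        apply eLpNormEssSup_le_of_ae_bound (C := M)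
        refine (ae_restrict_iff' measurableSet_Ioo).2 (ae_of_all _ fun x hx => ?_)
        have hx' := Ioo_subset_Icc_self hx
        rw [Real.norm_eq_abs, abs_of_pos (Hpos x hx')]
        exact maxH x hx'
      refine le_trans step1 ?_
      by_contra hcon
      push_neg at hcon
      obtain ⟨b, hb0, hblt, hbM⟩ := ENNReal.lt_iff_exists_real_btwn.1 hcon
      have hbM' : b < M := by
        have := (ENNReal.ofReal_lt_ofReal_iff hMpos).1 hbM
        exact this
      -- a positive measure set where h > b
      have hxMcl : xM ∈ closure (Ioo (0:ℝ) L) := by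
        rw [closure_Ioo hL.ne]; exact hxM
      have hne : (nhdsWithin xM (Ioo (0:ℝ) L)).NeBot := mem_closure_iff_nhdsWithin_neBot.1 hxMcl
      have hev2 : ∀ᶠ y in nhdsWithin xM (Ioo (0:ℝ) L), b < h y :=
        continuousWithinAt_const.eventually_lt ((conth xM hxM).mono Ioo_subset_Icc_self) hbM'
      obtain ⟨x₁, hbx₁, hx₁⟩ := (hev2.and eventually_mem_nhdsWithin).exists
      set V := Ioo (0:ℝ) L ∩ h ⁻¹' (Ioi b) with hVdef
      have hVopen : IsOpen V :=
        (conth.mono Ioo_subset_Icc_self).isOpen_inter_preimage isOpen_Ioo isOpen_Ioi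
      have hVpos : 0 < volume V := hVopen.measure_pos volume ⟨x₁, hx₁, hbx₁⟩
      have hVres : (volume.restrict (Ioo (0:ℝ) L)) V = volume V := by
        rw [Measure.restrict_apply hVopen.measurableSet, inter_eq_left.2 inter_subset_left]
      -- a.e. bound contradicts
      have hae : ∀ᵐ x ∂(volume.restrict (Ioo (0:ℝ) L)), (‖h x‖₊ : ℝ≥0∞) < ENNReal.ofReal b := by
        filter_upwards [ae_le_eLpNormEssSup (f := h) (μ := volume.restrict (Ioo 0 L))] with x hx
        exact lt_of_le_of_lt hx hblt
      have hbad : V ⊆ {x | ¬ ((‖h x‖₊ : ℝ≥0∞) < ENNReal.ofReal b)} := by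
        rintro x ⟨hxIoo, hxb⟩
        simp only [mem_setOf_eq, not_lt]
        rw [← enorm_eq_nnnorm, ← ofReal_norm, Real.norm_eq_abs]
        apply ENNReal.ofReal_le_ofReal
        have : b < h x := hxb
        have : h x ≤ |h x| := le_abs_self _
        linarith
      have : (volume.restrict (Ioo (0:ℝ) L)) V = 0 :=
        measure_mono_null hbad hae
      rw [hVres] at this
      exact absurd this hVpos.ne'
    · -- finite p
      have hp0 : p ≠ 0 := fun h0 => by rw [h0] at hp; exact absurd hp (by simp)
      set r := p.toReal with hrdef
      have hr1 : 1 ≤ r := by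
        rw [hrdef, ← ENNReal.toReal_one]
        exact ENNReal.toReal_mono hptop hp
      have hr0 : 0 < r := lt_of_lt_of_le one_pos hr1
      have contpow : ∀ (f : ℝ → ℝ) (s : ℝ), ContinuousOn f (Icc 0 L) →
          (∀ x ∈ Icc (0:ℝ) L, 0 < f x) → ContinuousOn (fun x => f x ^ s) (Icc 0 L) :=
        fun f s hf hfp => hf.rpow_const (fun x hx => Or.inl (hfp x hx).ne')
      have contHr1 : ContinuousOn (fun x => H x ^ (r-1)) (Icc 0 L) :=
        contpow H (r-1) contH Hpos
      -- core real inequality : ∫ H^r ≤ ∫ h^r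
      have core : (∫ x in (0:ℝ)..L, H x ^ r) ≤ ∫ x in (0:ℝ)..L, h x ^ r := by
        have iHr1H'' : IntervalIntegrable (fun x => H x ^ (r-1) * deriv (deriv H) x) volume 0 L :=
          intIntervalOfAE _ (fun x => H x ^ (r-1) * ((H x - h x)/ε^2))
            (contHr1.mul ((contH.sub conth).div_const _)) (fun x hx => by rw [hB x hx])
        -- integration by parts : ∫ H^(r-1) H'' ≤ 0
        have ibp3 : (∫ x in (0:ℝ)..L, H x ^ (r-1) * deriv (deriv H) x) ≤ 0 := by
          have hderivu : ∀ x ∈ uIcc (0:ℝ) L, HasDerivAt (fun y => H y ^ (r-1))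
              (deriv H x * (r-1) * H x ^ (r-1-1)) x := by
            intro x hx
            rw [uIcc_of_le hL.le] at hx
            exact ((hHreg x hx).1.hasDerivAt).rpow_const (Or.inl (Hpos x hx).ne')
          have hderivv : ∀ x ∈ uIcc (0:ℝ) L, HasDerivAt (deriv H) (deriv (deriv H) x) x :=
            fun x hx => (hHreg x (by rwa [uIcc_of_le hL.le] at hx)).2.hasDerivAt
          have hu'int : IntervalIntegrable (fun x => deriv H x * (r-1) * H x ^ (r-1-1))
              volume 0 L :=
            intInterval _ ((contH'.mul continuousOn_const).mul (contpow H (r-1-1) contH Hpos))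
          have hibp := intervalIntegral.integral_mul_deriv_eq_deriv_mul
            hderivu hderivv hu'int intH''
          rw [hHbc.1, hHbc.2] at hibp
          simp only [mul_zero, sub_zero, zero_sub] at hibp
          rw [hibp, neg_nonpos]
          apply intervalIntegral.integral_nonneg hL.le
          intro x hx
          have h1 : (0:ℝ) ≤ r - 1 := by linarith
          have h2 : 0 < H x ^ (r-1-1) := Real.rpow_pos_of_pos (Hpos x hx) _
          have hexp : (deriv H x * (r - 1) * H x ^ (r-1-1)) * deriv H x
              = (r-1) * (H x ^ (r-1-1)) * (deriv H x)^2 := by ring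
          rw [hexp]
          exact mul_nonneg (mul_nonneg h1 h2.le) (sq_nonneg _)
        -- step 1 : ∫ H^r ≤ ∫ h H^(r-1)
        have hstep1 : (∫ x in (0:ℝ)..L, H x ^ r) ≤ ∫ x in (0:ℝ)..L, h x * H x ^ (r-1) := by
          have e1 : (∫ x in (0:ℝ)..L, (H x - ε^2 * deriv (deriv H) x) * H x ^ (r-1))
              = ∫ x in (0:ℝ)..L, h x * H x ^ (r-1) :=
            intCongr _ _ 0 L (left_mem_Icc.2 hL.le) (right_mem_Icc.2 hL.le)
              (fun x hx => by rw [hHeq x hx])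
          have e2 : (∫ x in (0:ℝ)..L, (H x - ε^2 * deriv (deriv H) x) * H x ^ (r-1))
              = (∫ x in (0:ℝ)..L, H x * H x ^ (r-1))
                - ε^2 * ∫ x in (0:ℝ)..L, H x ^ (r-1) * deriv (deriv H) x := by
            have expand : ∀ x : ℝ, (H x - ε^2 * deriv (deriv H) x) * H x ^ (r-1)
                = H x * H x ^ (r-1) - ε^2 * (H x ^ (r-1) * deriv (deriv H) x) := fun x => by ring
            simp_rw [expand]
            rw [intervalIntegral.integral_sub (intInterval (fun x => H x * H x ^ (r-1)) (contH.mul contHr1))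
              (iHr1H''.const_mul _), intervalIntegral.integral_const_mul]
          have e3 : (∫ x in (0:ℝ)..L, H x * H x ^ (r-1)) = ∫ x in (0:ℝ)..L, H x ^ r :=
            intCongr _ _ 0 L (left_mem_Icc.2 hL.le) (right_mem_Icc.2 hL.le)
              (fun x hx => by
                have hx' := Hpos x (Ioo_subset_Icc_self hx)
                rw [show H x * H x ^ (r-1) = H x ^ ((1:ℝ)+(r-1)) by
                  rw [Real.rpow_add hx', Real.rpow_one], show (1:ℝ)+(r-1) = r by ring])
          have hS : ε^2 * (∫ x in (0:ℝ)..L, H x ^ (r-1) * deriv (deriv H) x) ≤ 0 :=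
            mul_nonpos_of_nonneg_of_nonpos hε2.le ibp3
          linarith [e1, e2, e3]
        rcases eq_or_lt_of_le hr1 with hr | hr
        · -- r = 1
          have e4 : (∫ x in (0:ℝ)..L, h x * H x ^ (r-1)) = ∫ x in (0:ℝ)..L, h x ^ r := by
            apply intervalIntegral.integral_congr
            intro x hx
            rw [← hr]
            norm_num
          linarith [hstep1, e4]
        · -- r > 1 : Hölder
          set q := Real.conjExponent r with hqdef
          have hconj : Real.HolderConjugate r q := Real.HolderConjugate.conjExponent hr
          have hq : q = r / (r - 1) := rfl
          have hnn1 : 0 ≤ᵐ[volume.restrict (Ioo (0:ℝ) L)] h :=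
            (ae_restrict_iff' measurableSet_Ioo).2
              (ae_of_all _ fun x hx => (hpos x (Ioo_subset_Icc_self hx)).le)
          have hnn2 : 0 ≤ᵐ[volume.restrict (Ioo (0:ℝ) L)] (fun x => H x ^ (r-1)) :=
            (ae_restrict_iff' measurableSet_Ioo).2
              (ae_of_all _ fun x hx =>
                (Real.rpow_pos_of_pos (Hpos x (Ioo_subset_Icc_self hx)) _).le)
          have hHolder := MeasureTheory.integral_mul_le_Lp_mul_Lq_of_nonneg hconj
            (μ := volume.restrict (Ioo 0 L)) hnn1 hnn2
            (memAll h _ conth) (memAll _ _ contHr1)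
          have e5 : (∫ x in Ioo (0:ℝ) L, (H x ^ (r-1)) ^ q) = ∫ x in Ioo (0:ℝ) L, H x ^ r := by
            apply setIntegral_congr_fun measurableSet_Ioo
            intro x hx
            have hx' := Hpos x (Ioo_subset_Icc_self hx)
            have hr1' : r - 1 ≠ 0 := sub_ne_zero.2 hr.ne'
            have hq1 : (r-1) * q = r := by
              rw [hq]; field_simp
            show (H x ^ (r-1)) ^ q = H x ^ r
            rw [← Real.rpow_mul hx'.le, hq1]
          have hHolder' : (∫ x in (0:ℝ)..L, h x * H x ^ (r-1))
              ≤ (∫ x in (0:ℝ)..L, h x ^ r)^(1/r) * (∫ x in (0:ℝ)..L, H x ^ r)^(1/q) := by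
            rw [intEq, intEq, intEq, ← e5]
            exact hHolder
          have hApos : 0 < ∫ x in (0:ℝ)..L, H x ^ r := by
            have hcl : (0:ℝ) < Real.sqrt ε ^ r := Real.rpow_pos_of_pos sqε r
            have hmono := intervalIntegral.integral_mono_on hL.le
              (intervalIntegrable_const (c := Real.sqrt ε ^ r))
              (intInterval _ (contpow H r contH Hpos))
              (fun x hx => Real.rpow_le_rpow (Real.sqrt_nonneg ε) (part2 x hx) hr0.le)
            rw [intervalIntegral.integral_const, sub_zero, smul_eq_mul] at hmono
            nlinarith
          have hBnn : 0 ≤ ∫ x in (0:ℝ)..L, h x ^ r :=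
            intervalIntegral.integral_nonneg hL.le
              (fun x hx => (Real.rpow_pos_of_pos (hpos x hx) r).le)
          set A := ∫ x in (0:ℝ)..L, H x ^ r with hAdef
          set B := ∫ x in (0:ℝ)..L, h x ^ r with hBdef
          have h6 : A ≤ B^(1/r) * A^(1/q) := le_trans hstep1 hHolder'
          have h7 : A = A^(1/r) * A^(1/q) := by
            rw [← Real.rpow_add hApos]
            rw [show 1/r + 1/q = 1 by
              rw [one_div, one_div]; exact hconj.inv_add_inv_eq_one]
            exact (Real.rpow_one A).symm
          have hAq : 0 < A^(1/q) := Real.rpow_pos_of_pos hApos _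
          have h8 : A^(1/r) ≤ B^(1/r) := by
            have h6' : A^(1/r) * A^(1/q) ≤ B^(1/r) * A^(1/q) := by
              calc A^(1/r) * A^(1/q) = A := h7.symm
                _ ≤ B^(1/r) * A^(1/q) := h6
            exact le_of_mul_le_mul_right h6' hAq
          have h9 : (A^(1/r))^r ≤ (B^(1/r))^r :=
            Real.rpow_le_rpow (Real.rpow_pos_of_pos hApos _).le h8 hr0.le
          rwa [← Real.rpow_mul hApos.le, ← Real.rpow_mul hBnn,
            one_div, inv_mul_cancel₀ hr0.ne', Real.rpow_one, Real.rpow_one] at h9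
      -- conversion to eLpNorm
      rw [eLpNorm_eq_lintegral_rpow_enorm_toReal hp0 hptop, eLpNorm_eq_lintegral_rpow_enorm_toReal hp0 hptop]
      apply ENNReal.rpow_le_rpow _ (by positivity)
      have lconv : ∀ f : ℝ → ℝ, ContinuousOn f (Icc 0 L) → (∀ x ∈ Icc (0:ℝ) L, 0 < f x) →
          (∫⁻ x, ‖f x‖ₑ ^ r ∂(volume.restrict (Ioo 0 L)))
            = ENNReal.ofReal (∫ x in Ioo (0:ℝ) L, f x ^ r) := by
        intro f hf hfp
        have h1 : (∫⁻ x, ‖f x‖ₑ ^ r ∂(volume.restrict (Ioo 0 L)))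
            = ∫⁻ x, ENNReal.ofReal (f x ^ r) ∂(volume.restrict (Ioo 0 L)) := by
          apply lintegral_congr_ae
          refine (ae_restrict_iff' measurableSet_Ioo).2 (ae_of_all _ fun x hx => ?_)
          have hfx := hfp x (Ioo_subset_Icc_self hx)
          dsimp only
          rw [← ofReal_norm, Real.norm_eq_abs, abs_of_pos hfx,
            ENNReal.ofReal_rpow_of_pos hfx]
        rw [h1, ← ofReal_integral_eq_lintegral_ofReal]
        · exact intIoo _ (contpow f r hf hfp)
        · exact (ae_restrict_iff' measurableSet_Ioo).2 (ae_of_all _ fun x hx =>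
            (Real.rpow_pos_of_pos (hfp x (Ioo_subset_Icc_self hx)) r).le)
      rw [lconv H contH Hpos, lconv h conth hpos]
      apply ENNReal.ofReal_le_ofReal
      rw [← intEq, ← intEq]
      exact core
  exact ⟨part1, part2, part3, part4⟩
end

section
/- Let ε ∈ (0,1), let H ∈ C¹([0,L]) satisfy H(x) ≥ √ε for all x ∈ [0,L], let σ ∈ C¹([0,∞)) and let Γ ∈ W₂¹(0,L) be nonnegative. Let Σ ∈ W₂²(0,L) be the solution of Σ − ε² ∂ₓ(H ∂ₓΣ) = σ(Γ) on (0,L) with ∂ₓΣ(0) = ∂ₓΣ(L) = 0. Then ‖√H ∂ₓΣ‖₂² + 2ε² ‖∂ₓ(H ∂ₓΣ)‖₂² ≤ ‖√H ∂ₓσ(Γ)‖₂², and moreover ‖Σ‖₁ ≤ ‖σ(Γ)‖₁ and ε² ‖H ∂ₓΣ‖_∞ ≤ 2 ‖σ(Γ)‖₁. -/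
open MeasureTheory Set

lemma psi_hasDerivAt (δ s : ℝ) (hδ : 0 < δ) :
    HasDerivAt (fun t => t / Real.sqrt (t ^ 2 + δ ^ 2))
      (δ ^ 2 / (s ^ 2 + δ ^ 2) / Real.sqrt (s ^ 2 + δ ^ 2)) s := by
  have hu : 0 < s ^ 2 + δ ^ 2 := by positivity
  have hsq : 0 < Real.sqrt (s ^ 2 + δ ^ 2) := Real.sqrt_pos.mpr hu
  have h1 : HasDerivAt (fun t : ℝ => t ^ 2 + δ ^ 2) (2 * s) s := by
    simpa using (hasDerivAt_pow 2 s).add_const (δ ^ 2)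
  have h2 : HasDerivAt (fun t => Real.sqrt (t ^ 2 + δ ^ 2))
      (2 * s / (2 * Real.sqrt (s ^ 2 + δ ^ 2))) s := h1.sqrt hu.ne'
  have h3 : HasDerivAt (fun t => t / Real.sqrt (t ^ 2 + δ ^ 2))
      ((1 * Real.sqrt (s ^ 2 + δ ^ 2) - s * (2 * s / (2 * Real.sqrt (s ^ 2 + δ ^ 2))))
        / Real.sqrt (s ^ 2 + δ ^ 2) ^ 2) s := (hasDerivAt_id s).div h2 hsq.ne'
  convert h3 using 1
  have h4 : Real.sqrt (s ^ 2 + δ ^ 2) ^ 2 = s ^ 2 + δ ^ 2 := Real.sq_sqrt hu.le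
  field_simp
  linear_combination (δ ^ 2 - (s ^ 2 + δ ^ 2)) * h4

lemma psi_abs_le_one (δ s : ℝ) (hδ : 0 < δ) : |s / Real.sqrt (s ^ 2 + δ ^ 2)| ≤ 1 := by
  have hu : 0 < s ^ 2 + δ ^ 2 := by positivity
  have hsq : 0 < Real.sqrt (s ^ 2 + δ ^ 2) := Real.sqrt_pos.mpr hu
  rw [abs_div, abs_of_pos hsq, div_le_one hsq]
  have : |s| = Real.sqrt (s ^ 2) := (Real.sqrt_sq_eq_abs s).symm
  rw [this]
  exact Real.sqrt_le_sqrt (by nlinarith)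

lemma psi_abs_bound (δ s : ℝ) (hδ : 0 < δ) :
    |s| ≤ s * (s / Real.sqrt (s ^ 2 + δ ^ 2)) + δ := by
  have hu : 0 < s ^ 2 + δ ^ 2 := by positivity
  have hsq : 0 < Real.sqrt (s ^ 2 + δ ^ 2) := Real.sqrt_pos.mpr hu
  have h1 : Real.sqrt (s ^ 2 + δ ^ 2) ≤ |s| + δ := by
    have := Real.sqrt_le_sqrt (show s ^ 2 + δ ^ 2 ≤ (|s| + δ) ^ 2 by
      nlinarith [abs_nonneg s, sq_abs s])
    rwa [Real.sqrt_sq (by positivity)] at this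
  have h2 : |s| ≤ Real.sqrt (s ^ 2 + δ ^ 2) := by
    rw [← Real.sqrt_sq_eq_abs]
    exact Real.sqrt_le_sqrt (by nlinarith)
  rw [mul_div_assoc', ← sq]
  rw [div_add' _ _ _ hsq.ne', le_div_iff₀ hsq]
  nlinarith [mul_le_mul_of_nonneg_left h1 (abs_nonneg s),
    mul_le_mul_of_nonneg_left h2 hδ.le, sq_abs s]

lemma psi_cont (δ : ℝ) (hδ : 0 < δ) :
    Continuous (fun s => δ ^ 2 / (s ^ 2 + δ ^ 2) / Real.sqrt (s ^ 2 + δ ^ 2)) := by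
  have hne : ∀ s : ℝ, s ^ 2 + δ ^ 2 ≠ 0 := fun s => by positivity
  have hne' : ∀ s : ℝ, Real.sqrt (s ^ 2 + δ ^ 2) ≠ 0 := fun s =>
    (Real.sqrt_pos.mpr (by positivity)).ne'
  exact (continuous_const.div (by continuity) hne).div
    (Real.continuous_sqrt.comp (by continuity)) hne'

lemma psi_cont' (δ : ℝ) (hδ : 0 < δ) :
    Continuous (fun s => s / Real.sqrt (s ^ 2 + δ ^ 2)) := by
  have hne' : ∀ s : ℝ, Real.sqrt (s ^ 2 + δ ^ 2) ≠ 0 := fun s =>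
    (Real.sqrt_pos.mpr (by positivity)).ne'
  exact continuous_id.div (Real.continuous_sqrt.comp (by continuity)) hne'
/-- Properties of the solution `S` of the degenerate elliptic problem
`S − ε²∂ₓ(H ∂ₓS) = σ(Γ)` with Neumann boundary conditions, where `H ≥ √ε`:
`‖√H ∂ₓS‖₂² + 2ε²‖∂ₓ(H∂ₓS)‖₂² ≤ ‖√H ∂ₓσ(Γ)‖₂²`, `‖S‖₁ ≤ ‖σ(Γ)‖₁` and
`ε²‖H ∂ₓS‖_∞ ≤ 2‖σ(Γ)‖₁`. -/
theorem sigma_problem_properties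
    (L ε : ℝ) (hL : 0 < L) (hε : ε ∈ Ioo (0:ℝ) 1)
    (H σ Γ S : ℝ → ℝ)
    -- `H ∈ C¹([0,L])` with `H ≥ √ε`
    (hHreg : ∀ x ∈ Icc (0:ℝ) L, DifferentiableAt ℝ H x)
    (hHreg' : ContinuousOn (deriv H) (Icc 0 L))
    (hHlb : ∀ x ∈ Icc (0:ℝ) L, Real.sqrt ε ≤ H x)
    -- `σ ∈ C¹([0,∞))`
    (hσreg : ∀ r ≥ (0:ℝ), DifferentiableAt ℝ σ r)
    (hσreg' : ContinuousOn (deriv σ) (Ici 0))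
    -- `Γ ∈ W₂¹(0,L)` nonnegative
    (hΓreg : ∀ x ∈ Icc (0:ℝ) L, DifferentiableAt ℝ Γ x)
    (hΓL2 : MemLp (deriv Γ) 2 (volume.restrict (Ioo 0 L)))
    (hΓnn : ∀ x ∈ Icc (0:ℝ) L, 0 ≤ Γ x)
    -- `S ∈ W₂²(0,L)` solves `S − ε²∂ₓ(H∂ₓS) = σ(Γ)` with Neumann boundary conditions
    (hSreg : ∀ x ∈ Icc (0:ℝ) L, DifferentiableAt ℝ S x ∧
      DifferentiableAt ℝ (fun y => H y * deriv S y) x)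
    (hSL2 : MemLp (deriv (fun y => H y * deriv S y)) 2 (volume.restrict (Ioo 0 L)))
    (hSeq : ∀ x ∈ Ioo (0:ℝ) L,
      S x - ε ^ 2 * deriv (fun y => H y * deriv S y) x = σ (Γ x))
    (hSbc : deriv S 0 = 0 ∧ deriv S L = 0) :
    ((∫ x in (0:ℝ)..L, H x * (deriv S x) ^ 2) +
        2 * ε ^ 2 * ∫ x in (0:ℝ)..L, (deriv (fun y => H y * deriv S y) x) ^ 2)
      ≤ (∫ x in (0:ℝ)..L, H x * (deriv (fun y => σ (Γ y)) x) ^ 2) ∧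
    (∫ x in (0:ℝ)..L, |S x|) ≤ (∫ x in (0:ℝ)..L, |σ (Γ x)|) ∧
    ε ^ 2 * sSup ((fun x => |H x * deriv S x|) '' Icc (0:ℝ) L) ≤
      2 * ∫ x in (0:ℝ)..L, |σ (Γ x)| := by
  obtain ⟨hε0, hε1⟩ := hε
  have hε2 : (0:ℝ) < ε ^ 2 := by positivity
  set F : ℝ → ℝ := fun y => H y * deriv S y with hFdef
  have hL0 : (0:ℝ) ≤ L := hL.le
  have hIcc : uIcc (0:ℝ) L = Icc 0 L := uIcc_of_le hL0
  have hHpos : ∀ x ∈ Icc (0:ℝ) L, 0 < H x := fun x hx =>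
    lt_of_lt_of_le (Real.sqrt_pos.mpr hε0) (hHlb x hx)
  have hF0 : F 0 = 0 := by simp [hFdef, hSbc.1]
  have hFL : F L = 0 := by simp [hFdef, hSbc.2]
  -- continuity facts
  have hHc : ContinuousOn H (Icc 0 L) := fun x hx => (hHreg x hx).continuousAt.continuousWithinAt
  have hSc : ContinuousOn S (Icc 0 L) := fun x hx => (hSreg x hx).1.continuousAt.continuousWithinAt
  have hFc : ContinuousOn F (Icc 0 L) := fun x hx => (hSreg x hx).2.continuousAt.continuousWithinAt
  have hS'c : ContinuousOn (deriv S) (Icc 0 L) := by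
    have h1 : ContinuousOn (fun x => F x / H x) (Icc 0 L) :=
      hFc.div hHc (fun x hx => (hHpos x hx).ne')
    apply h1.congr
    intro x hx
    show deriv S x = F x / H x
    rw [hFdef]
    exact (mul_div_cancel_left₀ _ (hHpos x hx).ne').symm
  have hσΓd : ∀ x ∈ Icc (0:ℝ) L, HasDerivAt (fun y => σ (Γ y)) (deriv σ (Γ x) * deriv Γ x) x :=
    fun x hx => ((hσreg _ (hΓnn x hx)).hasDerivAt).comp x (hΓreg x hx).hasDerivAt
  have hσΓ'eq : ∀ x ∈ Icc (0:ℝ) L, deriv (fun y => σ (Γ y)) x = deriv σ (Γ x) * deriv Γ x :=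
    fun x hx => (hσΓd x hx).deriv
  have hσΓc : ContinuousOn (fun x => σ (Γ x)) (Icc 0 L) := fun x hx =>
    ((hσreg _ (hΓnn x hx)).continuousAt.comp (hΓreg x hx).continuousAt).continuousWithinAt
  have hσ'Γc : ContinuousOn (fun x => deriv σ (Γ x)) (Icc 0 L) :=
    hσreg'.comp (fun x hx => (hΓreg x hx).continuousAt.continuousWithinAt)
      (fun x hx => hΓnn x hx)
  -- integrability facts
  haveI : IsFiniteMeasure (volume.restrict (Ioo (0:ℝ) L)) := ⟨by
    rw [Measure.restrict_apply_univ]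
    simp [Real.volume_Ioo]⟩
  have transfer : ∀ f : ℝ → ℝ, Integrable f (volume.restrict (Ioo 0 L)) →
      IntervalIntegrable f volume 0 L := by
    intro f hf
    rw [intervalIntegrable_iff_integrableOn_Ioc_of_le hL0]
    rwa [IntegrableOn, ← Measure.restrict_congr_set Ioo_ae_eq_Ioc]
  have hF'int : IntervalIntegrable (deriv F) volume 0 L := transfer _ (hSL2.integrable one_le_two)
  have hF'sq : IntervalIntegrable (fun x => (deriv F x) ^ 2) volume 0 L :=
    transfer _ hSL2.integrable_sq
  have hΓ'int : IntervalIntegrable (deriv Γ) volume 0 L := transfer _ (hΓL2.integrable one_le_two)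
  have hΓ'sq : IntervalIntegrable (fun x => (deriv Γ x) ^ 2) volume 0 L :=
    transfer _ hΓL2.integrable_sq
  have contInt : ∀ f : ℝ → ℝ, ContinuousOn f (Icc 0 L) → IntervalIntegrable f volume 0 L :=
    fun f hf => ContinuousOn.intervalIntegrable (by rwa [hIcc])
  have prodInt : ∀ g f : ℝ → ℝ, ContinuousOn g (Icc 0 L) → IntervalIntegrable f volume 0 L →
      IntervalIntegrable (fun x => g x * f x) volume 0 L := by
    intro g f hg hf
    rw [intervalIntegrable_iff_integrableOn_Ioc_of_le hL0] at hf ⊢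
    exact IntegrableOn.continuousOn_mul_of_subset hg hf isCompact_Icc measurableSet_Ioc
      Ioc_subset_Icc_self
  have hFd : ∀ x ∈ Icc (0:ℝ) L, HasDerivAt F (deriv F x) x := fun x hx => (hSreg x hx).2.hasDerivAt
  have hSd : ∀ x ∈ Icc (0:ℝ) L, HasDerivAt S (deriv S x) x := fun x hx => (hSreg x hx).1.hasDerivAt
  -- integration by parts against F, with vanishing boundary terms
  have parts : ∀ v v' : ℝ → ℝ, (∀ x ∈ Icc (0:ℝ) L, HasDerivAt v (v' x) x) →
      ContinuousOn v (Icc 0 L) → IntervalIntegrable v' volume 0 L →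
      IntervalIntegrable (fun x => F x * v' x) volume 0 L →
      (∫ x in (0:ℝ)..L, deriv F x * v x) = - ∫ x in (0:ℝ)..L, F x * v' x := by
    intro v v' hv hvc hv' hFv'
    have hsum := intervalIntegral.integral_deriv_mul_eq_sub
      (fun x hx => hFd x (hIcc ▸ hx)) (fun x hx => hv x (hIcc ▸ hx)) hF'int hv'
    rw [hF0, hFL, zero_mul, zero_mul, sub_zero] at hsum
    have hF'v : IntervalIntegrable (fun x => deriv F x * v x) volume 0 L := by
      simpa [mul_comm] using prodInt v (deriv F) hvc hF'int
    rw [intervalIntegral.integral_add hF'v hFv'] at hsum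
    linarith
  -- a.e. congruence from the interior
  have aeIoc : ∀ c ∈ Icc (0:ℝ) L, ∀ f g : ℝ → ℝ, (∀ t ∈ Ioo (0:ℝ) L, f t = g t) →
      (∫ t in (0:ℝ)..c, f t) = ∫ t in (0:ℝ)..c, g t := by
    intro c hc f g h
    apply intervalIntegral.integral_congr_ae
    have hae : ∀ᵐ t : ℝ, t ≠ c := by
      rw [ae_iff]
      convert Real.volume_singleton (a := c) using 2
      ext t; simp
    filter_upwards [hae] with t ht hmem
    rw [uIoc_of_le hc.1] at hmem
    exact h t ⟨hmem.1, lt_of_le_of_ne (hmem.2.trans hc.2) (by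
      intro hEq
      exact ht (by
        have : t ≤ c := hmem.2
        have : c ≤ t := hEq ▸ hc.2
        linarith [hmem.2, hc.2]))⟩
  -- ### Part 1
  set A := ∫ x in (0:ℝ)..L, H x * (deriv S x) ^ 2 with hAdef
  set B := ∫ x in (0:ℝ)..L, (deriv F x) ^ 2 with hBdef
  have hIBP1 : (∫ x in (0:ℝ)..L, deriv F x * S x) = -A := by
    rw [parts S (deriv S) hSd hSc (contInt _ hS'c) (contInt _ (hFc.mul hS'c))]
    rw [hAdef, neg_inj]
    apply intervalIntegral.integral_congr
    intro x _
    show F x * deriv S x = H x * (deriv S x) ^ 2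
    rw [hFdef]; ring
  have hCint : IntervalIntegrable (fun x => F x * (deriv σ (Γ x) * deriv Γ x)) volume 0 L := by
    simpa [mul_assoc] using prodInt (fun x => F x * deriv σ (Γ x)) (deriv Γ)
      (hFc.mul hσ'Γc) hΓ'int
  set C := ∫ x in (0:ℝ)..L, F x * (deriv σ (Γ x) * deriv Γ x) with hCdef
  have hIBP2 : (∫ x in (0:ℝ)..L, deriv F x * σ (Γ x)) = -C :=
    parts (fun y => σ (Γ y)) (fun x => deriv σ (Γ x) * deriv Γ x) hσΓd hσΓc
      (prodInt (fun x => deriv σ (Γ x)) (deriv Γ) hσ'Γc hΓ'int) hCint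
  have hF'S : IntervalIntegrable (fun x => deriv F x * S x) volume 0 L := by
    simpa [mul_comm] using prodInt S (deriv F) hSc hF'int
  have heq1 : (∫ x in (0:ℝ)..L, deriv F x * S x) - ε ^ 2 * B
      = ∫ x in (0:ℝ)..L, deriv F x * σ (Γ x) := by
    have h1 : ∀ t ∈ Ioo (0:ℝ) L,
        deriv F t * S t - ε ^ 2 * (deriv F t) ^ 2 = deriv F t * σ (Γ t) := by
      intro t ht
      have := hSeq t ht
      rw [← this]; ring
    have h2 := aeIoc L ⟨hL0, le_refl L⟩ _ _ h1
    rw [intervalIntegral.integral_sub hF'S (hF'sq.const_mul (ε ^ 2)),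
      intervalIntegral.integral_const_mul] at h2
    exact h2
  have hABC : A + ε ^ 2 * B = C := by
    rw [hIBP1, hIBP2] at heq1
    linarith
  set D' := ∫ x in (0:ℝ)..L, H x * (deriv σ (Γ x) * deriv Γ x) ^ 2 with hD'def
  have hC_le : C ≤ 1 / 2 * D' + 1 / 2 * A := by
    have hpt : ∀ x ∈ Icc (0:ℝ) L, F x * (deriv σ (Γ x) * deriv Γ x) ≤
        (1 / 2 * (H x * (deriv σ (Γ x)) ^ 2)) * (deriv Γ x) ^ 2
          + 1 / 2 * (H x * (deriv S x) ^ 2) := by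
      intro x hx
      show H x * deriv S x * (deriv σ (Γ x) * deriv Γ x) ≤ _
      nlinarith [mul_nonneg (hHpos x hx).le
        (sq_nonneg (deriv σ (Γ x) * deriv Γ x - deriv S x))]
    have hRint1 : IntervalIntegrable
        (fun x => (1 / 2 * (H x * (deriv σ (Γ x)) ^ 2)) * (deriv Γ x) ^ 2) volume 0 L :=
      prodInt _ _ ((continuousOn_const.mul (hHc.mul (hσ'Γc.pow 2)))) hΓ'sq
    have hRint2 : IntervalIntegrable
        (fun x => 1 / 2 * (H x * (deriv S x) ^ 2)) volume 0 L :=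
      contInt _ (continuousOn_const.mul (hHc.mul (hS'c.pow 2)))
    have hmono := intervalIntegral.integral_mono_on hL0 hCint (hRint1.add hRint2) hpt
    rw [intervalIntegral.integral_add hRint1 hRint2] at hmono
    have e1 : (∫ x in (0:ℝ)..L, (1 / 2 * (H x * (deriv σ (Γ x)) ^ 2)) * (deriv Γ x) ^ 2)
        = 1 / 2 * D' := by
      rw [hD'def, ← intervalIntegral.integral_const_mul]
      apply intervalIntegral.integral_congr
      intro x _; ring
    have e2 : (∫ x in (0:ℝ)..L, 1 / 2 * (H x * (deriv S x) ^ 2)) = 1 / 2 * A := by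
      rw [hAdef, ← intervalIntegral.integral_const_mul]
    rw [e1, e2] at hmono
    exact hmono
  have hDD' : (∫ x in (0:ℝ)..L, H x * (deriv (fun y => σ (Γ y)) x) ^ 2) = D' := by
    rw [hD'def]
    apply intervalIntegral.integral_congr
    intro x hx
    show H x * deriv (fun y => σ (Γ y)) x ^ 2 = H x * (deriv σ (Γ x) * deriv Γ x) ^ 2
    rw [hσΓ'eq x (hIcc ▸ hx)]
  have part1 : A + 2 * ε ^ 2 * B ≤ ∫ x in (0:ℝ)..L, H x * (deriv (fun y => σ (Γ y)) x) ^ 2 := by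
    rw [hDD']
    linarith
  -- ### Part 2
  have habsS : IntervalIntegrable (fun x => |S x|) volume 0 L := contInt _ hSc.abs
  have habsσΓ : IntervalIntegrable (fun x => |σ (Γ x)|) volume 0 L := contInt _ hσΓc.abs
  have part2 : (∫ x in (0:ℝ)..L, |S x|) ≤ ∫ x in (0:ℝ)..L, |σ (Γ x)| := by
    apply le_of_forall_pos_le_add
    intro η hη
    set δ := η / L with hδdef
    have hδ : 0 < δ := div_pos hη hL
    set ψ : ℝ → ℝ := fun s => s / Real.sqrt (s ^ 2 + δ ^ 2) with hψdef
    set ψ' : ℝ → ℝ := fun s => δ ^ 2 / (s ^ 2 + δ ^ 2) / Real.sqrt (s ^ 2 + δ ^ 2) with hψ'def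
    have hgd : ∀ x ∈ Icc (0:ℝ) L, HasDerivAt (fun y => ψ (S y)) (ψ' (S x) * deriv S x) x :=
      fun x hx => (psi_hasDerivAt δ (S x) hδ).comp x (hSd x hx)
    have hgc : ContinuousOn (fun y => ψ (S y)) (Icc 0 L) :=
      (psi_cont' δ hδ).comp_continuousOn hSc
    have hg'c : ContinuousOn (fun x => ψ' (S x) * deriv S x) (Icc 0 L) :=
      ((psi_cont δ hδ).comp_continuousOn hSc).mul hS'c
    have hIBP3 : (∫ x in (0:ℝ)..L, deriv F x * ψ (S x))
        = - ∫ x in (0:ℝ)..L, F x * (ψ' (S x) * deriv S x) :=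
      parts _ _ hgd hgc (contInt _ hg'c) (contInt _ (hFc.mul hg'c))
    have hnn : 0 ≤ ∫ x in (0:ℝ)..L, F x * (ψ' (S x) * deriv S x) := by
      apply intervalIntegral.integral_nonneg hL0
      intro x hx
      have h1 : 0 ≤ ψ' (S x) := by rw [hψ'def]; positivity
      show 0 ≤ H x * deriv S x * (ψ' (S x) * deriv S x)
      nlinarith [mul_nonneg (mul_nonneg (hHpos x hx).le h1) (sq_nonneg (deriv S x))]
    have h3 : ε ^ 2 * (∫ x in (0:ℝ)..L, deriv F x * ψ (S x)) ≤ 0 := by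
      rw [hIBP3]
      nlinarith [hnn, sq_nonneg ε]
    have heq2 : (∫ x in (0:ℝ)..L, S x * ψ (S x))
        = (∫ x in (0:ℝ)..L, σ (Γ x) * ψ (S x))
          + ε ^ 2 * ∫ x in (0:ℝ)..L, deriv F x * ψ (S x) := by
      have h1 : ∀ t ∈ Ioo (0:ℝ) L,
          S t * ψ (S t) = σ (Γ t) * ψ (S t) + ε ^ 2 * (deriv F t * ψ (S t)) := by
        intro t ht
        have h := hSeq t ht
        rw [← h]; ring
      have h2 := aeIoc L ⟨hL0, le_refl L⟩ _ _ h1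
      have hi1 : IntervalIntegrable (fun x => σ (Γ x) * ψ (S x)) volume 0 L :=
        contInt _ (hσΓc.mul hgc)
      have hi2 : IntervalIntegrable (fun x => ε ^ 2 * (deriv F x * ψ (S x))) volume 0 L := by
        apply IntervalIntegrable.const_mul
        simpa [mul_comm] using prodInt (fun y => ψ (S y)) (deriv F) hgc hF'int
      rw [intervalIntegral.integral_add hi1 hi2, intervalIntegral.integral_const_mul] at h2
      exact h2
    have h4 : (∫ x in (0:ℝ)..L, σ (Γ x) * ψ (S x)) ≤ ∫ x in (0:ℝ)..L, |σ (Γ x)| := by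
      apply intervalIntegral.integral_mono_on hL0 (contInt _ (hσΓc.mul hgc)) habsσΓ
      intro x _
      calc σ (Γ x) * ψ (S x) ≤ |σ (Γ x) * ψ (S x)| := le_abs_self _
        _ = |σ (Γ x)| * |ψ (S x)| := abs_mul _ _
        _ ≤ |σ (Γ x)| * 1 :=
          mul_le_mul_of_nonneg_left (psi_abs_le_one δ (S x) hδ) (abs_nonneg _)
        _ = |σ (Γ x)| := mul_one _
    have h5 : (∫ x in (0:ℝ)..L, |S x|) ≤ (∫ x in (0:ℝ)..L, S x * ψ (S x)) + η := by
      have hpt : ∀ x ∈ Icc (0:ℝ) L, |S x| ≤ S x * ψ (S x) + δ :=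
        fun x _ => psi_abs_bound δ (S x) hδ
      have hi : IntervalIntegrable (fun x => S x * ψ (S x) + δ) volume 0 L :=
        (contInt _ (hSc.mul hgc)).add intervalIntegrable_const
      have := intervalIntegral.integral_mono_on hL0 habsS hi hpt
      rw [intervalIntegral.integral_add (contInt (fun x => S x * ψ (S x)) (hSc.mul hgc))
          intervalIntegrable_const,
        intervalIntegral.integral_const, smul_eq_mul, sub_zero, hδdef,
        mul_div_cancel₀ _ hL.ne'] at this
      exact this
    linarith
  -- ### Part 3
  have hσΓnn : 0 ≤ ∫ x in (0:ℝ)..L, |σ (Γ x)| :=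
    intervalIntegral.integral_nonneg hL0 (fun x _ => abs_nonneg _)
  have key : ∀ x ∈ Icc (0:ℝ) L, |H x * deriv S x| ≤ (2 * ∫ t in (0:ℝ)..L, |σ (Γ t)|) / ε ^ 2 := by
    intro x hx
    have hx0 : (0:ℝ) ≤ x := hx.1
    have hIccx : uIcc (0:ℝ) x = Icc 0 x := uIcc_of_le hx0
    have hsub : Icc (0:ℝ) x ⊆ Icc 0 L := Icc_subset_Icc le_rfl hx.2
    have hFTC : (∫ t in (0:ℝ)..x, deriv F t) = F x - F 0 :=
      intervalIntegral.integral_eq_sub_of_hasDerivAt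
        (fun t ht => hFd t (hsub (hIccx ▸ ht)))
        (hF'int.mono_set (by rw [hIcc, hIccx]; exact hsub))
    have heq3 : (∫ t in (0:ℝ)..x, (S t - σ (Γ t))) = ε ^ 2 * ∫ t in (0:ℝ)..x, deriv F t := by
      rw [← intervalIntegral.integral_const_mul]
      apply aeIoc x hx
      intro t ht
      have h := hSeq t ht
      rw [← h]; ring
    have hbound : |∫ t in (0:ℝ)..x, (S t - σ (Γ t))| ≤ 2 * ∫ t in (0:ℝ)..L, |σ (Γ t)| := by
      have hb1 : |∫ t in (0:ℝ)..x, (S t - σ (Γ t))| ≤ ∫ t in (0:ℝ)..x, |S t - σ (Γ t)| :=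
        intervalIntegral.abs_integral_le_integral_abs hx0
      have habs_int : IntervalIntegrable (fun t => |S t - σ (Γ t)|) volume 0 L :=
        contInt _ (hSc.sub hσΓc).abs
      have hb2 : (∫ t in (0:ℝ)..x, |S t - σ (Γ t)|) ≤ ∫ t in (0:ℝ)..L, |S t - σ (Γ t)| :=
        intervalIntegral.integral_mono_interval le_rfl hx0 hx.2
          (Filter.Eventually.of_forall (fun t => abs_nonneg _)) habs_int
      have hb3 : (∫ t in (0:ℝ)..L, |S t - σ (Γ t)|)
          ≤ ∫ t in (0:ℝ)..L, (|S t| + |σ (Γ t)|) := by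
        apply intervalIntegral.integral_mono_on hL0 habs_int (habsS.add habsσΓ)
        intro t _
        exact abs_sub _ _
      have hb4 : (∫ t in (0:ℝ)..L, (|S t| + |σ (Γ t)|))
          = (∫ t in (0:ℝ)..L, |S t|) + ∫ t in (0:ℝ)..L, |σ (Γ t)| :=
        intervalIntegral.integral_add habsS habsσΓ
      linarith [part2]
    have hFx : ε ^ 2 * |H x * deriv S x| ≤ 2 * ∫ t in (0:ℝ)..L, |σ (Γ t)| := by
      have : |H x * deriv S x| = |F x| := rfl
      rw [this]
      have h1 : ε ^ 2 * F x = ∫ t in (0:ℝ)..x, (S t - σ (Γ t)) := by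
        rw [heq3, hFTC, hF0, sub_zero]
      have h2 : ε ^ 2 * |F x| = |ε ^ 2 * F x| := by
        rw [abs_mul (ε ^ 2) (F x), abs_of_pos hε2]
      rw [h2, h1]
      exact hbound
    rw [le_div_iff₀ hε2]
    linarith [hFx]
  have part3 : ε ^ 2 * sSup ((fun x => |H x * deriv S x|) '' Icc (0:ℝ) L)
      ≤ 2 * ∫ x in (0:ℝ)..L, |σ (Γ x)| := by
    have hsup : sSup ((fun x => |H x * deriv S x|) '' Icc (0:ℝ) L)
        ≤ (2 * ∫ t in (0:ℝ)..L, |σ (Γ t)|) / ε ^ 2 := by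
      apply Real.sSup_le
      · rintro y ⟨x, hx, rfl⟩
        exact key x hx
      · exact div_nonneg (by linarith) hε2.le
    calc ε ^ 2 * sSup ((fun x => |H x * deriv S x|) '' Icc (0:ℝ) L)
        ≤ ε ^ 2 * ((2 * ∫ t in (0:ℝ)..L, |σ (Γ t)|) / ε ^ 2) :=
          mul_le_mul_of_nonneg_left hsup hε2.le
      _ = 2 * ∫ t in (0:ℝ)..L, |σ (Γ t)| := by field_simp
  exact ⟨part1, part2, part3⟩
end

section
/- Let ε > 0, let Γ ∈ C([0,L]) with Γ(x) ≥ ε for all x ∈ [0,L], and let B ∈ W₂²(0,L) be the solution of B − ε² ∂ₓ²B = Γ on (0,L) with ∂ₓB(0) = ∂ₓB(L) = 0 (so B ≥ ε > 0). Then the entropy is decreased by the resolvent: ∫₀ᴸ ( B(x) ln B(x) − B(x) ) dx ≤ ∫₀ᴸ ( Γ(x) ln Γ(x) − Γ(x) ) dx. -/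
open MeasureTheory Set Topology

private lemma entropy_cvx {b g : ℝ} (hb : 0 < b) (hg : 0 < g) :
    b * Real.log b - b ≤ g * Real.log g - g + Real.log b * (b - g) := by
  have h1 : Real.log (b / g) ≤ b / g - 1 := Real.log_le_sub_one_of_pos (by positivity)
  rw [Real.log_div hb.ne' hg.ne'] at h1
  have h2 : g * (Real.log b - Real.log g) ≤ g * (b / g - 1) :=
    mul_le_mul_of_nonneg_left h1 hg.le
  have h3 : g * (b / g - 1) = b - g := by field_simp
  nlinarith [h2, h3]

/-- The Neumann resolvent decreases the entropy:
if `Γ ∈ C([0,L])` with `Γ ≥ ε > 0` and `B - ε²∂ₓ²B = Γ` on `(0,L)` with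
`∂ₓB(0) = ∂ₓB(L) = 0` (so `B ≥ ε > 0`), then
`∫₀ᴸ (B ln B − B) ≤ ∫₀ᴸ (Γ ln Γ − Γ)`. -/
theorem resolvent_decreases_entropy
    (L ε : ℝ) (hL : 0 < L) (hε : 0 < ε)
    (Γ B : ℝ → ℝ)
    (hΓcont : ContinuousOn Γ (Icc 0 L))
    (hΓlb : ∀ x ∈ Icc (0:ℝ) L, ε ≤ Γ x)
    (hBreg : ∀ x ∈ Icc (0:ℝ) L, DifferentiableAt ℝ B x ∧ DifferentiableAt ℝ (deriv B) x)
    (hBcont : ContinuousOn (deriv (deriv B)) (Icc 0 L))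
    (hBeq : ∀ x ∈ Ioo (0:ℝ) L, B x - ε ^ 2 * deriv (deriv B) x = Γ x)
    (hBbc : deriv B 0 = 0 ∧ deriv B L = 0) :
    (∫ x in (0:ℝ)..L, (B x * Real.log (B x) - B x)) ≤
      ∫ x in (0:ℝ)..L, (Γ x * Real.log (Γ x) - Γ x) := by
  have hBc : ContinuousOn B (Icc 0 L) := fun x hx =>
    ((hBreg x hx).1.continuousAt).continuousWithinAt
  have hB'c : ContinuousOn (deriv B) (Icc 0 L) := fun x hx =>
    ((hBreg x hx).2.continuousAt).continuousWithinAt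
  -- the equation extends to the closed interval by continuity
  have heq : ∀ x ∈ Icc (0:ℝ) L, B x - ε ^ 2 * deriv (deriv B) x = Γ x := by
    intro x hx
    have hfc : ContinuousOn (fun y => B y - ε ^ 2 * deriv (deriv B) y - Γ y) (Icc 0 L) :=
      (hBc.sub (continuousOn_const.mul hBcont)).sub hΓcont
    have hx' : x ∈ closure (Ioo (0:ℝ) L) := by
      rw [closure_Ioo hL.ne]; exact hx
    have hne : (𝓝[Ioo (0:ℝ) L] x).NeBot := mem_closure_iff_nhdsWithin_neBot.mp hx'
    have h1 : Filter.Tendsto (fun y => B y - ε ^ 2 * deriv (deriv B) y - Γ y)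
        (𝓝[Ioo (0:ℝ) L] x) (𝓝 (B x - ε ^ 2 * deriv (deriv B) x - Γ x)) :=
      (hfc x hx).mono Ioo_subset_Icc_self
    have h2 : Filter.Tendsto (fun y => B y - ε ^ 2 * deriv (deriv B) y - Γ y)
        (𝓝[Ioo (0:ℝ) L] x) (𝓝 0) := by
      refine Filter.Tendsto.congr' ?_ tendsto_const_nhds
      filter_upwards [self_mem_nhdsWithin] with y hy
      have := hBeq y hy; linarith
    have := tendsto_nhds_unique h1 h2
    linarith
  -- maximum principle: `B ≥ ε` on `[0, L]`
  have hBlb : ∀ x ∈ Icc (0:ℝ) L, ε ≤ B x := by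
    obtain ⟨x₀, hx₀, hmin⟩ :=
      isCompact_Icc.exists_isMinOn (nonempty_Icc.mpr hL.le) hBc
    have hd0 : deriv B x₀ = 0 := by
      rcases eq_or_ne x₀ 0 with h0 | h0
      · rw [h0]; exact hBbc.1
      rcases eq_or_ne x₀ L with hL' | hL'
      · rw [hL']; exact hBbc.2
      · have hmem : x₀ ∈ Ioo (0:ℝ) L :=
          ⟨hx₀.1.lt_of_ne (Ne.symm h0), hx₀.2.lt_of_ne hL'⟩
        exact (hmin.isLocalMin (Icc_mem_nhds hmem.1 hmem.2)).deriv_eq_zero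
    have hd2 : 0 ≤ deriv (deriv B) x₀ := by
      by_contra hneg
      push_neg at hneg
      have h1 : (deriv (deriv B)) ⁻¹' (Iio 0) ∈ 𝓝[Icc (0:ℝ) L] x₀ :=
        (hBcont x₀ hx₀) (Iio_mem_nhds hneg)
      rw [Metric.mem_nhdsWithin_iff] at h1
      obtain ⟨δ, hδ, hball⟩ := h1
      rcases lt_or_eq_of_le hx₀.2 with hlt | heqL
      · -- right-side argument
        obtain ⟨d, hd0', hd1, hd2'⟩ : ∃ d : ℝ, 0 < d ∧ d < δ ∧ x₀ + d ≤ L := by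
          refine ⟨min (δ / 2) (L - x₀), lt_min (by linarith) (by linarith), ?_, ?_⟩
          · calc min (δ / 2) (L - x₀) ≤ δ / 2 := min_le_left _ _
              _ < δ := by linarith
          · have := min_le_right (δ / 2) (L - x₀); linarith
        have hsub : Icc x₀ (x₀ + d) ⊆ Icc (0:ℝ) L := fun y hy =>
          ⟨by linarith [hx₀.1, hy.1], by linarith [hy.2]⟩
        have hneg' : ∀ y ∈ Icc x₀ (x₀ + d), deriv (deriv B) y < 0 := by
          intro y hy
          refine hball ⟨?_, hsub hy⟩
          rw [Metric.mem_ball, Real.dist_eq, abs_lt]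
          exact ⟨by linarith [hy.1], by linarith [hy.2]⟩
        have hanti : StrictAntiOn (deriv B) (Icc x₀ (x₀ + d)) :=
          strictAntiOn_of_deriv_neg (convex_Icc _ _) (hB'c.mono hsub)
            (fun y hy => by
              rw [interior_Icc] at hy
              exact hneg' y (Ioo_subset_Icc_self hy))
        have hBanti : StrictAntiOn B (Icc x₀ (x₀ + d)) :=
          strictAntiOn_of_deriv_neg (convex_Icc _ _) (hBc.mono hsub)
            (fun y hy => by
              rw [interior_Icc] at hy
              have := hanti (left_mem_Icc.mpr (by linarith)) (Ioo_subset_Icc_self hy) hy.1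
              rw [hd0] at this
              exact this)
        have hzz : B (x₀ + d) < B x₀ :=
          hBanti (left_mem_Icc.mpr (by linarith)) (right_mem_Icc.mpr (by linarith))
            (by linarith)
        exact absurd (hmin (hsub (right_mem_Icc.mpr (by linarith)))) (by simpa using hzz.not_ge)
      · -- left-side argument (`x₀ = L`)
        obtain ⟨d, hd0', hd1, hd2'⟩ : ∃ d : ℝ, 0 < d ∧ d < δ ∧ 0 ≤ x₀ - d := by
          refine ⟨min (δ / 2) L, lt_min (by linarith) hL, ?_, ?_⟩
          · calc min (δ / 2) L ≤ δ / 2 := min_le_left _ _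
              _ < δ := by linarith
          · have := min_le_right (δ / 2) L; linarith
        have hsub : Icc (x₀ - d) x₀ ⊆ Icc (0:ℝ) L := fun y hy =>
          ⟨by linarith [hy.1], by linarith [hy.2, hx₀.2]⟩
        have hneg' : ∀ y ∈ Icc (x₀ - d) x₀, deriv (deriv B) y < 0 := by
          intro y hy
          refine hball ⟨?_, hsub hy⟩
          rw [Metric.mem_ball, Real.dist_eq, abs_lt]
          exact ⟨by linarith [hy.1], by linarith [hy.2]⟩
        have hanti : StrictAntiOn (deriv B) (Icc (x₀ - d) x₀) :=
          strictAntiOn_of_deriv_neg (convex_Icc _ _) (hB'c.mono hsub)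
            (fun y hy => by
              rw [interior_Icc] at hy
              exact hneg' y (Ioo_subset_Icc_self hy))
        have hBmono : StrictMonoOn B (Icc (x₀ - d) x₀) :=
          strictMonoOn_of_deriv_pos (convex_Icc _ _) (hBc.mono hsub)
            (fun y hy => by
              rw [interior_Icc] at hy
              have := hanti (Ioo_subset_Icc_self hy)
                (right_mem_Icc.mpr (by linarith)) hy.2
              rw [hd0] at this
              linarith)
        have hzz : B (x₀ - d) < B x₀ :=
          hBmono (left_mem_Icc.mpr (by linarith)) (right_mem_Icc.mpr (by linarith))
            (by linarith)
        exact absurd (hmin (hsub (left_mem_Icc.mpr (by linarith)))) (by simpa using hzz.not_ge)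
    have := heq x₀ hx₀
    intro x hx
    have h1 : ε ≤ B x₀ := by
      have h2 := hΓlb x₀ hx₀
      nlinarith [sq_nonneg ε]
    exact le_trans h1 (hmin hx)
  have hBpos : ∀ x ∈ Icc (0:ℝ) L, 0 < B x := fun x hx => lt_of_lt_of_le hε (hBlb x hx)
  have huIcc : uIcc (0:ℝ) L = Icc 0 L := uIcc_of_le hL.le
  -- continuity of all integrands
  have hlogBc : ContinuousOn (fun x => Real.log (B x)) (Icc 0 L) :=
    Real.continuousOn_log.comp hBc (fun x hx => (hBpos x hx).ne')
  have hφBc : ContinuousOn (fun x => B x * Real.log (B x) - B x) (Icc 0 L) :=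
    (hBc.mul hlogBc).sub hBc
  have hΓpos : ∀ x ∈ Icc (0:ℝ) L, 0 < Γ x := fun x hx => lt_of_lt_of_le hε (hΓlb x hx)
  have hφΓc : ContinuousOn (fun x => Γ x * Real.log (Γ x) - Γ x) (Icc 0 L) :=
    (hΓcont.mul (Real.continuousOn_log.comp hΓcont (fun x hx => (hΓpos x hx).ne'))).sub hΓcont
  have hmixc : ContinuousOn (fun x => Real.log (B x) * deriv (deriv B) x) (Icc 0 L) :=
    hlogBc.mul hBcont
  -- integration by parts
  have hu : ∀ x ∈ uIcc (0:ℝ) L, HasDerivAt (fun y => Real.log (B y)) (deriv B x / B x) x := by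
    intro x hx
    rw [huIcc] at hx
    have := (Real.hasDerivAt_log (hBpos x hx).ne').comp x (hBreg x hx).1.hasDerivAt
    rw [div_eq_mul_inv, mul_comm]; exact this
  have hv : ∀ x ∈ uIcc (0:ℝ) L, HasDerivAt (deriv B) (deriv (deriv B) x) x := by
    intro x hx
    rw [huIcc] at hx
    exact (hBreg x hx).2.hasDerivAt
  have hu'int : IntervalIntegrable (fun x => deriv B x / B x) volume 0 L := by
    apply ContinuousOn.intervalIntegrable
    rw [huIcc]
    exact hB'c.div hBc (fun x hx => (hBpos x hx).ne')
  have hv'int : IntervalIntegrable (fun x => deriv (deriv B) x) volume 0 L := by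
    apply ContinuousOn.intervalIntegrable
    rw [huIcc]; exact hBcont
  have hibp := intervalIntegral.integral_mul_deriv_eq_deriv_mul hu hv hu'int hv'int
  have hbquad : 0 ≤ ∫ x in (0:ℝ)..L, (deriv B x / B x) * deriv B x := by
    apply intervalIntegral.integral_nonneg hL.le
    intro x hx
    have : (deriv B x / B x) * deriv B x = (deriv B x) ^ 2 / B x := by ring
    rw [this]
    exact div_nonneg (sq_nonneg _) (hBpos x hx).le
  have hmixnonpos : (∫ x in (0:ℝ)..L, Real.log (B x) * deriv (deriv B) x) ≤ 0 := by
    rw [hibp, hBbc.1, hBbc.2]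
    simp only [mul_zero, sub_zero, zero_sub]
    linarith
  -- pointwise convexity inequality
  have hpt : ∀ x ∈ Icc (0:ℝ) L,
      B x * Real.log (B x) - B x ≤
        (Γ x * Real.log (Γ x) - Γ x) + ε ^ 2 * (Real.log (B x) * deriv (deriv B) x) := by
    intro x hx
    have h1 := entropy_cvx (hBpos x hx) (hΓpos x hx)
    have h2 := heq x hx
    have h3 : B x - Γ x = ε ^ 2 * deriv (deriv B) x := by linarith
    calc B x * Real.log (B x) - B x
        ≤ Γ x * Real.log (Γ x) - Γ x + Real.log (B x) * (B x - Γ x) := h1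
      _ = (Γ x * Real.log (Γ x) - Γ x) + ε ^ 2 * (Real.log (B x) * deriv (deriv B) x) := by
          rw [h3]; ring
  -- put everything together
  have hint1 : IntervalIntegrable (fun x => B x * Real.log (B x) - B x) volume 0 L := by
    apply ContinuousOn.intervalIntegrable; rw [huIcc]; exact hφBc
  have hintΓ : IntervalIntegrable (fun x => Γ x * Real.log (Γ x) - Γ x) volume 0 L := by
    apply ContinuousOn.intervalIntegrable; rw [huIcc]; exact hφΓc
  have hintmix : IntervalIntegrable
      (fun x => ε ^ 2 * (Real.log (B x) * deriv (deriv B) x)) volume 0 L := by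
    apply ContinuousOn.intervalIntegrable; rw [huIcc]
    exact continuousOn_const.mul hmixc
  have hmono := intervalIntegral.integral_mono_on hL.le hint1 (hintΓ.add hintmix) hpt
  rw [intervalIntegral.integral_add hintΓ hintmix, intervalIntegral.integral_const_mul] at hmono
  nlinarith [sq_nonneg ε, mul_nonneg (sq_nonneg ε) (neg_nonneg.mpr hmixnonpos)]
end

section
/- Let s₁ ∈ (0,1). There is a constant C₉ = C₉(s₁) > 0 such that for every ε > 0, every w ∈ C^{s₁}([0,L]), and the solution N ∈ C²([0,L]) of N − ε² ∂ₓ²N = w with ∂ₓN(0) = ∂ₓN(L) = 0, one has ‖N‖_{C^{s₁}} ≤ C₉ ‖w‖_{C^{s₁}}; in particular the bound is uniform in ε. -/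
open MeasureTheory Set
open Filter Topology

lemma sq_rpow_half (a s : ℝ) (ha : 0 ≤ a) : (a^2) ^ (s/2) = a ^ s := by
  rw [← Real.rpow_natCast a 2, ← Real.rpow_mul ha]
  congr 1
  ring

lemma cont_extend {a b : ℝ} (hab : a < b) (F : ℝ → ℝ) (hF : ContinuousOn F (Icc a b))
    (h : ∀ x ∈ Ioo a b, F x ≤ 0) : ∀ x ∈ Icc a b, F x ≤ 0 := by
  intro x hx
  have hcl : x ∈ closure (Ioo a b) := by rwa [closure_Ioo hab.ne]
  have hne : (𝓝[Ioo a b] x).NeBot := mem_closure_iff_nhdsWithin_neBot.1 hcl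
  have ht : Tendsto F (𝓝[Ioo a b] x) (𝓝 (F x)) :=
    (hF x hx).mono Ioo_subset_Icc_self
  exact le_of_tendsto ht (eventually_nhdsWithin_of_forall h)

lemma maxprin (a b ε : ℝ) (hab : a < b) (hε : 0 < ε) (φ φ' φ'' : ℝ → ℝ)
    (hd1 : ∀ x ∈ Icc a b, HasDerivAt φ (φ' x) x)
    (hd2 : ∀ x ∈ Icc a b, HasDerivAt φ' (φ'' x) x)
    (hineq : ∀ x ∈ Icc a b, φ x ≤ ε^2 * φ'' x)
    (hba : 0 ≤ φ' a) (hbb : φ' b ≤ 0) :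
    ∀ x ∈ Icc a b, φ x ≤ 0 := by
  have hco : ContinuousOn φ (Icc a b) := fun x hx =>
    (hd1 x hx).continuousAt.continuousWithinAt
  obtain ⟨z, hz, hmax⟩ := isCompact_Icc.exists_isMaxOn (nonempty_Icc.2 hab.le) hco
  have hzle : φ z ≤ 0 := by
    by_contra hpos
    push_neg at hpos
    have hε2 : (0:ℝ) < ε^2 := by positivity
    have h2 : 0 < φ'' z := by nlinarith [hineq z hz]
    -- right-increase helper
    have sub_right : z < b → 0 ≤ φ' z → False := by
      intro hzb hz0
      have hslope : Tendsto (slope φ' z) (𝓝[>] z) (𝓝 (φ'' z)) :=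
        (hasDerivAt_iff_tendsto_slope.1 (hd2 z hz)).mono_left
          (nhdsWithin_mono z (fun t ht => ne_of_gt ht))
      have hev : ∀ᶠ x in 𝓝[>] z, 0 < slope φ' z x :=
        hslope.eventually (eventually_gt_nhds h2)
      obtain ⟨u, hu, hsub⟩ := mem_nhdsGT_iff_exists_Ioo_subset.1 hev
      set p := min u b
      have hzp : z < p := lt_min hu hzb
      have hpb : p ≤ b := min_le_right _ _
      have hpa : a ≤ z := hz.1
      have hmono : StrictMonoOn φ (Icc z p) := by
        apply strictMonoOn_of_deriv_pos (convex_Icc z p)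
        · exact hco.mono (Icc_subset_Icc hpa hpb)
        · intro t ht
          rw [interior_Icc] at ht
          have htI : t ∈ Icc a b := ⟨le_trans hpa ht.1.le, le_trans ht.2.le hpb⟩
          rw [(hd1 t htI).deriv]
          have hts : t ∈ Ioo z u := ⟨ht.1, lt_of_lt_of_le ht.2 (min_le_left _ _)⟩
          have hslp : 0 < (φ' t - φ' z) / (t - z) := by
            simpa [slope_def_field] using hsub hts
          have htz : 0 < t - z := sub_pos.2 ht.1
          rcases div_pos_iff.1 hslp with ⟨h1, h2⟩ | ⟨h1, h2⟩
          · linarith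
          · linarith
      have hlt : φ z < φ p :=
        hmono (left_mem_Icc.2 hzp.le) (right_mem_Icc.2 hzp.le) hzp
      exact absurd (hmax (⟨le_trans hpa hzp.le, hpb⟩ : p ∈ Icc a b)) (not_le.2 hlt)
    -- left-decrease helper
    have sub_left : a < z → φ' z ≤ 0 → False := by
      intro haz hz0
      have hslope : Tendsto (slope φ' z) (𝓝[<] z) (𝓝 (φ'' z)) :=
        (hasDerivAt_iff_tendsto_slope.1 (hd2 z hz)).mono_left
          (nhdsWithin_mono z (fun t ht => ne_of_lt ht))
      have hev : ∀ᶠ x in 𝓝[<] z, 0 < slope φ' z x :=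
        hslope.eventually (eventually_gt_nhds h2)
      obtain ⟨u, hu, hsub⟩ := mem_nhdsLT_iff_exists_Ioo_subset.1 hev
      set p := max u a
      have hpz : p < z := max_lt hu haz
      have hap : a ≤ p := le_max_right _ _
      have hzb : z ≤ b := hz.2
      have hanti : StrictAntiOn φ (Icc p z) := by
        apply strictAntiOn_of_deriv_neg (convex_Icc p z)
        · exact hco.mono (Icc_subset_Icc hap hzb)
        · intro t ht
          rw [interior_Icc] at ht
          have htI : t ∈ Icc a b := ⟨le_trans hap ht.1.le, le_trans ht.2.le hzb⟩
          rw [(hd1 t htI).deriv]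
          have hts : t ∈ Ioo u z := ⟨lt_of_le_of_lt (le_max_left _ _) ht.1, ht.2⟩
          have hslp : 0 < (φ' t - φ' z) / (t - z) := by
            simpa [slope_def_field] using hsub hts
          have htz : t - z < 0 := sub_neg.2 ht.2
          rcases div_pos_iff.1 hslp with ⟨h1, h2⟩ | ⟨h1, h2⟩
          · linarith
          · linarith
      have hlt : φ z < φ p :=
        hanti (left_mem_Icc.2 hpz.le) (right_mem_Icc.2 hpz.le) hpz
      exact absurd (hmax (⟨hap, le_trans hpz.le hzb⟩ : p ∈ Icc a b)) (not_le.2 hlt)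
    rcases eq_or_lt_of_le hz.2 with hzb | hzb
    · subst hzb; exact sub_left hab hbb
    · rcases eq_or_lt_of_le hz.1 with hza | hza
      · exact sub_right hzb (hza ▸ hba)
      · have hloc : IsLocalMax φ z :=
          hmax.isLocalMax (Icc_mem_nhds hza hzb)
        have := hloc.hasDerivAt_eq_zero (hd1 z hz)
        exact sub_right hzb this.ge
  intro x hx
  exact le_trans (hmax hx) hzle
-- assumes aux1 lemmas present; here re-stated via copy in final file
section
variable (L ε s : ℝ)

-- derivative computations for the barrier g x = ((x-x₀)^2+ε^2)^(s/2)
lemma hasDerivAt_g (hε : 0 < ε) (x₀ x : ℝ) :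
    HasDerivAt (fun y => ((y-x₀)^2+ε^2) ^ (s/2))
      (s * (x-x₀) * ((x-x₀)^2+ε^2) ^ (s/2-1)) x := by
  have hu : (0:ℝ) < (x-x₀)^2+ε^2 := by positivity
  have hu' : HasDerivAt (fun y => (y-x₀)^2+ε^2) (2*(x-x₀)) x := by
    have := (((hasDerivAt_id x).sub_const x₀).pow 2).add_const (ε^2)
    simpa using this
  have := hu'.rpow_const (p := s/2) (Or.inl hu.ne')
  convert this using 1
  ring

lemma hasDerivAt_g' (hε : 0 < ε) (x₀ x : ℝ) :
    HasDerivAt (fun y => s * (y-x₀) * ((y-x₀)^2+ε^2) ^ (s/2-1))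
      (s * ((x-x₀)^2+ε^2) ^ (s/2-1)
        + s*(s-2)*(x-x₀)^2 * ((x-x₀)^2+ε^2) ^ (s/2-2)) x := by
  have hu : (0:ℝ) < (x-x₀)^2+ε^2 := by positivity
  have hu' : HasDerivAt (fun y => (y-x₀)^2+ε^2) (2*(x-x₀)) x := by
    have := (((hasDerivAt_id x).sub_const x₀).pow 2).add_const (ε^2)
    simpa using this
  have h1 : HasDerivAt (fun y => s * (y-x₀)) s x := by
    simpa using ((hasDerivAt_id x).sub_const x₀).const_mul s
  have h2 := hu'.rpow_const (p := s/2-1) (Or.inl hu.ne')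
  rw [show s/2-1-1 = s/2-2 by ring] at h2
  have := h1.fun_mul h2
  exact this.congr_deriv (by ring)

-- barrier inequality: ε² g'' ≤ s g
lemma barrier_ineq (hε : 0 < ε) (hs0 : 0 < s) (hs1 : s < 1) (x₀ x : ℝ) :
    ε^2 * (s * ((x-x₀)^2+ε^2) ^ (s/2-1)
      + s*(s-2)*(x-x₀)^2 * ((x-x₀)^2+ε^2) ^ (s/2-2))
    ≤ s * ((x-x₀)^2+ε^2) ^ (s/2) := by
  set t := x - x₀ with ht
  have hupos : (0:ℝ) < t^2 + ε^2 := by positivity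
  have e1 : (t^2+ε^2) ^ (s/2-1) = (t^2+ε^2) ^ (s/2) / (t^2+ε^2) := by
    rw [Real.rpow_sub hupos, Real.rpow_one]
  have e2 : (t^2+ε^2) ^ (s/2-2) = (t^2+ε^2) ^ (s/2) / ((t^2+ε^2)*(t^2+ε^2)) := by
    rw [show s/2-2 = s/2-1-1 by ring, Real.rpow_sub hupos, Real.rpow_one, e1, div_div]
  set P := (t^2+ε^2) ^ (s/2) with hP
  have hPpos : 0 < P := Real.rpow_pos_of_pos hupos _
  rw [e1, e2]
  have hnum : 0 ≤ (t^2+ε^2)*(t^2+ε^2) - ε^2*((t^2+ε^2) + (s-2)*t^2) := by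
    nlinarith [sq_nonneg t, sq_nonneg ε, mul_nonneg (sq_nonneg t) (sq_nonneg ε), sq_nonneg (t^2)]
  have heq : s*P - ε^2 * (s * (P/(t^2+ε^2)) + s*(s-2)*t^2*(P/((t^2+ε^2)*(t^2+ε^2))))
      = s*P*(((t^2+ε^2)*(t^2+ε^2) - ε^2*((t^2+ε^2) + (s-2)*t^2))/((t^2+ε^2)*(t^2+ε^2))) := by
    field_simp
  have hge : 0 ≤ s*P*(((t^2+ε^2)*(t^2+ε^2) - ε^2*((t^2+ε^2) + (s-2)*t^2))/((t^2+ε^2)*(t^2+ε^2))) := by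
    apply mul_nonneg (by positivity)
    exact div_nonneg hnum (by positivity)
  linarith [heq ▸ hge]
end

lemma onesided (L ε s : ℝ) (hL : 0 < L) (hε : 0 < ε) (hs0 : 0 < s) (hs1 : s < 1)
    (w N N' N'' : ℝ → ℝ)
    (hd1 : ∀ x ∈ Icc 0 L, HasDerivAt N (N' x) x)
    (hd2 : ∀ x ∈ Icc 0 L, HasDerivAt N' (N'' x) x)
    (hc : ContinuousOn N'' (Icc 0 L))
    (hpde : ∀ x ∈ Ioo 0 L, N x - ε^2 * N'' x = w x)
    (hb0 : N' 0 = 0) (hbL : N' L = 0)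
    (K : ℝ) (hK : 0 ≤ K)
    (hw : ∀ x ∈ Icc (0:ℝ) L, ∀ y ∈ Icc (0:ℝ) L, w x - w y ≤ K * |x - y| ^ s)
    (x₀ : ℝ) (hx₀ : x₀ ∈ Icc 0 L) :
    ∀ x ∈ Icc 0 L, N x - w x₀ ≤ K/(1-s) * ((x-x₀)^2 + ε^2) ^ (s/2) := by
  have h1s : (0:ℝ) < 1 - s := by linarith
  set c : ℝ := K/(1-s) with hc_def
  have hc0 : 0 ≤ c := div_nonneg hK h1s.le
  set g : ℝ → ℝ := fun x => ((x-x₀)^2+ε^2) ^ (s/2) with hg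
  set g' : ℝ → ℝ := fun x => s * (x-x₀) * ((x-x₀)^2+ε^2) ^ (s/2-1) with hg'
  set g'' : ℝ → ℝ := fun x => s * ((x-x₀)^2+ε^2) ^ (s/2-1)
      + s*(s-2)*(x-x₀)^2 * ((x-x₀)^2+ε^2) ^ (s/2-2) with hg''
  have hgpos : ∀ x, 0 ≤ g x := fun x => Real.rpow_nonneg (by positivity) _
  have habs : ∀ x, |x - x₀| ^ s ≤ g x := by
    intro x
    rw [hg]
    rw [← sq_rpow_half |x-x₀| s (abs_nonneg _), sq_abs]
    exact Real.rpow_le_rpow (by positivity) (by nlinarith [sq_nonneg ε]) (by positivity)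
  have key := maxprin 0 L ε hL hε
      (fun x => N x - w x₀ - c * g x)
      (fun x => N' x - c * g' x)
      (fun x => N'' x - c * g'' x)
      (by
        intro x hx
        exact ((hd1 x hx).sub_const (w x₀)).sub ((hasDerivAt_g ε s hε x₀ x).const_mul c))
      (by
        intro x hx
        exact (hd2 x hx).sub ((hasDerivAt_g' ε s hε x₀ x).const_mul c))
      (by
        -- differential inequality, extended to the closed interval by continuity
        have hNcont : ContinuousOn N (Icc 0 L) := fun x hx =>
          (hd1 x hx).continuousAt.continuousWithinAt
        have hbase : Continuous fun x : ℝ => (x-x₀)^2+ε^2 :=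
          ((continuous_id.sub continuous_const).pow 2).add continuous_const
        have hgc : Continuous g :=
          hbase.rpow_const (fun x => Or.inr (by positivity))
        have hg2c : Continuous g'' := by
          apply Continuous.add
          · exact continuous_const.mul
              (hbase.rpow_const (fun x => Or.inl (by positivity)))
          · exact (continuous_const.mul
              ((continuous_id.sub continuous_const).pow 2)).mul
              (hbase.rpow_const (fun x => Or.inl (by positivity)))
        have hF : ContinuousOn
            (fun x => (N x - w x₀ - c * g x) - ε^2 * (N'' x - c * g'' x)) (Icc 0 L) := by
          apply ContinuousOn.sub
          · exact (hNcont.sub continuousOn_const).sub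
              (continuousOn_const.mul hgc.continuousOn)
          · exact continuousOn_const.mul
              (hc.sub (continuousOn_const.mul hg2c.continuousOn))
        intro x hx
        have := cont_extend hL
          (fun x => (N x - w x₀ - c * g x) - ε^2 * (N'' x - c * g'' x)) hF
          (by
            intro y hy
            have hpd := hpde y hy
            have hyI : y ∈ Icc 0 L := Ioo_subset_Icc_self hy
            have hbar := barrier_ineq ε s hε hs0 hs1 x₀ y
            have hwy := hw y hyI x₀ hx₀
            have h3 : K * |y - x₀| ^ s ≤ K * g y :=
              mul_le_mul_of_nonneg_left (habs y) hK
            have h4 : c * ((1-s) * g y) ≤ c * (g y - ε^2 * g'' y) := by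
              apply mul_le_mul_of_nonneg_left _ hc0
              have : ε^2 * g'' y ≤ s * g y := hbar
              nlinarith
            have h5 : c * ((1-s) * g y) = K * g y := by
              rw [hc_def]; field_simp
            have hbar' : ε^2 * g'' y ≤ s * g y := hbar
            show N y - w x₀ - c * g y - ε^2 * (N'' y - c * g'' y) ≤ 0
            nlinarith) x hx
        simpa using this)
      (by
        have hgp : g' 0 ≤ 0 := by
          rw [hg']
          apply mul_nonpos_of_nonpos_of_nonneg
          · apply mul_nonpos_of_nonneg_of_nonpos hs0.le
            linarith [hx₀.1]
          · exact Real.rpow_nonneg (by positivity) _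
        simp only [hb0]
        nlinarith)
      (by
        have hgp : 0 ≤ g' L := by
          rw [hg']
          apply mul_nonneg
          · apply mul_nonneg hs0.le
            linarith [hx₀.2]
          · exact Real.rpow_nonneg (by positivity) _
        simp only [hbL]
        nlinarith)
  intro x hx
  have h2 : N x - w x₀ - c * ((x-x₀)^2+ε^2)^(s/2) ≤ 0 := key x hx
  linarith

lemma supb (L ε : ℝ) (hL : 0 < L) (hε : 0 < ε)
    (w N N' N'' : ℝ → ℝ)
    (hd1 : ∀ x ∈ Icc 0 L, HasDerivAt N (N' x) x)
    (hd2 : ∀ x ∈ Icc 0 L, HasDerivAt N' (N'' x) x)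
    (hc : ContinuousOn N'' (Icc 0 L))
    (hpde : ∀ x ∈ Ioo 0 L, N x - ε^2 * N'' x = w x)
    (hb0 : N' 0 = 0) (hbL : N' L = 0)
    (M : ℝ) (hM : ∀ x ∈ Icc (0:ℝ) L, w x ≤ M) :
    ∀ x ∈ Icc 0 L, N x ≤ M := by
  have key := maxprin 0 L ε hL hε (fun x => N x - M) N' N''
    (fun x hx => (hd1 x hx).sub_const M)
    hd2
    (by
      have hNcont : ContinuousOn N (Icc 0 L) := fun x hx =>
        (hd1 x hx).continuousAt.continuousWithinAt
      have hF : ContinuousOn (fun x => (N x - M) - ε^2 * N'' x) (Icc 0 L) :=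
        (hNcont.sub continuousOn_const).sub (hc.const_smul (ε^2))
      intro x hx
      have h8 := cont_extend hL _ hF
        (by
          intro y hy
          have h6 := hpde y hy
          have h7 := hM y (Ioo_subset_Icc_self hy)
          show N y - M - ε^2 * N'' y ≤ 0
          linarith) x hx
      have h9 : N x - M - ε^2 * N'' x ≤ 0 := h8
      show N x - M ≤ ε^2 * N'' x
      linarith)
    (le_of_eq hb0.symm) (le_of_eq hbL)
  intro x hx
  have h2 : N x - M ≤ 0 := key x hx
  linarith

lemma twosided (L ε s : ℝ) (hL : 0 < L) (hε : 0 < ε) (hs0 : 0 < s) (hs1 : s < 1)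
    (w N N' N'' : ℝ → ℝ)
    (hd1 : ∀ x ∈ Icc 0 L, HasDerivAt N (N' x) x)
    (hd2 : ∀ x ∈ Icc 0 L, HasDerivAt N' (N'' x) x)
    (hc : ContinuousOn N'' (Icc 0 L))
    (hpde : ∀ x ∈ Ioo 0 L, N x - ε^2 * N'' x = w x)
    (hb0 : N' 0 = 0) (hbL : N' L = 0)
    (K : ℝ) (hK : 0 ≤ K)
    (hw : ∀ x ∈ Icc (0:ℝ) L, ∀ y ∈ Icc (0:ℝ) L, |w x - w y| ≤ K * |x - y| ^ s)
    (x₀ : ℝ) (hx₀ : x₀ ∈ Icc 0 L) :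
    ∀ x ∈ Icc 0 L, |N x - w x₀| ≤ K/(1-s) * ((x-x₀)^2 + ε^2) ^ (s/2) := by
  have h1 := onesided L ε s hL hε hs0 hs1 w N N' N'' hd1 hd2 hc hpde hb0 hbL K hK
    (fun x hx y hy => le_trans (le_abs_self _) (hw x hx y hy)) x₀ hx₀
  have h2 := onesided L ε s hL hε hs0 hs1 (fun x => -w x) (fun x => -N x)
    (fun x => -N' x) (fun x => -N'' x)
    (fun x hx => (hd1 x hx).neg)
    (fun x hx => (hd2 x hx).neg)
    hc.neg
    (by
      intro x hx
      have := hpde x hx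
      show -N x - ε^2 * -N'' x = -w x
      linarith)
    (by show -N' 0 = 0; rw [hb0]; ring)
    (by show -N' L = 0; rw [hbL]; ring)
    K hK
    (by
      intro x hx y hy
      show -w x - -w y ≤ K * |x - y| ^ s
      have := hw x hx y hy
      have h3 := neg_abs_le (w x - w y)
      linarith)
    x₀ hx₀
  intro x hx
  have h1' := h1 x hx
  have h2' : -N x - -w x₀ ≤ K/(1-s) * ((x-x₀)^2 + ε^2) ^ (s/2) := h2 x hx
  rw [abs_sub_le_iff]
  constructor <;> linarith

lemma abs_sub_deriv (N' N'' : ℝ → ℝ) (c ξ lo hi : ℝ) (hlh : lo < hi)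
    (hcm : c ∈ Icc lo hi) (hξm : ξ ∈ Icc lo hi)
    (hd : ∀ x ∈ Icc lo hi, HasDerivAt N' (N'' x) x)
    (B : ℝ) (hB : ∀ x ∈ Ioo lo hi, |N'' x| ≤ B) :
    |N' c - N' ξ| ≤ B * (hi - lo) := by
  have hcont : ContinuousOn N' (Icc lo hi) := fun x hx =>
    (hd x hx).continuousAt.continuousWithinAt
  have hB0 : 0 ≤ B := le_trans (abs_nonneg _) (hB ((lo+hi)/2) ⟨by linarith, by linarith⟩)
  rcases lt_trichotomy c ξ with hlt | heq | hgt
  · obtain ⟨η, hη, hηs⟩ := exists_hasDerivAt_eq_slope N' N'' hlt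
      (hcont.mono (Icc_subset_Icc hcm.1 hξm.2))
      (fun x hx => hd x ⟨le_trans hcm.1 hx.1.le, le_trans hx.2.le hξm.2⟩)
    have hηI : η ∈ Ioo lo hi := ⟨lt_of_le_of_lt hcm.1 hη.1, lt_of_lt_of_le hη.2 hξm.2⟩
    have h1 : |N' ξ - N' c| = |N'' η| * (ξ - c) := by
      rw [hηs, abs_div, abs_of_pos (by linarith : (0:ℝ) < ξ - c), div_mul_cancel₀]
      linarith
    rw [abs_sub_comm, h1]
    have := hB η hηI
    have hle : ξ - c ≤ hi - lo := by
      have := hcm.1; have := hξm.2; linarith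
    exact mul_le_mul this hle (by linarith) hB0
  · rw [heq]; simp
    exact mul_nonneg hB0 (by linarith)
  · obtain ⟨η, hη, hηs⟩ := exists_hasDerivAt_eq_slope N' N'' hgt
      (hcont.mono (Icc_subset_Icc hξm.1 hcm.2))
      (fun x hx => hd x ⟨le_trans hξm.1 hx.1.le, le_trans hx.2.le hcm.2⟩)
    have hηI : η ∈ Ioo lo hi := ⟨lt_of_le_of_lt hξm.1 hη.1, lt_of_lt_of_le hη.2 hcm.2⟩
    have h1 : |N' c - N' ξ| = |N'' η| * (c - ξ) := by
      rw [hηs, abs_div, abs_of_pos (by linarith : (0:ℝ) < c - ξ), div_mul_cancel₀]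
      linarith
    rw [h1]
    have := hB η hηI
    have hle : c - ξ ≤ hi - lo := by
      have := hξm.1; have := hcm.2; linarith
    exact mul_le_mul this hle (by linarith) hB0

set_option maxHeartbeats 1000000 in
lemma holder_key (L ε s : ℝ) (hL : 0 < L) (hε : 0 < ε) (hs0 : 0 < s) (hs1 : s < 1)
    (w N N' N'' : ℝ → ℝ)
    (hd1 : ∀ x ∈ Icc 0 L, HasDerivAt N (N' x) x)
    (hd2 : ∀ x ∈ Icc 0 L, HasDerivAt N' (N'' x) x)
    (hc : ContinuousOn N'' (Icc 0 L))
    (hpde : ∀ x ∈ Ioo 0 L, N x - ε^2 * N'' x = w x)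
    (hb0 : N' 0 = 0) (hbL : N' L = 0)
    (K : ℝ) (hK : 0 ≤ K)
    (hw : ∀ x ∈ Icc (0:ℝ) L, ∀ y ∈ Icc (0:ℝ) L, |w x - w y| ≤ K * |x - y| ^ s)
    (M : ℝ) (hM : ∀ x ∈ Icc (0:ℝ) L, |w x| ≤ M) :
    ∀ x ∈ Icc (0:ℝ) L, ∀ y ∈ Icc (0:ℝ) L, x < y →
      |N x - N y| ≤ (4/(1-s)*K + 4/L^s*M) * (y - x)^s := by
  have h1s : (0:ℝ) < 1 - s := by linarith
  set c₀ : ℝ := K/(1-s) with hc₀_def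
  have hc₀0 : 0 ≤ c₀ := div_nonneg hK h1s.le
  have hM0 : 0 ≤ M := le_trans (abs_nonneg _) (hM 0 ⟨le_refl _, hL.le⟩)
  have hLs : (0:ℝ) < L^s := Real.rpow_pos_of_pos hL _
  set C : ℝ := 4/(1-s)*K + 4/L^s*M with hC_def
  have hC4 : 4*c₀ ≤ C := by
    rw [hC_def, hc₀_def]
    have h1 : 4/(1-s)*K = 4*(K/(1-s)) := by ring
    have h2 : 0 ≤ 4/L^s*M := by positivity
    linarith
  have hCM : 4/L^s*M ≤ C := by
    rw [hC_def]
    have : 0 ≤ 4/(1-s)*K := by positivity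
    linarith
  have step := twosided L ε s hL hε hs0 hs1 w N N' N'' hd1 hd2 hc hpde hb0 hbL K hK hw
  have supN : ∀ t ∈ Icc (0:ℝ) L, |N t| ≤ M := by
    have s1 := supb L ε hL hε w N N' N'' hd1 hd2 hc hpde hb0 hbL M
      (fun x hx => le_trans (le_abs_self _) (hM x hx))
    have s2 := supb L ε hL hε (fun x => -w x) (fun x => -N x) (fun x => -N' x)
      (fun x => -N'' x)
      (fun x hx => (hd1 x hx).neg) (fun x hx => (hd2 x hx).neg) hc.neg
      (by intro x hx; have := hpde x hx; show -N x - ε^2 * -N'' x = -w x; linarith)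
      (by show -N' 0 = 0; rw [hb0]; ring) (by show -N' L = 0; rw [hbL]; ring)
      M (by
        intro x hx
        show -w x ≤ M
        have := neg_abs_le (w x); have := hM x hx; linarith)
    intro t ht
    have hA := s1 t ht
    have hB : -N t ≤ M := s2 t ht
    rw [abs_le]
    exact ⟨by linarith, hA⟩
  have es : (ε^2)^(s/2) = ε^s := sq_rpow_half ε s hε.le
  have hNdiff : ∀ t ∈ Icc (0:ℝ) L, |N t - w t| ≤ c₀ * ε^s := by
    intro t ht
    have := step t ht t ht
    simpa [es] using this
  intro x hx y hy hxy
  set h : ℝ := y - x with hh_def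
  have hh0 : 0 < h := by simp [hh_def]; linarith
  have hhL : h ≤ L := by
    have := hx.1; have := hy.2; simp [hh_def]; linarith
  have hhs : (0:ℝ) < h^s := Real.rpow_pos_of_pos hh0 _
  have twopow : (2:ℝ)^s ≤ 2 := by
    have := Real.rpow_le_rpow_of_exponent_le (one_le_two) hs1.le
    simpa using this
  rcases le_or_gt ε h with hεh | hεh
  · -- case ε ≤ h
    have b1 : |N x - w y| ≤ c₀ * ((x-y)^2+ε^2)^(s/2) := step y hy x hx
    have b2 : |N y - w y| ≤ c₀ * ε^s := hNdiff y hy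
    have r1 : ((x-y)^2+ε^2)^(s/2) ≤ 2*h^s := by
      have hbase : (x-y)^2+ε^2 ≤ (2*h)^2 := by
        have h1 : (x-y)^2 = h^2 := by rw [hh_def]; ring
        nlinarith
      calc ((x-y)^2+ε^2)^(s/2) ≤ ((2*h)^2)^(s/2) :=
            Real.rpow_le_rpow (by positivity) hbase (by positivity)
        _ = (2*h)^s := sq_rpow_half _ s (by positivity)
        _ = 2^s * h^s := Real.mul_rpow (by norm_num) hh0.le
        _ ≤ 2*h^s := mul_le_mul_of_nonneg_right twopow hhs.le
    have r2 : ε^s ≤ h^s := Real.rpow_le_rpow hε.le hεh hs0.le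
    have : |N x - N y| ≤ 3*c₀*h^s := by
      have habs : |N x - N y| ≤ |N x - w y| + |N y - w y| := by
        rw [abs_sub_comm (N y) (w y)]
        exact abs_sub_le _ _ _
      have m1 : c₀ * ((x-y)^2+ε^2)^(s/2) ≤ c₀*(2*h^s) := mul_le_mul_of_nonneg_left r1 hc₀0
      have m2 : c₀ * ε^s ≤ c₀*h^s := mul_le_mul_of_nonneg_left r2 hc₀0
      nlinarith
    have : |N x - N y| ≤ 4*c₀*h^s := by nlinarith
    calc |N x - N y| ≤ 4*c₀*h^s := this
      _ ≤ C*h^s := mul_le_mul_of_nonneg_right hC4 hhs.le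
  · -- case h < ε : gradient estimate
    have hIccxy : Icc x y ⊆ Icc (0:ℝ) L := Icc_subset_Icc hx.1 hy.2
    obtain ⟨cm, hcm, hcs⟩ := exists_hasDerivAt_eq_slope N N' hxy
      ((fun t ht => (hd1 t (hIccxy ht)).continuousAt.continuousWithinAt))
      (fun t ht => hd1 t (hIccxy (Ioo_subset_Icc_self ht)))
    have hcmI : cm ∈ Icc (0:ℝ) L := hIccxy (Ioo_subset_Icc_self hcm)
    have hh0' : (0:ℝ) < y - x := by linarith
    have hNeq : |N x - N y| = |N' cm| * h := by
      have e0 : |N' cm| = |N x - N y| / h := by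
        rw [hcs, abs_div, abs_of_pos hh0', abs_sub_comm]
      rw [e0, div_mul_cancel₀ _ (ne_of_gt hh0)]
    rcases le_or_gt ε L with hεL | hεL
    · -- subcase ε ≤ L
      set a : ℝ := min cm (L - ε) with ha_def
      have ha0 : 0 ≤ a := le_min hcmI.1 (by linarith)
      have haε : a + ε ≤ L := by
        have := min_le_right cm (L - ε); linarith
      have hwin : Icc a (a+ε) ⊆ Icc (0:ℝ) L := Icc_subset_Icc ha0 haε
      have hacm : cm ∈ Icc a (a+ε) := by
        constructor
        · exact min_le_left _ _
        · rcases le_total cm (L - ε) with hcc | hcc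
          · rw [ha_def, min_eq_left hcc]; linarith
          · rw [ha_def, min_eq_right hcc]; linarith [hcmI.2]
      obtain ⟨ξ, hξ, hξs⟩ := exists_hasDerivAt_eq_slope N N' (by linarith : a < a + ε)
        (fun t ht => (hd1 t (hwin ht)).continuousAt.continuousWithinAt)
        (fun t ht => hd1 t (hwin (Ioo_subset_Icc_self ht)))
      have hξbnd : |N' ξ| ≤ 3*c₀*ε^s/ε := by
        have e0 : a + ε - a = ε := by ring
        have b1 : |N (a+ε) - w a| ≤ c₀*2*ε^s := by
          have := step a (hwin (left_mem_Icc.2 (by linarith))) (a+ε)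
            (hwin (right_mem_Icc.2 (by linarith)))
          have r1 : ((a+ε-a)^2+ε^2)^(s/2) ≤ 2*ε^s := by
            have hbase : (a+ε-a)^2+ε^2 ≤ (2*ε)^2 := by nlinarith
            calc ((a+ε-a)^2+ε^2)^(s/2) ≤ ((2*ε)^2)^(s/2) :=
                  Real.rpow_le_rpow (by positivity) hbase (by positivity)
              _ = (2*ε)^s := sq_rpow_half _ s (by positivity)
              _ = 2^s * ε^s := Real.mul_rpow (by norm_num) hε.le
              _ ≤ 2*ε^s := mul_le_mul_of_nonneg_right twopow (by positivity)
          have m1 := mul_le_mul_of_nonneg_left r1 hc₀0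
          nlinarith
        have b2 : |N a - w a| ≤ c₀*ε^s := hNdiff a (hwin (left_mem_Icc.2 (by linarith)))
        have b3 : |N (a+ε) - N a| ≤ 3*c₀*ε^s := by
          have habs : |N (a+ε) - N a| ≤ |N (a+ε) - w a| + |N a - w a| := by
            rw [abs_sub_comm (N a) (w a)]
            exact abs_sub_le _ _ _
          nlinarith
        rw [hξs, e0, abs_div, abs_of_pos hε]
        gcongr
      have htrans : |N' cm - N' ξ| ≤ (c₀*ε^s/ε^2)*ε := by
        have := abs_sub_deriv N' N'' cm ξ a (a+ε) (by linarith) hacm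
          (Ioo_subset_Icc_self hξ)
          (fun t ht => hd2 t (hwin ht)) (c₀*ε^s/ε^2)
          (by
            intro t ht
            have htI : t ∈ Ioo (0:ℝ) L := ⟨lt_of_le_of_lt ha0 ht.1, lt_of_lt_of_le ht.2 haε⟩
            have hp := hpde t htI
            have hnd := hNdiff t (Ioo_subset_Icc_self htI)
            have he2 : (0:ℝ) < ε^2 := by positivity
            have : N'' t = (N t - w t)/ε^2 := by field_simp; linarith
            rw [this, abs_div, abs_of_pos he2]
            gcongr)
        calc |N' cm - N' ξ| ≤ (c₀*ε^s/ε^2)*(a+ε-a) := this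
          _ = (c₀*ε^s/ε^2)*ε := by ring_nf
      have hNc : |N' cm| ≤ 4*c₀*(ε^s/ε) := by
        have h4 : |N' cm| ≤ |N' ξ| + |N' cm - N' ξ| := by
          have := abs_sub_abs_le_abs_sub (N' cm) (N' ξ)
          have := abs_sub_le (N' cm) (N' ξ) 0
          simp at this
          linarith [abs_sub_le (N' cm) (N' ξ) 0]
        have e5 : (c₀*ε^s/ε^2)*ε = c₀*(ε^s/ε) := by
          field_simp
        have e6 : 3*c₀*ε^s/ε = 3*(c₀*(ε^s/ε)) := by ring
        rw [e5] at htrans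
        rw [e6] at hξbnd
        linarith
      have hkey : (ε^s/ε)*h ≤ h^s := by
        have e7 : ε^s/ε = ε^(s-1) := by
          rw [Real.rpow_sub hε, Real.rpow_one]
        have e8 : ε^(s-1) ≤ h^(s-1) :=
          Real.rpow_le_rpow_of_nonpos hh0 hεh.le (by linarith)
        have e9 : h^(s-1)*h = h^s := by
          nth_rewrite 2 [← Real.rpow_one h]
          rw [← Real.rpow_add hh0]
          norm_num
        rw [e7]
        calc ε^(s-1)*h ≤ h^(s-1)*h := mul_le_mul_of_nonneg_right e8 hh0.le
          _ = h^s := e9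
      calc |N x - N y| = |N' cm| * h := hNeq
        _ ≤ (4*c₀*(ε^s/ε))*h := mul_le_mul_of_nonneg_right hNc hh0.le
        _ = 4*c₀*((ε^s/ε)*h) := by ring
        _ ≤ 4*c₀*h^s := mul_le_mul_of_nonneg_left hkey (by positivity)
        _ ≤ C*h^s := mul_le_mul_of_nonneg_right hC4 hhs.le
    · -- subcase L < ε
      obtain ⟨ξ, hξ, hξs⟩ := exists_hasDerivAt_eq_slope N N' hL
        (fun t ht => (hd1 t ht).continuousAt.continuousWithinAt)
        (fun t ht => hd1 t (Ioo_subset_Icc_self ht))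
      have hξbnd : |N' ξ| ≤ 2*M/L := by
        rw [hξs]
        have b1 := supN L (right_mem_Icc.2 hL.le)
        have b2 := supN 0 (left_mem_Icc.2 hL.le)
        have : |N L - N 0| ≤ 2*M := by
          have := abs_sub (N L) (N 0)
          calc |N L - N 0| ≤ |N L| + |N 0| := abs_sub _ _
            _ ≤ 2*M := by linarith
        rw [abs_div, abs_of_pos (by linarith : (0:ℝ) < L - 0)]
        calc |N L - N 0|/(L-0) ≤ 2*M/(L-0) := by gcongr
          _ = 2*M/L := by norm_num
      have htrans : |N' cm - N' ξ| ≤ (2*M/ε^2)*(L-0) := by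
        apply abs_sub_deriv N' N'' cm ξ 0 L hL hcmI (Ioo_subset_Icc_self hξ) hd2
        intro t ht
        have hp := hpde t ht
        have htI := Ioo_subset_Icc_self ht
        have hN1 := supN t htI
        have hw1 := hM t htI
        have he2 : (0:ℝ) < ε^2 := by positivity
        have hdd : N'' t = (N t - w t)/ε^2 := by field_simp; linarith
        have : |N t - w t| ≤ 2*M := by
          calc |N t - w t| ≤ |N t| + |w t| := abs_sub _ _
            _ ≤ 2*M := by linarith
        rw [hdd, abs_div, abs_of_pos he2]
        gcongr
      have htrans2 : |N' cm - N' ξ| ≤ 2*M/L := by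
        have hLε2 : (2*M/ε^2)*(L-0) ≤ 2*M/L := by
          rw [div_mul_eq_mul_div, div_le_div_iff₀ (by positivity) hL]
          nlinarith [mul_nonneg hM0 (by nlinarith : (0:ℝ) ≤ ε^2 - L^2)]
        linarith
      have hNc : |N' cm| ≤ 4*M/L := by
        have h4 : |N' cm| ≤ |N' ξ| + |N' cm - N' ξ| := by
          have h5 := abs_sub_le (N' cm) (N' ξ) 0
          simp only [sub_zero] at h5
          linarith
        have h6 : 2*M/L + 2*M/L = 4*M/L := by ring
        linarith
      have hkey : (4*M/L)*h ≤ (4/L^s*M)*h^s := by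
        have e3 : h = h^s * h^(1-s) := by
          rw [← Real.rpow_add hh0]
          rw [show s+(1-s) = 1 by ring, Real.rpow_one]
        have e4 : L^s * L^(1-s) = L := by
          rw [← Real.rpow_add hL]
          rw [show s+(1-s) = 1 by ring, Real.rpow_one]
        have e5 : h^(1-s) ≤ L^(1-s) := Real.rpow_le_rpow hh0.le hhL (by linarith)
        have e6 : (4*M/L)*h = (4*M/L)*(h^s*h^(1-s)) := by rw [← e3]
        rw [e6]
        have e7 : (4*M/L)*(h^s*h^(1-s)) ≤ (4*M/L)*(h^s*L^(1-s)) := by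
          apply mul_le_mul_of_nonneg_left _ (by positivity)
          exact mul_le_mul_of_nonneg_left e5 hhs.le
        have e8 : (4*M/L)*(h^s*L^(1-s)) = (4/L^s*M)*h^s := by
          have e4' : L^(1-s) = L / L^s := by
            rw [eq_div_iff hLs.ne']
            linarith [e4]
          rw [e4']
          field_simp
        linarith
      calc |N x - N y| = |N' cm| * h := hNeq
        _ ≤ (4*M/L)*h := mul_le_mul_of_nonneg_right hNc hh0.le
        _ ≤ (4/L^s*M)*h^s := hkey
        _ ≤ C*h^s := mul_le_mul_of_nonneg_right hCM hhs.le

lemma supN_abs (L ε : ℝ) (hL : 0 < L) (hε : 0 < ε)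
    (w N N' N'' : ℝ → ℝ)
    (hd1 : ∀ x ∈ Icc 0 L, HasDerivAt N (N' x) x)
    (hd2 : ∀ x ∈ Icc 0 L, HasDerivAt N' (N'' x) x)
    (hc : ContinuousOn N'' (Icc 0 L))
    (hpde : ∀ x ∈ Ioo 0 L, N x - ε^2 * N'' x = w x)
    (hb0 : N' 0 = 0) (hbL : N' L = 0)
    (M : ℝ) (hM : ∀ x ∈ Icc (0:ℝ) L, |w x| ≤ M) :
    ∀ t ∈ Icc (0:ℝ) L, |N t| ≤ M := by
  have s1 := supb L ε hL hε w N N' N'' hd1 hd2 hc hpde hb0 hbL M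
    (fun x hx => le_trans (le_abs_self _) (hM x hx))
  have s2 := supb L ε hL hε (fun x => -w x) (fun x => -N x) (fun x => -N' x)
    (fun x => -N'' x)
    (fun x hx => (hd1 x hx).neg) (fun x hx => (hd2 x hx).neg) hc.neg
    (by intro x hx; have := hpde x hx; show -N x - ε^2 * -N'' x = -w x; linarith)
    (by show -N' 0 = 0; rw [hb0]; ring) (by show -N' L = 0; rw [hbL]; ring)
    M (by
      intro x hx
      show -w x ≤ M
      have := neg_abs_le (w x); have := hM x hx; linarith)
  intro t ht
  have hA := s1 t ht
  have hB : -N t ≤ M := s2 t ht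
  rw [abs_le]
  exact ⟨by linarith, hA⟩

/-- The Hölder norm `‖f‖_{C^s([0,L])} = sup_{[0,L]} |f| + sup_{x≠y} |f x - f y|/|x-y|^s`. -/
noncomputable def holderNorm (L s : ℝ) (f : ℝ → ℝ) : ℝ :=
  sSup ((fun x => |f x|) '' Icc (0:ℝ) L) +
    sSup {c : ℝ | ∃ x ∈ Icc (0:ℝ) L, ∃ y ∈ Icc (0:ℝ) L, x ≠ y ∧
      c = |f x - f y| / |x - y| ^ s}

/-- The Neumann resolvent `(1 - ε²∂ₓ²)⁻¹` is bounded on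
`C^{s₁}([0,L])` uniformly in `ε > 0`. -/
theorem resolvent_holder_bound
    (L : ℝ) (hL : 0 < L) (s₁ : ℝ) (hs₁ : s₁ ∈ Ioo (0:ℝ) 1) :
    ∃ C₉ > (0:ℝ), ∀ ε > (0:ℝ), ∀ w N : ℝ → ℝ,
      ContinuousOn w (Icc 0 L) →
      (∃ K : ℝ, 0 ≤ K ∧ ∀ x ∈ Icc (0:ℝ) L, ∀ y ∈ Icc (0:ℝ) L,
        |w x - w y| ≤ K * |x - y| ^ s₁) →
      (∀ x ∈ Icc (0:ℝ) L, DifferentiableAt ℝ N x ∧ DifferentiableAt ℝ (deriv N) x) →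
      ContinuousOn (deriv (deriv N)) (Icc 0 L) →
      (∀ x ∈ Ioo (0:ℝ) L, N x - ε ^ 2 * deriv (deriv N) x = w x) →
      deriv N 0 = 0 → deriv N L = 0 →
      holderNorm L s₁ N ≤ C₉ * holderNorm L s₁ w := by
  obtain ⟨hs0, hs1'⟩ := hs₁
  have h1s : (0:ℝ) < 1 - s₁ := by linarith
  have hLs : (0:ℝ) < L^s₁ := Real.rpow_pos_of_pos hL _
  refine ⟨1 + 4/(1-s₁) + 4/L^s₁, by positivity, ?_⟩
  intro ε hε w N hwcont hwK hdiff hcont hpde hD0 hDL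
  obtain ⟨K, hK0, hwKb⟩ := hwK
  have hd1 : ∀ x ∈ Icc (0:ℝ) L, HasDerivAt N (deriv N x) x :=
    fun x hx => (hdiff x hx).1.hasDerivAt
  have hd2 : ∀ x ∈ Icc (0:ℝ) L, HasDerivAt (deriv N) (deriv (deriv N) x) x :=
    fun x hx => (hdiff x hx).2.hasDerivAt
  set M : ℝ := sSup ((fun x => |w x|) '' Icc (0:ℝ) L) with hM_def
  set S : ℝ := sSup {c : ℝ | ∃ x ∈ Icc (0:ℝ) L, ∃ y ∈ Icc (0:ℝ) L, x ≠ y ∧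
      c = |w x - w y| / |x - y| ^ s₁} with hS_def
  have hbddM : BddAbove ((fun x => |w x|) '' Icc (0:ℝ) L) :=
    (isCompact_Icc.image_of_continuousOn hwcont.abs).bddAbove
  have hMw : ∀ x ∈ Icc (0:ℝ) L, |w x| ≤ M :=
    fun x hx => le_csSup hbddM ⟨x, hx, rfl⟩
  have hM0 : 0 ≤ M := le_trans (abs_nonneg _) (hMw 0 ⟨le_refl _, hL.le⟩)
  have hbddS : BddAbove {c : ℝ | ∃ x ∈ Icc (0:ℝ) L, ∃ y ∈ Icc (0:ℝ) L, x ≠ y ∧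
      c = |w x - w y| / |x - y| ^ s₁} := by
    refine ⟨K, ?_⟩
    rintro c ⟨x, hx, y, hy, hxy, rfl⟩
    have habs : (0:ℝ) < |x - y| := abs_pos.2 (sub_ne_zero.2 hxy)
    have hpow : (0:ℝ) < |x - y| ^ s₁ := Real.rpow_pos_of_pos habs _
    rw [div_le_iff₀ hpow]
    exact hwKb x hx y hy
  have hS0 : 0 ≤ S := by
    apply Real.sSup_nonneg
    rintro c ⟨x, hx, y, hy, hxy, rfl⟩
    positivity
  have hwS : ∀ x ∈ Icc (0:ℝ) L, ∀ y ∈ Icc (0:ℝ) L, |w x - w y| ≤ S * |x - y| ^ s₁ := by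
    intro x hx y hy
    by_cases hxy : x = y
    · subst hxy
      simp [Real.zero_rpow hs0.ne']
    · have habs : (0:ℝ) < |x - y| := abs_pos.2 (sub_ne_zero.2 hxy)
      have hpow : (0:ℝ) < |x - y| ^ s₁ := Real.rpow_pos_of_pos habs _
      have hmem := le_csSup hbddS ⟨x, hx, y, hy, hxy, rfl⟩
      rw [div_le_iff₀ hpow] at hmem
      exact hmem
  have key := holder_key L ε s₁ hL hε hs0 hs1' w N (deriv N) (deriv (deriv N))
    hd1 hd2 hcont hpde hD0 hDL S hS0 hwS M hMw
  have supN := supN_abs L ε hL hε w N (deriv N) (deriv (deriv N))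
    hd1 hd2 hcont hpde hD0 hDL M hMw
  set C' : ℝ := 4/(1-s₁)*S + 4/L^s₁*M with hC'_def
  have hC'0 : 0 ≤ C' := by positivity
  have keyabs : ∀ x ∈ Icc (0:ℝ) L, ∀ y ∈ Icc (0:ℝ) L, x ≠ y →
      |N x - N y| / |x - y| ^ s₁ ≤ C' := by
    intro x hx y hy hxy
    have habs : (0:ℝ) < |x - y| := abs_pos.2 (sub_ne_zero.2 hxy)
    have hpow : (0:ℝ) < |x - y| ^ s₁ := Real.rpow_pos_of_pos habs _
    rw [div_le_iff₀ hpow]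
    rcases lt_or_gt_of_ne hxy with hlt | hgt
    · have := key x hx y hy hlt
      have e1 : |x - y| = y - x := by rw [abs_sub_comm]; exact abs_of_pos (by linarith)
      rw [e1]
      exact this
    · have := key y hy x hx hgt
      have e1 : |x - y| = x - y := abs_of_pos (by linarith)
      rw [e1, abs_sub_comm]
      exact this
  rw [holderNorm, holderNorm]
  have part1 : sSup ((fun x => |N x|) '' Icc (0:ℝ) L) ≤ M := by
    apply Real.sSup_le _ hM0
    rintro a ⟨x, hx, rfl⟩
    exact supN x hx
  have part2 : sSup {c : ℝ | ∃ x ∈ Icc (0:ℝ) L, ∃ y ∈ Icc (0:ℝ) L, x ≠ y ∧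
      c = |N x - N y| / |x - y| ^ s₁} ≤ C' := by
    apply Real.sSup_le _ hC'0
    rintro c ⟨x, hx, y, hy, hxy, rfl⟩
    exact keyabs x hx y hy hxy
  have expand : (1 + 4/(1-s₁) + 4/L^s₁) * (M + S)
      = M + S + 4/(1-s₁)*M + 4/(1-s₁)*S + 4/L^s₁*M + 4/L^s₁*S := by ring
  have p1 : 0 ≤ 4/(1-s₁)*M := by positivity
  have p2 : 0 ≤ 4/L^s₁*S := by positivity
  rw [hC'_def] at part2
  linarith
end

section
/- Let ε > 0, let h ∈ C([0,L]) be nonnegative, let H ∈ C²([0,L]) be the solution of H − ε² ∂ₓ²H = h on (0,L) with ∂ₓH(0) = ∂ₓH(L) = 0, let g ∈ C([0,L]), and let ξ ∈ C²([0,L]) with ξ(0) = ξ(L) = 0 satisfy ξ − ε² ∂ₓ²(H ξ) = g on (0,L). Then ‖ξ‖_{L₁(0,L)} ≤ ‖g‖_{L₁(0,L)}. -/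
open MeasureTheory Set

lemma sqrt_aux_pos (δ t : ℝ) (hδ : 0 < δ) : 0 < Real.sqrt (t^2 + δ^2) :=
  Real.sqrt_pos.mpr (by positivity)

lemma sq_sqrt_aux (δ t : ℝ) (hδ : 0 < δ) : Real.sqrt (t^2 + δ^2) ^ 2 = t^2 + δ^2 :=
  Real.sq_sqrt (by positivity)

lemma hasDerivAt_sqrt_aux (δ t : ℝ) (hδ : 0 < δ) :
    HasDerivAt (fun s => Real.sqrt (s^2 + δ^2)) (t / Real.sqrt (t^2 + δ^2)) t := by
  have h1 : HasDerivAt (fun s : ℝ => s^2 + δ^2) (2 * t) t := by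
    simpa using ((hasDerivAt_pow 2 t).add_const (δ^2))
  have h2 := (Real.hasDerivAt_sqrt (x := t^2 + δ^2) (by positivity)).comp t h1
  refine h2.congr_deriv ?_
  field_simp

lemma hasDerivAt_beta (δ t : ℝ) (hδ : 0 < δ) :
    HasDerivAt (fun s => s / Real.sqrt (s^2 + δ^2))
      (δ^2 / (Real.sqrt (t^2 + δ^2))^3) t := by
  have hs := sqrt_aux_pos δ t hδ
  have h := (hasDerivAt_id t).div (hasDerivAt_sqrt_aux δ t hδ) (ne_of_gt hs)
  refine h.congr_deriv ?_
  have h2 := sq_sqrt_aux δ t hδ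
  field_simp
  rw [h2, id_eq]
  ring

lemma hasDerivAt_gamma (δ t : ℝ) (hδ : 0 < δ) :
    HasDerivAt (fun s => δ - δ^2 / Real.sqrt (s^2 + δ^2))
      (t * (δ^2 / (Real.sqrt (t^2 + δ^2))^3)) t := by
  have hs := sqrt_aux_pos δ t hδ
  have h := ((hasDerivAt_sqrt_aux δ t hδ).inv (ne_of_gt hs)).const_mul (δ^2)
  have h' := h.const_sub δ
  refine h'.congr_deriv ?_
  have h2 := sq_sqrt_aux δ t hδ
  field_simp

lemma beta_abs_le_one (δ t : ℝ) (hδ : 0 < δ) : |t / Real.sqrt (t^2 + δ^2)| ≤ 1 := by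
  have hs := sqrt_aux_pos δ t hδ
  rw [abs_div, abs_of_pos hs, div_le_one hs]
  calc |t| = Real.sqrt (t^2) := (Real.sqrt_sq_eq_abs t).symm
  _ ≤ Real.sqrt (t^2 + δ^2) := Real.sqrt_le_sqrt (by nlinarith)

lemma mul_beta_ge (δ t : ℝ) (hδ : 0 < δ) : |t| - δ ≤ t * (t / Real.sqrt (t^2 + δ^2)) := by
  have hs := sqrt_aux_pos δ t hδ
  have h2 := sq_sqrt_aux δ t hδ
  have hle : Real.sqrt (t^2 + δ^2) ≤ |t| + δ := by
    rw [show t^2 + δ^2 = |t|^2 + δ^2 by rw [sq_abs]]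
    calc Real.sqrt (|t|^2 + δ^2) ≤ Real.sqrt ((|t| + δ)^2) := by
          apply Real.sqrt_le_sqrt; nlinarith [abs_nonneg t]
    _ = |t| + δ := Real.sqrt_sq (by positivity)
  have ht2 : t * (t / Real.sqrt (t^2 + δ^2)) = t^2 / Real.sqrt (t^2 + δ^2) := by
    field_simp
  rw [ht2, le_div_iff₀ hs]
  have key : (|t| - δ) * Real.sqrt (t^2 + δ^2) ≤ t^2 := by
    rcases le_or_gt |t| δ with hc | hc
    · nlinarith [sq_nonneg t, hs.le]
    · calc (|t| - δ) * Real.sqrt (t^2 + δ^2) ≤ (|t| - δ) * (|t| + δ) := by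
            apply mul_le_mul_of_nonneg_left hle (by linarith)
      _ = t^2 - δ^2 := by rw [← sq_abs t]; ring
      _ ≤ t^2 := by nlinarith
  exact key

lemma gamma_bounds (δ t : ℝ) (hδ : 0 < δ) :
    0 ≤ δ - δ^2 / Real.sqrt (t^2 + δ^2) ∧ δ - δ^2 / Real.sqrt (t^2 + δ^2) ≤ δ := by
  have hs := sqrt_aux_pos δ t hδ
  have hδle : δ ≤ Real.sqrt (t^2 + δ^2) := by
    have := Real.sqrt_le_sqrt (show δ^2 ≤ t^2 + δ^2 by nlinarith)
    rwa [Real.sqrt_sq hδ.le] at this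
  constructor
  · have : δ^2 / Real.sqrt (t^2 + δ^2) ≤ δ := by
      rw [div_le_iff₀ hs]; nlinarith
    linarith
  · have : 0 ≤ δ^2 / Real.sqrt (t^2 + δ^2) := by positivity
    linarith

lemma gamma_zero (δ : ℝ) (hδ : 0 < δ) : δ - δ^2 / Real.sqrt (0^2 + δ^2) = 0 := by
  have : Real.sqrt (0^2 + δ^2) = δ := by
    rw [show (0:ℝ)^2 + δ^2 = δ^2 by ring, Real.sqrt_sq hδ.le]
  rw [this]; field_simp; ring

lemma beta_zero (δ : ℝ) (hδ : 0 < δ) : (0:ℝ) / Real.sqrt (0^2 + δ^2) = 0 := by simp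


lemma neg_of_div_neg {a d : ℝ} (hd : 0 < d) (hh : a / d < 0) : a < 0 := by
  by_contra hc; push_neg at hc
  exact absurd (div_nonneg hc hd.le) (not_le.mpr hh)

lemma pos_of_div_pos {a d : ℝ} (hd : 0 < d) (hh : 0 < a / d) : 0 < a := by
  by_contra hc; push_neg at hc
  exact absurd (div_nonpos_of_nonpos_of_nonneg hc hd.le) (not_le.mpr hh)

lemma H_nonneg_aux (L ε : ℝ) (hL : 0 < L) (hε : 0 < ε) (h H : ℝ → ℝ)
    (hnn : ∀ x ∈ Icc (0:ℝ) L, 0 ≤ h x)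
    (hHreg : ∀ x ∈ Icc (0:ℝ) L, DifferentiableAt ℝ H x ∧ DifferentiableAt ℝ (deriv H) x)
    (hHeq : ∀ x ∈ Ioo (0:ℝ) L, H x - ε ^ 2 * deriv (deriv H) x = h x)
    (hHbc : deriv H 0 = 0 ∧ deriv H L = 0) :
    ∀ x ∈ Icc (0:ℝ) L, 0 ≤ H x := by
  have hε2 : (0:ℝ) < ε ^ 2 := by positivity
  have HC : ContinuousOn H (Icc 0 L) :=
    fun x hx => ((hHreg x hx).1.continuousAt).continuousWithinAt
  have HC' : ContinuousOn (deriv H) (Icc 0 L) :=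
    fun x hx => ((hHreg x hx).2.continuousAt).continuousWithinAt
  by_contra hcon
  push_neg at hcon
  obtain ⟨z, hz, hzneg⟩ := hcon
  obtain ⟨x₀, hx₀, hmin⟩ :=
    isCompact_Icc.exists_isMinOn (α := ℝ) ⟨0, left_mem_Icc.mpr hL.le⟩ HC
  have hneg : H x₀ < 0 := lt_of_le_of_lt (hmin hz) hzneg
  -- key step A : at any interior point where deriv H vanishes and H < 0 near it...
  -- Case analysis on x₀
  rcases eq_or_lt_of_le hx₀.1 with h0 | h0
  · -- x₀ = 0
    have hH0 : H 0 < 0 := by rwa [← h0] at hneg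
    have hc0 : ContinuousAt H 0 := (hHreg 0 (left_mem_Icc.mpr hL.le)).1.continuousAt
    have hev : ∀ᶠ x in nhds (0:ℝ), H x < 0 := hc0.tendsto.eventually_lt_const hH0
    obtain ⟨r, hr, hball⟩ := Metric.eventually_nhds_iff.mp hev
    set δ₀ := min (r/2) (L/2) with hδ₀def
    have hδ₀pos : 0 < δ₀ := lt_min (by linarith) (by linarith)
    have hδ₀L : δ₀ < L := lt_of_le_of_lt (min_le_right _ _) (by linarith)
    have hHneg : ∀ x ∈ Icc (0:ℝ) δ₀, H x < 0 := by
      intro x hx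
      apply hball
      rw [Real.dist_eq, sub_zero, abs_of_nonneg hx.1]
      exact lt_of_le_of_lt hx.2 (lt_of_le_of_lt (min_le_left _ _) (by linarith))
    -- deriv H < 0 on (0, δ₀]
    have hdneg : ∀ c ∈ Ioc (0:ℝ) δ₀, deriv H c < 0 := by
      intro c hc
      have hsub : Icc (0:ℝ) c ⊆ Icc 0 L :=
        Icc_subset_Icc le_rfl (le_trans hc.2 hδ₀L.le)
      obtain ⟨m, hm, hslope⟩ := exists_deriv_eq_slope (deriv H) hc.1
        (HC'.mono hsub)
        (fun x hx => ((hHreg x (hsub (mem_Icc.mpr ⟨hx.1.le, hx.2.le⟩))).2).differentiableWithinAt)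
      have hmL : m ∈ Ioo (0:ℝ) L := ⟨hm.1, lt_of_lt_of_le hm.2 (le_trans hc.2 hδ₀L.le)⟩
      have heq := hHeq m hmL
      have hHm : H m < 0 := hHneg m ⟨hm.1.le, le_trans hm.2.le hc.2⟩
      have hhm : 0 ≤ h m := hnn m ⟨hmL.1.le, hmL.2.le⟩
      have hdd : deriv (deriv H) m < 0 := by nlinarith
      rw [hHbc.1] at hslope
      have : (deriv H c - 0) / (c - 0) < 0 := hslope ▸ hdd
      have hcpos : 0 < c - 0 := by simpa using hc.1
      have := neg_of_div_neg hcpos this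
      linarith
    -- now MVT for H on [0, δ₀]
    obtain ⟨c, hc, hslope⟩ := exists_deriv_eq_slope H hδ₀pos
      (HC.mono (Icc_subset_Icc le_rfl hδ₀L.le))
      (fun x hx => ((hHreg x ⟨hx.1.le, le_trans hx.2.le hδ₀L.le⟩).1).differentiableWithinAt)
    have hcneg : deriv H c < 0 := hdneg c ⟨hc.1, hc.2.le⟩
    have : H δ₀ - H 0 < 0 := by
      have hd : 0 < δ₀ - 0 := by simpa using hδ₀pos
      rw [hslope] at hcneg
      have := neg_of_div_neg hd hcneg
      linarith
    have hmin' : H x₀ ≤ H δ₀ := hmin ⟨hδ₀pos.le, hδ₀L.le⟩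
    rw [← h0] at hmin'
    linarith
  rcases eq_or_lt_of_le hx₀.2 with hL0 | hL0
  · -- x₀ = L
    have hHL : H L < 0 := by rwa [hL0] at hneg
    have hcL : ContinuousAt H L := (hHreg L (right_mem_Icc.mpr hL.le)).1.continuousAt
    have hev : ∀ᶠ x in nhds L, H x < 0 := hcL.tendsto.eventually_lt_const hHL
    obtain ⟨r, hr, hball⟩ := Metric.eventually_nhds_iff.mp hev
    set δ₀ := min (r/2) (L/2) with hδ₀def
    have hδ₀pos : 0 < δ₀ := lt_min (by linarith) (by linarith)
    have hδ₀L : δ₀ < L := lt_of_le_of_lt (min_le_right _ _) (by linarith)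
    have hHneg : ∀ x ∈ Icc (L - δ₀) L, H x < 0 := by
      intro x hx
      apply hball
      rw [Real.dist_eq, abs_of_nonpos (by linarith [hx.2])]
      have : L - δ₀ ≤ x := hx.1
      have hδ₀r : δ₀ < r := lt_of_le_of_lt (min_le_left _ _) (by linarith)
      linarith
    have hdpos : ∀ c ∈ Ico (L - δ₀) L, 0 < deriv H c := by
      intro c hc
      have hsub : Icc c L ⊆ Icc 0 L :=
        Icc_subset_Icc (by linarith [hc.1]) le_rfl
      obtain ⟨m, hm, hslope⟩ := exists_deriv_eq_slope (deriv H) hc.2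
        (HC'.mono hsub)
        (fun x hx => ((hHreg x (hsub (mem_Icc.mpr ⟨hx.1.le, hx.2.le⟩))).2).differentiableWithinAt)
      have hmL : m ∈ Ioo (0:ℝ) L := ⟨by linarith [hm.1, hc.1], hm.2⟩
      have heq := hHeq m hmL
      have hHm : H m < 0 := hHneg m ⟨by linarith [hm.1, hc.1], hm.2.le⟩
      have hhm : 0 ≤ h m := hnn m ⟨hmL.1.le, hmL.2.le⟩
      have hdd : deriv (deriv H) m < 0 := by nlinarith
      rw [hHbc.2] at hslope
      have : (0 - deriv H c) / (L - c) < 0 := hslope ▸ hdd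
      have hcpos : 0 < L - c := by linarith [hc.2]
      have := neg_of_div_neg hcpos this
      linarith
    obtain ⟨c, hc, hslope⟩ := exists_deriv_eq_slope H (show L - δ₀ < L by linarith)
      (HC.mono (Icc_subset_Icc (by linarith) le_rfl))
      (fun x hx => ((hHreg x ⟨by linarith [hx.1.le], hx.2.le⟩).1).differentiableWithinAt)
    have hcpos : 0 < deriv H c := hdpos c ⟨hc.1.le, hc.2⟩
    have : 0 < H L - H (L - δ₀) := by
      have hd : 0 < L - (L - δ₀) := by linarith
      rw [hslope] at hcpos
      have := pos_of_div_pos hd hcpos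
      linarith
    have hmin' : H x₀ ≤ H (L - δ₀) := hmin ⟨by linarith, by linarith⟩
    rw [hL0] at hmin'
    linarith
  · -- interior
    have hx₀i : x₀ ∈ Ioo (0:ℝ) L := ⟨h0, hL0⟩
    have hmem : Icc (0:ℝ) L ∈ nhds x₀ := Icc_mem_nhds h0 hL0
    have hlocal : IsLocalMin H x₀ := hmin.isLocalMin hmem
    have hd0 : deriv H x₀ = 0 := hlocal.deriv_eq_zero
    have hdd : 0 ≤ deriv (deriv H) x₀ := by
      by_contra hK
      push_neg at hK
      have T := ((hHreg x₀ ⟨h0.le, hL0.le⟩).2).hasDerivAt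
      rw [hasDerivAt_iff_tendsto_slope] at T
      have ev : ∀ᶠ x in nhdsWithin x₀ {x₀}ᶜ, slope (deriv H) x₀ x < 0 :=
        T.eventually_lt_const hK
      have ev' : ∀ᶠ x in nhdsWithin x₀ (Ioi x₀), slope (deriv H) x₀ x < 0 :=
        ev.filter_mono (nhdsWithin_mono x₀ (fun x hx => ne_of_gt hx))
      obtain ⟨u, hu, hsub⟩ := mem_nhdsGT_iff_exists_Ioo_subset.mp ev'
      -- pick b in (x₀, min u L)
      set b := min u ((x₀ + L)/2) with hbdef
      have hub : x₀ < b := lt_min (by exact hu) (by linarith [hx₀i.2])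
      have hbL : b < L := lt_of_le_of_lt (min_le_right _ _) (by linarith [hx₀i.2])
      obtain ⟨c, hc, hslope⟩ := exists_deriv_eq_slope H hub
        (HC.mono (Icc_subset_Icc h0.le hbL.le))
        (fun x hx => ((hHreg x ⟨by linarith [hx.1, h0], by linarith [hx.2, hbL]⟩).1).differentiableWithinAt)
      have hcu : c ∈ Ioo x₀ u := ⟨hc.1, lt_of_lt_of_le hc.2 (min_le_left _ _)⟩
      have hcneg : slope (deriv H) x₀ c < 0 := hsub hcu
      rw [slope_def_field, hd0, sub_zero] at hcneg
      have hcpos : 0 < c - x₀ := by linarith [hc.1]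
      have hdHc : deriv H c < 0 := neg_of_div_neg hcpos hcneg
      -- but MVT slope must be ≥ 0 since x₀ is a min
      have hHb : H x₀ ≤ H b := hmin ⟨by linarith, hbL.le⟩
      rw [hslope] at hdHc
      have hb0 : 0 < b - x₀ := by linarith
      have := neg_of_div_neg hb0 hdHc
      linarith
    have heq := hHeq x₀ hx₀i
    have hh : 0 ≤ h x₀ := hnn x₀ ⟨h0.le, hL0.le⟩
    nlinarith
/-- `L₁` contraction for the degenerate resolvent:
if `H - ε²∂ₓ²H = h` with Neumann conditions (`h ≥ 0` continuous), `ξ(0) = ξ(L) = 0`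
and `ξ - ε²∂ₓ²(Hξ) = g` on `(0,L)`, then `‖ξ‖_{L₁(0,L)} ≤ ‖g‖_{L₁(0,L)}`. -/
theorem L1_contraction_degenerate_resolvent
    (L ε : ℝ) (hL : 0 < L) (hε : 0 < ε)
    (h H g ξ : ℝ → ℝ)
    (hcont : ContinuousOn h (Icc 0 L))
    (hnn : ∀ x ∈ Icc (0:ℝ) L, 0 ≤ h x)
    (hHreg : ∀ x ∈ Icc (0:ℝ) L, DifferentiableAt ℝ H x ∧ DifferentiableAt ℝ (deriv H) x)
    (hHcont : ContinuousOn (deriv (deriv H)) (Icc 0 L))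
    (hHeq : ∀ x ∈ Ioo (0:ℝ) L, H x - ε ^ 2 * deriv (deriv H) x = h x)
    (hHbc : deriv H 0 = 0 ∧ deriv H L = 0)
    (hgcont : ContinuousOn g (Icc 0 L))
    (hξreg : ∀ x ∈ Icc (0:ℝ) L, DifferentiableAt ℝ ξ x ∧ DifferentiableAt ℝ (deriv ξ) x)
    (hξreg' : ∀ x ∈ Icc (0:ℝ) L, DifferentiableAt ℝ (fun y => H y * ξ y) x ∧
      DifferentiableAt ℝ (deriv (fun y => H y * ξ y)) x)
    (hξcont : ContinuousOn (deriv (deriv (fun y => H y * ξ y))) (Icc 0 L))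
    (hξbc : ξ 0 = 0 ∧ ξ L = 0)
    (hξeq : ∀ x ∈ Ioo (0:ℝ) L, ξ x - ε ^ 2 * deriv (deriv (fun y => H y * ξ y)) x = g x) :
    (∫ x in (0:ℝ)..L, |ξ x|) ≤ ∫ x in (0:ℝ)..L, |g x| := by
  obtain ⟨hξ0, hξL⟩ := hξbc
  set w : ℝ → ℝ := fun y => H y * ξ y with hwdef
  have hLle : (0:ℝ) ≤ L := hL.le
  have huIcc : uIcc (0:ℝ) L = Icc 0 L := uIcc_of_le hLle
  have hHnn : ∀ x ∈ Icc (0:ℝ) L, 0 ≤ H x := H_nonneg_aux L ε hL hε h H hnn hHreg hHeq hHbc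
  have cξ : ContinuousOn ξ (Icc 0 L) :=
    fun x hx => ((hξreg x hx).1.continuousAt).continuousWithinAt
  have cξ' : ContinuousOn (deriv ξ) (Icc 0 L) :=
    fun x hx => ((hξreg x hx).2.continuousAt).continuousWithinAt
  have cH : ContinuousOn H (Icc 0 L) :=
    fun x hx => ((hHreg x hx).1.continuousAt).continuousWithinAt
  have cH' : ContinuousOn (deriv H) (Icc 0 L) :=
    fun x hx => ((hHreg x hx).2.continuousAt).continuousWithinAt
  have cw' : ContinuousOn (deriv w) (Icc 0 L) :=
    fun x hx => ((hξreg' x hx).2.continuousAt).continuousWithinAt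
  have cw'' : ContinuousOn (deriv (deriv w)) (Icc 0 L) := hξcont
  have cH'' : ContinuousOn (deriv (deriv H)) (Icc 0 L) := hHcont
  have cg : ContinuousOn g (Icc 0 L) := hgcont
  have II : ∀ f : ℝ → ℝ, ContinuousOn f (Icc 0 L) → IntervalIntegrable f volume 0 L :=
    fun f hf => ContinuousOn.intervalIntegrable (by rwa [huIcc])
  have hwderiv : ∀ x ∈ Icc (0:ℝ) L, deriv w x = deriv H x * ξ x + H x * deriv ξ x :=
    fun x hx => deriv_mul (hHreg x hx).1 (hξreg x hx).1
  have key : ∀ δ : ℝ, 0 < δ →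
      (∫ x in (0:ℝ)..L, |ξ x|) ≤ (∫ x in (0:ℝ)..L, |g x|)
        + δ * (L + ∫ x in (0:ℝ)..L, |H x|) := by
    intro δ hδ
    set S : ℝ → ℝ := fun x => Real.sqrt ((ξ x)^2 + δ^2) with hS
    set φ : ℝ → ℝ := fun x => ξ x / S x with hφ
    set φ' : ℝ → ℝ := fun x => δ^2 / (S x)^3 * deriv ξ x with hφ'
    set Γ : ℝ → ℝ := fun x => δ - δ^2 / S x with hΓ
    set Γ' : ℝ → ℝ := fun x => ξ x * (δ^2 / (S x)^3) * deriv ξ x with hΓ'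
    have hSpos : ∀ x, 0 < S x := fun x => sqrt_aux_pos δ (ξ x) hδ
    have cS : ContinuousOn S (Icc 0 L) :=
      Real.continuous_sqrt.comp_continuousOn ((cξ.pow 2).add continuousOn_const)
    have cφ : ContinuousOn φ (Icc 0 L) := cξ.div cS (fun x _ => (hSpos x).ne')
    have cφ' : ContinuousOn φ' (Icc 0 L) :=
      (continuousOn_const.div (cS.pow 3) (fun x _ => pow_ne_zero 3 (hSpos x).ne')).mul cξ'
    have cΓ : ContinuousOn Γ (Icc 0 L) :=
      continuousOn_const.sub (continuousOn_const.div cS (fun x _ => (hSpos x).ne'))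
    have cΓ' : ContinuousOn Γ' (Icc 0 L) :=
      ((cξ.mul (continuousOn_const.div (cS.pow 3)
        (fun x _ => pow_ne_zero 3 (hSpos x).ne'))).mul cξ')
    have hφd : ∀ x ∈ Icc (0:ℝ) L, HasDerivAt φ (φ' x) x := by
      intro x hx
      have hcomp := (hasDerivAt_beta δ (ξ x) hδ).comp x (hξreg x hx).1.hasDerivAt
      simpa [hφ, hφ', hS, Function.comp_def] using hcomp
    have hΓd : ∀ x ∈ Icc (0:ℝ) L, HasDerivAt Γ (Γ' x) x := by
      intro x hx
      have hcomp := (hasDerivAt_gamma δ (ξ x) hδ).comp x (hξreg x hx).1.hasDerivAt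
      simpa [hΓ, hΓ', hS, Function.comp_def, mul_assoc] using hcomp
    have hw'd : ∀ x ∈ Icc (0:ℝ) L, HasDerivAt (deriv w) (deriv (deriv w) x) x :=
      fun x hx => (hξreg' x hx).2.hasDerivAt
    have hH'd : ∀ x ∈ Icc (0:ℝ) L, HasDerivAt (deriv H) (deriv (deriv H) x) x :=
      fun x hx => (hHreg x hx).2.hasDerivAt
    have hφ0 : φ 0 = 0 := by simp [hφ, hξ0]
    have hφL : φ L = 0 := by simp [hφ, hξL]
    have hΓ0 : Γ 0 = 0 := by
      have := gamma_zero δ hδ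
      simp only [hΓ, hS, hξ0]
      simpa using this
    have hΓL : Γ L = 0 := by
      have := gamma_zero δ hδ
      simp only [hΓ, hS, hξL]
      simpa using this
    -- integration by parts 1
    have ibp1 : ∫ x in (0:ℝ)..L, φ x * deriv (deriv w) x
        = φ L * deriv w L - φ 0 * deriv w 0 - ∫ x in (0:ℝ)..L, φ' x * deriv w x :=
      intervalIntegral.integral_mul_deriv_eq_deriv_mul
        (fun x hx => hφd x (huIcc ▸ hx)) (fun x hx => hw'd x (huIcc ▸ hx))
        (II _ cφ') (II _ cw'')
    have ibp1' : (∫ x in (0:ℝ)..L, φ x * deriv (deriv w) x)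
        = -∫ x in (0:ℝ)..L, φ' x * deriv w x := by
      rw [ibp1, hφ0, hφL]; ring
    -- integration by parts 2
    have ibp2 : ∫ x in (0:ℝ)..L, deriv H x * Γ' x
        = deriv H L * Γ L - deriv H 0 * Γ 0 - ∫ x in (0:ℝ)..L, deriv (deriv H) x * Γ x :=
      intervalIntegral.integral_mul_deriv_eq_deriv_mul
        (fun x hx => hH'd x (huIcc ▸ hx)) (fun x hx => hΓd x (huIcc ▸ hx))
        (II _ cH'') (II _ cΓ')
    have ibp2' : (∫ x in (0:ℝ)..L, deriv H x * Γ' x)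
        = -∫ x in (0:ℝ)..L, deriv (deriv H) x * Γ x := by
      rw [ibp2, hHbc.1, hHbc.2]; ring
    -- expansion of φ' * w'
    have expand : (∫ x in (0:ℝ)..L, φ' x * deriv w x)
        = (∫ x in (0:ℝ)..L, deriv H x * Γ' x)
          + ∫ x in (0:ℝ)..L, H x * (δ^2 / (S x)^3 * (deriv ξ x)^2) := by
      have cB : ContinuousOn (fun x => H x * (δ^2 / (S x)^3 * (deriv ξ x)^2)) (Icc 0 L) := by
        apply ContinuousOn.mul cH
        apply ContinuousOn.mul _ (cξ'.pow 2)
        exact continuousOn_const.div (cS.pow 3) (fun x _ => pow_ne_zero 3 (hSpos x).ne')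
      have cA : ContinuousOn (fun x => deriv H x * Γ' x) (Icc 0 L) := cH'.mul cΓ'
      rw [← intervalIntegral.integral_add (II _ cA) (II _ cB)]
      apply intervalIntegral.integral_congr
      intro x hx
      rw [huIcc] at hx
      simp only [hφ', hΓ']
      rw [hwderiv x hx]
      ring
    have hBnn : 0 ≤ ∫ x in (0:ℝ)..L, H x * (δ^2 / (S x)^3 * (deriv ξ x)^2) :=
      intervalIntegral.integral_nonneg hLle
        (fun u hu => mul_nonneg (hHnn u hu) (by positivity))
    -- bound the H'' term
    have hICbound : (ε^2 * ∫ x in (0:ℝ)..L, deriv (deriv H) x * Γ x)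
        ≤ δ * ∫ x in (0:ℝ)..L, |H x| := by
      rw [← intervalIntegral.integral_const_mul, ← intervalIntegral.integral_const_mul]
      apply intervalIntegral.integral_mono_ae_restrict hLle
        (II _ (continuousOn_const.mul (cH''.mul cΓ))) (II _ (continuousOn_const.mul cH.abs))
      have h0L : (volume.restrict (Icc (0:ℝ) L)) ({0, L} : Set ℝ) = 0 := by
        apply le_antisymm _ zero_le
        calc (volume.restrict (Icc (0:ℝ) L)) ({0, L} : Set ℝ)
            ≤ volume ({0, L} : Set ℝ) := Measure.restrict_apply_le _ _
        _ = 0 := (Set.toFinite _).measure_zero volume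
      filter_upwards [compl_mem_ae_iff.mpr h0L, ae_restrict_mem measurableSet_Icc]
        with x hx hxI
      have hx' : x ≠ 0 ∧ x ≠ L := by
        simp only [Set.mem_compl_iff, Set.mem_insert_iff, Set.mem_singleton_iff] at hx
        push_neg at hx
        exact hx
      have hxo : x ∈ Ioo (0:ℝ) L :=
        ⟨lt_of_le_of_ne hxI.1 (Ne.symm hx'.1), lt_of_le_of_ne hxI.2 hx'.2⟩
      have heq := hHeq x hxo
      have hh : 0 ≤ h x := hnn x hxI
      obtain ⟨hg0, hgδ⟩ := gamma_bounds δ (ξ x) hδ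
      have hΓx0 : 0 ≤ Γ x := by simpa [hΓ, hS] using hg0
      have hΓxδ : Γ x ≤ δ := by simpa [hΓ, hS] using hgδ
      have h1 : ε^2 * deriv (deriv H) x ≤ |H x| := by
        have := le_abs_self (H x); linarith
      calc ε^2 * (deriv (deriv H) x * Γ x) = (ε^2 * deriv (deriv H) x) * Γ x := by ring
      _ ≤ |H x| * Γ x := mul_le_mul_of_nonneg_right h1 hΓx0
      _ ≤ |H x| * δ := mul_le_mul_of_nonneg_left hΓxδ (abs_nonneg _)
      _ = δ * |H x| := mul_comm _ _
    -- the weak formulation of the equation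
    have eq1 : (∫ x in (0:ℝ)..L, φ x * ξ x)
        - ε^2 * (∫ x in (0:ℝ)..L, φ x * deriv (deriv w) x)
        = ∫ x in (0:ℝ)..L, φ x * g x := by
      rw [← intervalIntegral.integral_const_mul,
        ← intervalIntegral.integral_sub (II (fun x => φ x * ξ x) (cφ.mul cξ))
          (II (fun x => ε^2 * (φ x * deriv (deriv w) x)) (continuousOn_const.mul (cφ.mul cw'')))]
      apply intervalIntegral.integral_congr_ae
      have hLnull : (volume : Measure ℝ) {L} = 0 := measure_singleton L
      filter_upwards [compl_mem_ae_iff.mpr hLnull] with x hx hmem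
      rw [Set.uIoc_of_le hLle] at hmem
      have hxo : x ∈ Ioo (0:ℝ) L :=
        ⟨hmem.1, lt_of_le_of_ne hmem.2 (Set.mem_compl_singleton_iff.mp hx)⟩
      have heq := hξeq x hxo
      have : ξ x - ε ^ 2 * deriv (deriv w) x = g x := heq
      calc φ x * ξ x - ε ^ 2 * (φ x * deriv (deriv w) x)
          = φ x * (ξ x - ε ^ 2 * deriv (deriv w) x) := by ring
      _ = φ x * g x := by rw [this]
    -- upper bound for ∫ φ g
    have I3bound : (∫ x in (0:ℝ)..L, φ x * g x) ≤ ∫ x in (0:ℝ)..L, |g x| := by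
      apply intervalIntegral.integral_mono_on hLle (II _ (cφ.mul cg)) (II _ cg.abs)
      intro x hx
      have hb : |φ x| ≤ 1 := by simpa [hφ, hS] using beta_abs_le_one δ (ξ x) hδ
      calc φ x * g x ≤ |φ x * g x| := le_abs_self _
      _ = |φ x| * |g x| := abs_mul _ _
      _ ≤ 1 * |g x| := mul_le_mul_of_nonneg_right hb (abs_nonneg _)
      _ = |g x| := one_mul _
    -- lower bound for ∫ φ ξ
    have lower : (∫ x in (0:ℝ)..L, |ξ x|) - δ * L ≤ ∫ x in (0:ℝ)..L, φ x * ξ x := by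
      have hmono : (∫ x in (0:ℝ)..L, (|ξ x| - δ)) ≤ ∫ x in (0:ℝ)..L, φ x * ξ x := by
        apply intervalIntegral.integral_mono_on hLle
          (II (fun x => |ξ x| - δ) (cξ.abs.sub continuousOn_const)) (II (fun x => φ x * ξ x) (cφ.mul cξ))
        intro x hx
        have := mul_beta_ge δ (ξ x) hδ
        have hrw : φ x * ξ x = ξ x * (ξ x / Real.sqrt ((ξ x)^2 + δ^2)) := by
          simp [hφ, hS]; ring
        rw [hrw]
        exact this
      rw [intervalIntegral.integral_sub (II _ cξ.abs) intervalIntegrable_const,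
        intervalIntegral.integral_const, smul_eq_mul] at hmono
      calc (∫ x in (0:ℝ)..L, |ξ x|) - δ * L
          = (∫ x in (0:ℝ)..L, |ξ x|) - (L - 0) * δ := by ring
      _ ≤ _ := hmono
    -- assemble
    have e2 : (∫ x in (0:ℝ)..L, φ x * deriv (deriv w) x)
        = (∫ x in (0:ℝ)..L, deriv (deriv H) x * Γ x)
          - ∫ x in (0:ℝ)..L, H x * (δ^2 / (S x)^3 * (deriv ξ x)^2) := by
      rw [ibp1', expand, ibp2']; ring
    have hε2 : (0:ℝ) < ε^2 := by positivity
    nlinarith [mul_le_mul_of_nonneg_left hBnn (le_of_lt hε2)]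
  have hHint : 0 ≤ ∫ x in (0:ℝ)..L, |H x| :=
    intervalIntegral.integral_nonneg hLle (fun u _ => abs_nonneg _)
  refine le_of_forall_pos_le_add fun η hη => ?_
  have hCpos : 0 < L + ∫ x in (0:ℝ)..L, |H x| := by linarith
  have hk := key (η / (L + ∫ x in (0:ℝ)..L, |H x|)) (by positivity)
  rwa [div_mul_cancel₀ _ (ne_of_gt hCpos)] at hk
end

section
/- Let U be an open bounded subset of ℝᵐ, m ≥ 1, let (vₙ)ₙ be a sequence in L₁(U) and (wₙ)ₙ a sequence in L_∞(U), and let v ∈ L₁(U), w ∈ L_∞(U). Assume vₙ converges to v weakly in L₁(U), and that there is C > 0 with |wₙ(x)| ≤ C for all n and a.e. x ∈ U and wₙ(x) → w(x) for a.e. x ∈ U. Then limₙ ∫_U |vₙ| |wₙ − w| dx = 0 and the products vₙ wₙ converge to v w weakly in L₁(U). -/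
open MeasureTheory Set Filter
open scoped ENNReal NNReal
set_option maxHeartbeats 1000000
set_option synthInstance.maxHeartbeats 1000000

variable {α : Type*} [MeasurableSpace α] {μ : Measure α}

lemma absCont {f : α → ℝ} (hf : Integrable f μ) {ε : ℝ} (hε : 0 < ε) :
    ∃ δ > 0, ∀ s : Set α, MeasurableSet s → μ s ≤ ENNReal.ofReal δ →
      ∫ x in s, |f x| ∂μ ≤ ε := by
  obtain ⟨δ, hδpos, hδ⟩ := (memLp_one_iff_integrable.2 hf).eLpNorm_indicator_le le_rfl
    (by simp) hε
  refine ⟨δ, hδpos, fun s hs hμs => ?_⟩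
  have h1 := hδ s hs hμs
  rw [eLpNorm_indicator_eq_eLpNorm_restrict hs, eLpNorm_one_eq_lintegral_enorm] at h1
  have h2 : ENNReal.ofReal (∫ x in s, ‖f x‖ ∂μ) = ∫⁻ x in s, ‖f x‖ₑ ∂μ :=
    ofReal_integral_norm_eq_lintegral_enorm hf.restrict
  have h4 : ∫ x in s, ‖f x‖ ∂μ ≤ ε :=
    (ENNReal.ofReal_le_ofReal_iff hε.le).1 (h2 ▸ h1)
  simpa [Real.norm_eq_abs] using h4

lemma vhs_ui [IsFiniteMeasure μ] (f : ℕ → α → ℝ) (hf : ∀ n, Integrable (f n) μ)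
    (hcauchy : ∀ A : Set α, MeasurableSet A → CauchySeq (fun n => ∫ x in A, f n x ∂μ))
    {ε : ℝ} (hε : 0 < ε) :
    ∃ δ > 0, ∀ n, ∀ s : Set α, MeasurableSet s → μ s ≤ ENNReal.ofReal δ →
      ∫ x in s, |f n x| ∂μ ≤ ε := by
  classical
  haveI : Fact ((1:ℝ≥0∞) ≤ 1) := ⟨le_rfl⟩
  set S : Set (Lp ℝ 1 μ) := {g | ∀ᵐ x ∂μ, (g : α → ℝ) x = 0 ∨ (g : α → ℝ) x = 1} with hSdef
  have hS_closed : IsClosed S := by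
    have hcl : IsClosed ({0, 1} : Set ℝ) := (Set.toFinite _).isClosed
    apply IsSeqClosed.isClosed
    intro u g hu hug
    have htm : TendstoInMeasure μ (fun n => (u n : α → ℝ)) atTop (g : α → ℝ) :=
      tendstoInMeasure_of_tendsto_Lp hug
    obtain ⟨ns, -, hns⟩ := htm.exists_seq_tendsto_ae
    have hall : ∀ᵐ x ∂μ, ∀ n, (u n : α → ℝ) x = 0 ∨ (u n : α → ℝ) x = 1 := ae_all_iff.2 hu
    filter_upwards [hns, hall] with x hx hallx
    have : (g : α → ℝ) x ∈ ({0, 1} : Set ℝ) := by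
      refine hcl.mem_of_tendsto hx (Eventually.of_forall fun i => ?_)
      rcases hallx (ns i) with h | h <;> simp [h]
    simpa using this
  set T : ℕ → Lp ℝ 1 μ → ℝ := fun n g => ∫ x, f n x * (g : α → ℝ) x ∂μ with hTdef
  have hTint : ∀ n (g : Lp ℝ 1 μ), g ∈ S → Integrable (fun x => f n x * (g : α → ℝ) x) μ := by
    intro n g hg
    have h := Integrable.bdd_mul (c := 1) (hf n) (Lp.aestronglyMeasurable g)
      (by filter_upwards [hg] with x hx; rcases hx with h | h <;> simp [h])
    simpa [mul_comm] using h
  -- key continuity estimate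
  have hkey : ∀ (n : ℕ) (g h : Lp ℝ 1 μ), g ∈ S → h ∈ S → ∃ D : Set α, MeasurableSet D ∧
      μ D ≤ ENNReal.ofReal (dist g h) ∧ |T n g - T n h| ≤ ∫ x in D, |f n x| ∂μ := by
    intro n g h hg hh
    set G := (Lp.aestronglyMeasurable g).mk _ with hGdef
    set H := (Lp.aestronglyMeasurable h).mk _ with hHdef
    have hGeq : (g : α → ℝ) =ᵐ[μ] G := (Lp.aestronglyMeasurable g).ae_eq_mk
    have hHeq : (h : α → ℝ) =ᵐ[μ] H := (Lp.aestronglyMeasurable h).ae_eq_mk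
    have hGm : Measurable G := (Lp.aestronglyMeasurable g).stronglyMeasurable_mk.measurable
    have hHm : Measurable H := (Lp.aestronglyMeasurable h).stronglyMeasurable_mk.measurable
    set D := {x | G x ≠ H x} with hDdef
    have hD : MeasurableSet D := (measurableSet_eq_fun hGm hHm).compl
    refine ⟨D, hD, ?_, ?_⟩
    · have h1 : μ D = ∫⁻ x, ‖(g : α → ℝ) x - (h : α → ℝ) x‖₊ ∂μ := by
        have : μ D = ∫⁻ x, D.indicator (fun _ => (1:ℝ≥0∞)) x ∂μ := by
          rw [lintegral_indicator hD]; simp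
        rw [this]
        refine lintegral_congr_ae ?_
        filter_upwards [hGeq, hHeq, hg, hh] with x hxg hxh hxg01 hxh01
        by_cases hx : G x = H x
        · have : (g : α → ℝ) x = (h : α → ℝ) x := by rw [hxg, hxh, hx]
          simp [hDdef, Set.indicator_of_notMem, hx, this]
        · have hne : (g : α → ℝ) x ≠ (h : α → ℝ) x := by rw [hxg, hxh]; exact hx
          have h1 : (‖(g : α → ℝ) x - (h : α → ℝ) x‖₊ : ℝ≥0∞) = 1 := by
            rcases hxg01 with h0 | h0 <;> rcases hxh01 with h1' | h1' <;>
              rw [h0, h1'] at hne ⊢ <;> simp at hne ⊢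
          simp [hDdef, Set.indicator_of_mem, hx, h1]
      have h2 : ∫⁻ x, ‖(g : α → ℝ) x - (h : α → ℝ) x‖₊ ∂μ =
          eLpNorm ((g : α → ℝ) - (h : α → ℝ)) 1 μ := by
        rw [eLpNorm_one_eq_lintegral_enorm]; rfl
      rw [h1, h2, Lp.dist_def, ENNReal.ofReal_toReal]
      rw [← eLpNorm_congr_ae (Lp.coeFn_sub g h)]
      exact Lp.eLpNorm_ne_top _
    · rw [hTdef]
      simp only
      rw [← integral_sub (hTint n g hg) (hTint n h hh)]
      have habs : |∫ x, (f n x * (g : α → ℝ) x - f n x * (h : α → ℝ) x) ∂μ| ≤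
          ∫ x, |f n x * (g : α → ℝ) x - f n x * (h : α → ℝ) x| ∂μ := by
        simpa [Real.norm_eq_abs] using norm_integral_le_integral_norm (μ := μ)
          (f := fun x => f n x * (g : α → ℝ) x - f n x * (h : α → ℝ) x)
      refine habs.trans ?_
      rw [show ∫ x in D, |f n x| ∂μ = ∫ x, D.indicator (fun y => |f n y|) x ∂μ from
        (integral_indicator hD).symm]
      refine integral_mono_ae ((hTint n g hg).sub (hTint n h hh)).abs
        (((hf n).abs).indicator hD) ?_
      filter_upwards [hGeq, hHeq, hg, hh] with x hxg hxh hxg01 hxh01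
      by_cases hx : G x = H x
      · have : (g : α → ℝ) x = (h : α → ℝ) x := by rw [hxg, hxh, hx]
        simp only [this, sub_self, abs_zero]
        simp [Set.indicator_apply]
        positivity
      · have hmem : x ∈ D := hx
        rw [Set.indicator_of_mem hmem]
        have hle : |(g : α → ℝ) x - (h : α → ℝ) x| ≤ 1 := by
          rcases hxg01 with h0 | h0 <;> rcases hxh01 with h1 | h1 <;> simp [h0, h1]
        calc |f n x * (g : α → ℝ) x - f n x * (h : α → ℝ) x|
            = |f n x| * |(g : α → ℝ) x - (h : α → ℝ) x| := by rw [← abs_mul, mul_sub]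
          _ ≤ |f n x| * 1 := mul_le_mul_of_nonneg_left hle (abs_nonneg _)
          _ = |f n x| := mul_one _
  -- continuity of each T n on S
  have hTcont : ∀ n, Continuous fun g : ↥S => T n (g : Lp ℝ 1 μ) := by
    intro n
    rw [Metric.continuous_iff]
    rintro ⟨g, hg⟩ ε₀ hε₀
    obtain ⟨δ, hδpos, hδ⟩ := absCont (hf n) (half_pos hε₀)
    refine ⟨δ, hδpos, ?_⟩
    rintro ⟨h, hh⟩ hdist
    rw [Subtype.dist_eq] at hdist
    obtain ⟨D, hD, hμD, hest⟩ := hkey n h g hh hg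
    have hμD' : μ D ≤ ENNReal.ofReal δ := hμD.trans (ENNReal.ofReal_le_ofReal hdist.le)
    have := (hest.trans (hδ D hD hμD')).trans_lt (half_lt_self hε₀)
    rwa [Real.dist_eq]
  -- S-elements are a.e. indicators
  have hTset : ∀ g : Lp ℝ 1 μ, g ∈ S → ∃ A : Set α, MeasurableSet A ∧
      (∀ᵐ x ∂μ, (g : α → ℝ) x = A.indicator (fun _ => (1:ℝ)) x) ∧
      ∀ n, T n g = ∫ x in A, f n x ∂μ := by
    intro g hg
    set G := (Lp.aestronglyMeasurable g).mk _ with hGdef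
    have hGeq : (g : α → ℝ) =ᵐ[μ] G := (Lp.aestronglyMeasurable g).ae_eq_mk
    have hGm : Measurable G := (Lp.aestronglyMeasurable g).stronglyMeasurable_mk.measurable
    set A := {x | G x = 1} with hAdef
    have hA : MeasurableSet A := measurableSet_eq_fun hGm measurable_const
    have hind : ∀ᵐ x ∂μ, (g : α → ℝ) x = A.indicator (fun _ => (1:ℝ)) x := by
      filter_upwards [hGeq, hg] with x hx hx01
      by_cases hmem : G x = 1
      · rw [Set.indicator_of_mem (show x ∈ A from hmem), hx, hmem]
      · rw [Set.indicator_of_notMem (show x ∉ A from hmem), hx]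
        rcases hx01 with h0 | h0
        · rw [← hx]; exact h0
        · exact absurd (hx ▸ h0 : G x = 1) hmem
    refine ⟨A, hA, hind, fun n => ?_⟩
    have : T n g = ∫ x, A.indicator (f n) x ∂μ := by
      refine integral_congr_ae ?_
      filter_upwards [hind] with x hx
      show f n x * (g : α → ℝ) x = A.indicator (f n) x
      rw [hx]
      by_cases hmem : x ∈ A
      · rw [Set.indicator_of_mem hmem, Set.indicator_of_mem hmem, mul_one]
      · rw [Set.indicator_of_notMem hmem, Set.indicator_of_notMem hmem, mul_zero]
    rw [this, integral_indicator hA]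
  have hTcauchy : ∀ g : ↥S, CauchySeq fun n => T n (g : Lp ℝ 1 μ) := by
    rintro ⟨g, hg⟩
    obtain ⟨A, hA, -, hTA⟩ := hTset g hg
    simpa only [hTA] using hcauchy A hA
  -- Baire category argument
  set ε' : ℝ := ε / 8 with hε'def
  have hε' : (0:ℝ) < ε' := by positivity
  set F : ℕ → Set ↥S := fun k =>
    {g : ↥S | ∀ p q, k ≤ p → k ≤ q →
      |T p (g : Lp ℝ 1 μ) - T q (g : Lp ℝ 1 μ)| ≤ ε'} with hFdef
  have hFclosed : ∀ k, IsClosed (F k) := by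
    intro k
    have hrw : F k = ⋂ (p) (q),
        {g : ↥S | k ≤ p → k ≤ q → |T p (g : Lp ℝ 1 μ) - T q (g : Lp ℝ 1 μ)| ≤ ε'} := by
      ext g; simp only [hFdef, Set.mem_iInter, Set.mem_setOf_eq]
    rw [hrw]
    refine isClosed_iInter fun p => isClosed_iInter fun q => ?_
    by_cases hp : k ≤ p
    · by_cases hq : k ≤ q
      · have hrw2 : {g : ↥S | k ≤ p → k ≤ q →
            |T p (g : Lp ℝ 1 μ) - T q (g : Lp ℝ 1 μ)| ≤ ε'} =
            (fun g : ↥S => |T p (g : Lp ℝ 1 μ) - T q (g : Lp ℝ 1 μ)|) ⁻¹' Set.Iic ε' := by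
          ext g; simp [hp, hq]
        rw [hrw2]
        exact IsClosed.preimage (((hTcont p).sub (hTcont q)).abs) isClosed_Iic
      · have hrw2 : {g : ↥S | k ≤ p → k ≤ q →
            |T p (g : Lp ℝ 1 μ) - T q (g : Lp ℝ 1 μ)| ≤ ε'} = Set.univ := by
          ext g; simp [hq]
        rw [hrw2]; exact isClosed_univ
    · have hrw2 : {g : ↥S | k ≤ p → k ≤ q →
          |T p (g : Lp ℝ 1 μ) - T q (g : Lp ℝ 1 μ)| ≤ ε'} = Set.univ := by
        ext g; simp [hp]
      rw [hrw2]; exact isClosed_univ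
  have hcover : ⋃ k, F k = Set.univ := by
    ext g
    simp only [Set.mem_iUnion, Set.mem_univ, iff_true]
    obtain ⟨N, hN⟩ := Metric.cauchySeq_iff.1 (hTcauchy g) ε' hε'
    refine ⟨N, fun p q hp hq => ?_⟩
    have := hN p hp q hq
    rw [Real.dist_eq] at this
    exact this.le
  haveI : Nonempty ↥S := ⟨⟨0, by
    filter_upwards [Lp.coeFn_zero (E := ℝ) (p := 1) (μ := μ)] with x hx
    left; exact hx⟩⟩
  haveI : CompleteSpace ↥S := hS_closed.completeSpace_coe
  obtain ⟨k₀, g₀, hg₀int⟩ : ∃ k, ∃ g, g ∈ interior (F k) := by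
    obtain ⟨k, hk⟩ := nonempty_interior_of_iUnion_of_closed hFclosed hcover
    exact ⟨k, hk⟩
  obtain ⟨r, hrpos, hball⟩ := Metric.isOpen_iff.1 isOpen_interior g₀ hg₀int
  have hball' : ∀ h : ↥S, dist h g₀ < r → h ∈ F k₀ := fun h hh =>
    interior_subset (hball hh)
  obtain ⟨A₀, hA₀, hg₀ind, -⟩ := hTset (g₀ : Lp ℝ 1 μ) g₀.2
  -- indicator elements of S
  have hμfin : ∀ B : Set α, μ B ≠ ∞ := fun B => measure_ne_top μ B
  set ind : ∀ B : Set α, MeasurableSet B → Lp ℝ 1 μ := fun B hB =>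
    indicatorConstLp 1 hB (hμfin B) (1:ℝ) with hinddef
  have hcoe : ∀ B (hB : MeasurableSet B),
      (ind B hB : α → ℝ) =ᵐ[μ] B.indicator (fun _ => (1:ℝ)) :=
    fun B hB => indicatorConstLp_coeFn
  have hindS : ∀ B (hB : MeasurableSet B), ind B hB ∈ S := by
    intro B hB
    filter_upwards [hcoe B hB] with x hx
    rw [hx]
    by_cases hmem : x ∈ B
    · right; rw [Set.indicator_of_mem hmem]
    · left; rw [Set.indicator_of_notMem hmem]
  have hTind : ∀ n B (hB : MeasurableSet B), T n (ind B hB) = ∫ x in B, f n x ∂μ := by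
    intro n B hB
    have h1 : T n (ind B hB) = ∫ x, B.indicator (f n) x ∂μ := by
      refine integral_congr_ae ?_
      filter_upwards [hcoe B hB] with x hx
      show f n x * _ = _
      rw [hx]
      by_cases hmem : x ∈ B
      · rw [Set.indicator_of_mem hmem, Set.indicator_of_mem hmem, mul_one]
      · rw [Set.indicator_of_notMem hmem, Set.indicator_of_notMem hmem, mul_zero]
    rw [h1, integral_indicator hB]
  -- distance to g₀
  have hdistle : ∀ B (hB : MeasurableSet B),
      dist (ind B hB) (g₀ : Lp ℝ 1 μ) ≤ (μ ((B \ A₀) ∪ (A₀ \ B))).toReal := by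
    intro B hB
    rw [Lp.dist_def]
    refine ENNReal.toReal_mono (measure_ne_top _ _) ?_
    have hae : (⇑(ind B hB) - ⇑(g₀ : Lp ℝ 1 μ)) =ᵐ[μ]
        fun x => B.indicator (fun _ => (1:ℝ)) x - A₀.indicator (fun _ => (1:ℝ)) x := by
      filter_upwards [hcoe B hB, hg₀ind] with x h1 h2
      simp only [Pi.sub_apply, h1, h2]
    rw [eLpNorm_congr_ae hae, eLpNorm_one_eq_lintegral_enorm]
    have hpt : ∀ x,
        (‖B.indicator (fun _ => (1:ℝ)) x - A₀.indicator (fun _ => (1:ℝ)) x‖₊ : ℝ≥0∞)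
        ≤ ((B \ A₀) ∪ (A₀ \ B)).indicator (fun _ => (1:ℝ≥0∞)) x := by
      intro x
      by_cases hB' : x ∈ B <;> by_cases hA' : x ∈ A₀ <;>
        simp [Set.indicator_apply, hB', hA']
    calc (∫⁻ x, ‖B.indicator (fun _ => (1:ℝ)) x - A₀.indicator (fun _ => (1:ℝ)) x‖₊ ∂μ)
        ≤ ∫⁻ x, ((B \ A₀) ∪ (A₀ \ B)).indicator (fun _ => (1:ℝ≥0∞)) x ∂μ :=
          lintegral_mono hpt
      _ = μ ((B \ A₀) ∪ (A₀ \ B)) := by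
          rw [lintegral_indicator ((hB.diff hA₀).union (hA₀.diff hB))]; simp
  -- the main estimate
  have hEst : ∀ n, k₀ ≤ n → ∀ E' : Set α, MeasurableSet E' → μ E' < ENNReal.ofReal r →
      |(∫ x in E', f n x ∂μ) - ∫ x in E', f k₀ x ∂μ| ≤ 2 * ε' := by
    intro n hn E' hE' hμE'
    have hmem : ∀ B (hB : MeasurableSet B), (B \ A₀) ∪ (A₀ \ B) ⊆ E' →
        (⟨ind B hB, hindS B hB⟩ : ↥S) ∈ F k₀ := by
      intro B hB hsub
      refine hball' _ ?_
      rw [Subtype.dist_eq]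
      refine lt_of_le_of_lt (hdistle B hB) ?_
      have h1 : μ ((B \ A₀) ∪ (A₀ \ B)) ≤ μ E' := measure_mono hsub
      have h2 : μ ((B \ A₀) ∪ (A₀ \ B)) < ENNReal.ofReal r := h1.trans_lt hμE'
      exact ENNReal.toReal_lt_of_lt_ofReal h2
    set B₁ := A₀ ∪ E' with hB₁def
    set B₂ := A₀ \ E' with hB₂def
    have hB₁ : MeasurableSet B₁ := hA₀.union hE'
    have hB₂ : MeasurableSet B₂ := hA₀.diff hE'
    have hsub₁ : (B₁ \ A₀) ∪ (A₀ \ B₁) ⊆ E' := by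
      intro x hx
      rcases hx with hx | hx
      · rcases hx.1 with h | h
        · exact absurd h hx.2
        · exact h
      · exact absurd (Set.mem_union_left _ hx.1) hx.2
    have hsub₂ : (B₂ \ A₀) ∪ (A₀ \ B₂) ⊆ E' := by
      intro x hx
      rcases hx with hx | hx
      · exact absurd hx.1.1 hx.2
      · by_contra hxE
        exact hx.2 ⟨hx.1, hxE⟩
    have hm₁ := hmem B₁ hB₁ hsub₁
    have hm₂ := hmem B₂ hB₂ hsub₂
    have hF₁ : |T n (ind B₁ hB₁) - T k₀ (ind B₁ hB₁)| ≤ ε' := hm₁ n k₀ hn le_rfl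
    have hF₂ : |T n (ind B₂ hB₂) - T k₀ (ind B₂ hB₂)| ≤ ε' := hm₂ n k₀ hn le_rfl
    have hsplit : ∀ j, ∫ x in E', f j x ∂μ = T j (ind B₁ hB₁) - T j (ind B₂ hB₂) := by
      intro j
      rw [hTind, hTind]
      have hBeq : B₂ ∪ E' = B₁ := Set.diff_union_self
      have := setIntegral_union (f := f j) (μ := μ) (s := B₂) (t := E')
        disjoint_sdiff_self_left hE' ((hf j).integrableOn) ((hf j).integrableOn)
      rw [hBeq] at this
      rw [this]; ring
    rw [hsplit n, hsplit k₀]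
    have hre : T n (ind B₁ hB₁) - T n (ind B₂ hB₂) -
        (T k₀ (ind B₁ hB₁) - T k₀ (ind B₂ hB₂)) =
        (T n (ind B₁ hB₁) - T k₀ (ind B₁ hB₁)) -
        (T n (ind B₂ hB₂) - T k₀ (ind B₂ hB₂)) := by ring
    rw [hre]
    calc |(T n (ind B₁ hB₁) - T k₀ (ind B₁ hB₁)) -
          (T n (ind B₂ hB₂) - T k₀ (ind B₂ hB₂))|
        ≤ |T n (ind B₁ hB₁) - T k₀ (ind B₁ hB₁)| +
          |T n (ind B₂ hB₂) - T k₀ (ind B₂ hB₂)| := abs_sub _ _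
      _ ≤ ε' + ε' := add_le_add hF₁ hF₂
      _ = 2 * ε' := by ring
  -- choose δ
  choose d hdpos hdspec using fun i => absCont (hf i) (show (0:ℝ) < ε/4 by positivity)
  set δfin : ℝ := (Finset.range (k₀+1)).inf' ⟨0, by simp⟩ d with hδfindef
  refine ⟨min (r/2) δfin, ?_, ?_⟩
  · refine lt_min (by positivity) ?_
    rw [hδfindef]
    exact (Finset.lt_inf'_iff _).2 fun i _ => hdpos i
  · intro n s hs hμs
    have hδr : min (r/2) δfin ≤ r/2 := min_le_left _ _
    have hδf : ∀ i, i ≤ k₀ → min (r/2) δfin ≤ d i := fun i hi =>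
      (min_le_right _ _).trans (Finset.inf'_le d (by simp only [Finset.mem_range]; omega))
    by_cases hn : n ≤ k₀
    · have := hdspec n s hs (hμs.trans (ENNReal.ofReal_le_ofReal (hδf n hn)))
      linarith
    · push_neg at hn
      set φ := (hf n).1.mk _ with hφdef
      have hφeq : f n =ᵐ[μ] φ := (hf n).1.ae_eq_mk
      have hφm : Measurable φ := (hf n).1.stronglyMeasurable_mk.measurable
      set t := {x | 0 ≤ φ x} with htdef
      have ht : MeasurableSet t := measurableSet_le measurable_const hφm
      set P := s ∩ t with hPdef
      set N := s \ t with hNdef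
      have hP : MeasurableSet P := hs.inter ht
      have hN : MeasurableSet N := hs.diff ht
      have hPN : Disjoint P N := by
        rw [Set.disjoint_left]
        rintro x ⟨-, hxt⟩ ⟨-, hxt'⟩
        exact hxt' hxt
      have hsplit : ∫ x in s, |f n x| ∂μ =
          (∫ x in P, |f n x| ∂μ) + ∫ x in N, |f n x| ∂μ := by
        have h := setIntegral_union (f := fun x => |f n x|) (μ := μ) hPN hN
          ((hf n).abs.integrableOn) ((hf n).abs.integrableOn)
        rw [Set.inter_union_diff] at h
        exact h
      have hμsr : μ s < ENNReal.ofReal r := by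
        refine lt_of_le_of_lt (hμs.trans (ENNReal.ofReal_le_ofReal hδr)) ?_
        exact ENNReal.ofReal_lt_ofReal_iff hrpos |>.2 (by linarith)
      have key : ∀ Q : Set α, MeasurableSet Q → Q ⊆ s →
          |∫ x in Q, f n x ∂μ| ≤ ε/4 + 2 * ε' := by
        intro Q hQ hQs
        have hμQr : μ Q < ENNReal.ofReal r := (measure_mono hQs).trans_lt hμsr
        have h1 := hEst n hn.le Q hQ hμQr
        have h2 : |∫ x in Q, f k₀ x ∂μ| ≤ ∫ x in Q, |f k₀ x| ∂μ := by
          simpa [Real.norm_eq_abs] using norm_integral_le_integral_norm (μ := μ.restrict Q)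
            (f := fun x => f k₀ x)
        have h3 : ∫ x in Q, |f k₀ x| ∂μ ≤ ε/4 :=
          hdspec k₀ Q hQ ((measure_mono hQs).trans
            (hμs.trans (ENNReal.ofReal_le_ofReal (hδf k₀ le_rfl))))
        calc |∫ x in Q, f n x ∂μ|
            = |(∫ x in Q, f k₀ x ∂μ) + ((∫ x in Q, f n x ∂μ) - ∫ x in Q, f k₀ x ∂μ)| := by
              ring_nf
          _ ≤ |∫ x in Q, f k₀ x ∂μ| + |(∫ x in Q, f n x ∂μ) - ∫ x in Q, f k₀ x ∂μ| :=
              abs_add_le _ _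
          _ ≤ ε/4 + 2 * ε' := add_le_add (h2.trans h3) h1
      have hPb := key P hP Set.inter_subset_left
      have hNb := key N hN Set.diff_subset
      have hPeq : ∫ x in P, |f n x| ∂μ = ∫ x in P, f n x ∂μ := by
        refine setIntegral_congr_ae hP ?_
        filter_upwards [hφeq] with x hx hxP
        exact abs_of_nonneg (by rw [hx]; exact hxP.2)
      have hNeq : ∫ x in N, |f n x| ∂μ = -∫ x in N, f n x ∂μ := by
        rw [← integral_neg]
        refine setIntegral_congr_ae hN ?_
        filter_upwards [hφeq] with x hx hxN
        have hneg : φ x < 0 := not_le.1 hxN.2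
        rw [abs_of_neg (by rw [hx]; exact hneg)]
      rw [hsplit, hPeq, hNeq]
      have h1 := (abs_le.1 hPb).2
      have h2 := (abs_le.1 hNb).1
      rw [hε'def] at h1 h2
      linarith

lemma norm_bound {m : ℕ} (hm : 1 ≤ m) (U : Set (Fin m → ℝ)) (hU : MeasurableSet U)
    (hUbdd : Bornology.IsBounded U) (f : ℕ → (Fin m → ℝ) → ℝ)
    (hf : ∀ n, Integrable (f n) (volume.restrict U))
    {δ : ℝ} (hδ : 0 < δ)
    (hui : ∀ n, ∀ s : Set (Fin m → ℝ), MeasurableSet s →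
      (volume.restrict U) s ≤ ENNReal.ofReal δ →
      ∫ x in s, |f n x| ∂(volume.restrict U) ≤ 1) :
    ∃ M : ℝ, ∀ n, ∫ x, |f n x| ∂(volume.restrict U) ≤ M := by
  haveI : NeZero m := ⟨by omega⟩
  obtain ⟨R₀, hR₀⟩ := (Metric.isBounded_iff_subset_closedBall 0).1 hUbdd
  set R : ℝ := max R₀ 1 with hRdef
  have hRpos : 0 < R := lt_of_lt_of_le one_pos (le_max_right _ _)
  have hsub : ∀ x ∈ U, ∀ i, |x i| ≤ R := by
    intro x hx i
    have h1 : ‖x‖ ≤ R₀ := by simpa using mem_closedBall_zero_iff.1 (hR₀ hx)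
    exact ((norm_le_pi_norm x i).trans h1).trans (le_max_left _ _)
  set A : ℝ := (2*R)^(m-1) with hAdef
  have hA0 : 0 < A := by positivity
  set t : ℝ := δ / (A + 1) with htdef
  have ht0 : 0 < t := by positivity
  set K : ℕ := ⌈(2*R)/t⌉₊ + 1 with hKdef
  set slab : ℕ → Set (Fin m → ℝ) := fun i =>
    {x | x 0 ∈ Ico (-R + i*t) (-R + (i+1)*t)} with hslabdef
  have hslabm : ∀ i, MeasurableSet (slab i) := fun i =>
    (measurable_pi_apply 0) measurableSet_Ico
  have hfloor : ∀ (x : Fin m → ℝ) i, x ∈ slab i → i = ⌊(x 0 + R)/t⌋₊ := by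
    intro x i hx
    obtain ⟨h1, h2⟩ := hx
    symm
    have hnn : 0 ≤ (x 0 + R)/t := by
      rw [le_div_iff₀ ht0]
      push_cast at h1
      nlinarith [ht0.le, (Nat.cast_nonneg i : (0:ℝ) ≤ i)]
    rw [Nat.floor_eq_iff hnn]
    constructor
    · rw [le_div_iff₀ ht0]; linarith
    · rw [div_lt_iff₀ ht0]; push_cast; push_cast at h1 h2; linarith
  have hdisj : (↑(Finset.range K) : Set ℕ).Pairwise (Function.onFun Disjoint slab) := by
    intro i _ j _ hij
    rw [Function.onFun, Set.disjoint_left]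
    intro x hxi hxj
    exact hij ((hfloor x i hxi).trans (hfloor x j hxj).symm)
  have hcover : U ⊆ ⋃ i ∈ Finset.range K, slab i := by
    intro x hx
    have hxR := hsub x hx 0
    rw [abs_le] at hxR
    set i := ⌊(x 0 + R)/t⌋₊ with hidef
    have hnn : 0 ≤ (x 0 + R)/t := div_nonneg (by linarith) ht0.le
    have h1 : (i : ℝ) ≤ (x 0 + R)/t := Nat.floor_le hnn
    have h2 : (x 0 + R)/t < i + 1 := Nat.lt_floor_add_one _
    have hiK : i < K := by
      have : i ≤ ⌈(2*R)/t⌉₊ := by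
        refine le_trans (Nat.floor_le_floor ?_) (Nat.floor_le_ceil _)
        exact (div_le_div_iff_of_pos_right ht0).2 (by linarith)
      omega
    refine Set.mem_biUnion (Finset.mem_range.2 hiK) ?_
    have h1' : (i:ℝ)*t ≤ x 0 + R := (le_div_iff₀ ht0).1 h1
    have h2' : x 0 + R < ((i:ℝ)+1)*t := by
      have := (div_lt_iff₀ ht0).1 h2
      linarith
    exact ⟨by linarith, by push_cast; linarith⟩
  -- measure of each slab piece is small
  have hslabvol : ∀ i : ℕ, (volume.restrict U) (slab i) ≤ ENNReal.ofReal δ := by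
    intro i
    rw [Measure.restrict_apply (hslabm i)]
    have hsub2 : slab i ∩ U ⊆ Set.pi Set.univ (fun j : Fin m =>
        if j = 0 then Ico (-R + i*t) (-R + (i+1)*t) else Icc (-R) R) := by
      rintro x ⟨hx1, hx2⟩
      rw [Set.mem_univ_pi]
      intro j
      by_cases hj : j = 0
      · subst hj; simp only [if_pos rfl]; exact hx1
      · rw [if_neg hj]
        have := hsub x hx2 j
        rw [abs_le] at this
        exact this
    refine (measure_mono hsub2).trans ?_
    rw [volume_pi_pi]
    have hprod : (∏ j : Fin m, volume (if j = 0 then Ico (-R + i*t) (-R + (i+1)*t)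
        else Icc (-R) R)) = volume (Ico (-R + (i:ℝ)*t) (-R + ((i:ℝ)+1)*t)) *
        (ENNReal.ofReal (2*R))^(m-1) := by
      rw [← Finset.mul_prod_erase Finset.univ _ (Finset.mem_univ (0 : Fin m)), if_pos rfl]
      congr 1
      have heq : ∀ j ∈ Finset.univ.erase (0 : Fin m),
          volume (if j = 0 then Ico (-R + (i:ℝ)*t) (-R + ((i:ℝ)+1)*t) else Icc (-R) R)
          = ENNReal.ofReal (2*R) := by
        intro j hj
        rw [if_neg (Finset.ne_of_mem_erase hj), Real.volume_Icc]
        congr 1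
        ring
      rw [Finset.prod_congr rfl heq, Finset.prod_const,
        Finset.card_erase_of_mem (Finset.mem_univ _), Finset.card_univ, Fintype.card_fin]
    rw [hprod, Real.volume_Ico]
    have harith : -R + ((i:ℝ)+1)*t - (-R + (i:ℝ)*t) = t := by ring
    rw [harith, ← ENNReal.ofReal_pow (by linarith), ← ENNReal.ofReal_mul ht0.le]
    refine ENNReal.ofReal_le_ofReal ?_
    rw [htdef, hAdef, div_mul_eq_mul_div, div_le_iff₀ (by positivity)]
    nlinarith [hA0]
  -- sum up
  refine ⟨K, fun n => ?_⟩
  have hres : (volume.restrict U).restrict (⋃ i ∈ Finset.range K, slab i) =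
      volume.restrict U := by
    refine Measure.restrict_eq_self_of_ae_mem ?_
    filter_upwards [ae_restrict_mem hU] with x hx
    exact hcover hx
  have h1 : ∫ x, |f n x| ∂(volume.restrict U) =
      ∫ x in (⋃ i ∈ Finset.range K, slab i), |f n x| ∂(volume.restrict U) := by
    rw [hres]
  rw [h1, integral_biUnion_finset (Finset.range K) (fun i _ => hslabm i) hdisj
    (fun i _ => (hf n).abs.integrableOn)]
  calc (∑ i ∈ Finset.range K, ∫ x in slab i, |f n x| ∂(volume.restrict U))
      ≤ ∑ i ∈ Finset.range K, (1:ℝ) :=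
        Finset.sum_le_sum fun i _ => hui n (slab i) (hslabm i) (hslabvol i)
    _ = K := by simp

/-- If `vₙ ⇀ v` weakly in `L₁(U)` and `(wₙ)` is uniformly bounded in
`L_∞(U)` and converges a.e. to `w`, then `∫ |vₙ||wₙ − w| → 0` and `vₙ wₙ ⇀ v w`
weakly in `L₁(U)`. Weak `L₁` convergence is expressed by testing against all bounded
measurable functions. -/
theorem weak_L1_times_ae_bounded
    (m : ℕ) (hm : 1 ≤ m)
    (U : Set (Fin m → ℝ)) (hUopen : IsOpen U) (hUbdd : Bornology.IsBounded U)
    (v : ℕ → (Fin m → ℝ) → ℝ) (vlim : (Fin m → ℝ) → ℝ)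
    (w : ℕ → (Fin m → ℝ) → ℝ) (wlim : (Fin m → ℝ) → ℝ)
    (hv : ∀ n, IntegrableOn (v n) U) (hvlim : IntegrableOn vlim U)
    (hweak : ∀ g : (Fin m → ℝ) → ℝ,
      AEStronglyMeasurable g (volume.restrict U) →
      (∃ Cg : ℝ, ∀ᵐ x ∂(volume.restrict U), |g x| ≤ Cg) →
      Tendsto (fun n => ∫ x in U, v n x * g x) atTop (nhds (∫ x in U, vlim x * g x)))
    (hwmeas : ∀ n, AEStronglyMeasurable (w n) (volume.restrict U))
    (hwlimmeas : AEStronglyMeasurable wlim (volume.restrict U))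
    (C : ℝ) (hC : 0 < C)
    (hwbdd : ∀ n, ∀ᵐ x ∂(volume.restrict U), |w n x| ≤ C)
    (hwconv : ∀ᵐ x ∂(volume.restrict U),
      Tendsto (fun n => w n x) atTop (nhds (wlim x))) :
    Tendsto (fun n => ∫ x in U, |v n x| * |w n x - wlim x|) atTop (nhds 0) ∧
    ∀ g : (Fin m → ℝ) → ℝ,
      AEStronglyMeasurable g (volume.restrict U) →
      (∃ Cg : ℝ, ∀ᵐ x ∂(volume.restrict U), |g x| ≤ Cg) →
      Tendsto (fun n => ∫ x in U, v n x * w n x * g x) atTop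
        (nhds (∫ x in U, vlim x * wlim x * g x)) := by
  have hUmeas : MeasurableSet U := hUopen.measurableSet
  haveI : IsFiniteMeasure (volume.restrict U) :=
    ⟨by rw [Measure.restrict_apply_univ]; exact hUbdd.measure_lt_top⟩
  -- setwise Cauchy property from weak convergence
  have hcauchy : ∀ A : Set (Fin m → ℝ), MeasurableSet A →
      CauchySeq (fun n => ∫ x in A, v n x ∂(volume.restrict U)) := by
    intro A hA
    have hgm : AEStronglyMeasurable (A.indicator fun _ => (1:ℝ)) (volume.restrict U) :=
      ((stronglyMeasurable_const.indicator hA)).aestronglyMeasurable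
    have hgb : ∃ Cg : ℝ, ∀ᵐ x ∂(volume.restrict U), |A.indicator (fun _ => (1:ℝ)) x| ≤ Cg := by
      refine ⟨1, Eventually.of_forall fun x => ?_⟩
      by_cases h : x ∈ A <;> simp [Set.indicator_apply, h]
    have htend := hweak (A.indicator fun _ => (1:ℝ)) hgm hgb
    have heq : ∀ u : (Fin m → ℝ) → ℝ,
        (∫ x in U, u x * A.indicator (fun _ => (1:ℝ)) x) =
        ∫ x in A, u x ∂(volume.restrict U) := by
      intro u
      rw [← integral_indicator hA]
      refine integral_congr_ae (Eventually.of_forall fun x => ?_)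
      by_cases h : x ∈ A <;> simp [Set.indicator_apply, h]
    simp only [heq] at htend
    exact htend.cauchySeq
  -- a.e. bound on the limit wlim
  have hwlimbdd : ∀ᵐ x ∂(volume.restrict U), |wlim x| ≤ C := by
    filter_upwards [hwconv, ae_all_iff.2 hwbdd] with x hx hbd
    exact le_of_tendsto hx.abs (Eventually.of_forall hbd)
  -- integrability of the products
  have hprod : ∀ n, Integrable (fun x => v n x * (w n x - wlim x)) (volume.restrict U) := by
    intro n
    have hb : ∀ᵐ x ∂(volume.restrict U), ‖w n x - wlim x‖ ≤ 2*C := by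
      filter_upwards [hwbdd n, hwlimbdd] with x h1 h2
      rw [Real.norm_eq_abs]
      calc |w n x - wlim x| ≤ |w n x| + |wlim x| := abs_sub _ _
        _ ≤ 2*C := by linarith
    have h := Integrable.bdd_mul (c := 2*C) (hv n) ((hwmeas n).sub hwlimmeas) hb
    exact h.congr (Eventually.of_forall fun x => mul_comm _ _)
  have habsint : ∀ n, Integrable (fun x => |v n x| * |w n x - wlim x|)
      (volume.restrict U) := fun n =>
    (hprod n).abs.congr (Eventually.of_forall fun x => abs_mul _ _)
  -- uniform integrability for the norm bound
  obtain ⟨δ₁, hδ₁pos, hui₁⟩ := vhs_ui v hv hcauchy one_pos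
  obtain ⟨M, hM⟩ := norm_bound hm U hUmeas hUbdd v hv hδ₁pos hui₁
  have hM0 : 0 ≤ M := le_trans (integral_nonneg fun x => abs_nonneg _) (hM 0)
  have part1 : Tendsto (fun n => ∫ x in U, |v n x| * |w n x - wlim x|) atTop (nhds 0) := by
    rw [NormedAddCommGroup.tendsto_nhds_zero]
    intro ε hε
    set ε₁ : ℝ := ε / (8*C+1) with hε₁def
    have hε₁ : 0 < ε₁ := by positivity
    obtain ⟨δ, hδpos, hui⟩ := vhs_ui v hv hcauchy hε₁
    -- measurable representatives and Egorov
    set w' : ℕ → (Fin m → ℝ) → ℝ := fun n => (hwmeas n).mk _ with hw'def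
    set wl' : (Fin m → ℝ) → ℝ := hwlimmeas.mk _ with hwl'def
    have hw'eq : ∀ n, w n =ᵐ[volume.restrict U] w' n := fun n => (hwmeas n).ae_eq_mk
    have hwl'eq : wlim =ᵐ[volume.restrict U] wl' := hwlimmeas.ae_eq_mk
    have hconv' : ∀ᵐ x ∂(volume.restrict U),
        Tendsto (fun n => w' n x) atTop (nhds (wl' x)) := by
      filter_upwards [hwconv, ae_all_iff.2 hw'eq, hwl'eq] with x hx hxw hxl
      rw [← hxl]
      exact hx.congr hxw
    obtain ⟨t, htm, htμ, hunif⟩ := tendstoUniformlyOn_of_ae_tendsto'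
      (fun n => (hwmeas n).stronglyMeasurable_mk) hwlimmeas.stronglyMeasurable_mk hconv' hδpos
    rw [Metric.tendstoUniformlyOn_iff] at hunif
    set η : ℝ := ε / (4*(M+1)) with hηdef
    have hη : 0 < η := by positivity
    filter_upwards [hunif η hη] with n hn
    have hsplit : (∫ x in U, |v n x| * |w n x - wlim x|) =
        (∫ x in t, |v n x| * |w n x - wlim x| ∂(volume.restrict U)) +
        ∫ x in tᶜ, |v n x| * |w n x - wlim x| ∂(volume.restrict U) :=
      (integral_add_compl htm (habsint n)).symm
    -- bad set bound
    have hbad : (∫ x in t, |v n x| * |w n x - wlim x| ∂(volume.restrict U)) ≤ ε₁ * (2*C) := by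
      have h1 : (∫ x in t, |v n x| * |w n x - wlim x| ∂(volume.restrict U)) ≤
          ∫ x in t, |v n x| * (2*C) ∂(volume.restrict U) := by
        refine integral_mono_ae ((habsint n).restrict)
          (((hv n).abs.mul_const _).restrict) ?_
        refine ae_restrict_of_ae ?_
        filter_upwards [hwbdd n, hwlimbdd] with x h1 h2
        refine mul_le_mul_of_nonneg_left ?_ (abs_nonneg _)
        calc |w n x - wlim x| ≤ |w n x| + |wlim x| := abs_sub _ _
          _ ≤ 2*C := by linarith
      refine h1.trans ?_
      rw [integral_mul_const]
      exact mul_le_mul_of_nonneg_right (hui n t htm htμ) (by linarith)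
    -- good set bound
    have hgood : (∫ x in tᶜ, |v n x| * |w n x - wlim x| ∂(volume.restrict U)) ≤ M * η := by
      have h1 : (∫ x in tᶜ, |v n x| * |w n x - wlim x| ∂(volume.restrict U)) ≤
          ∫ x in tᶜ, |v n x| * η ∂(volume.restrict U) := by
        refine integral_mono_ae ((habsint n).restrict) (((hv n).abs.mul_const _).restrict) ?_
        have hmem := ae_restrict_mem (μ := volume.restrict U) htm.compl
        have hae : ∀ᵐ x ∂(volume.restrict U), w n x = w' n x ∧ wlim x = wl' x := by
          filter_upwards [hw'eq n, hwl'eq] with x h1 h2 using ⟨h1, h2⟩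
        filter_upwards [hmem, ae_restrict_of_ae hae] with x hx hxeq
        refine mul_le_mul_of_nonneg_left ?_ (abs_nonneg _)
        have := hn x hx
        rw [Real.dist_eq] at this
        rw [hxeq.1, hxeq.2]
        rw [abs_sub_comm]
        exact this.le
      refine h1.trans ?_
      rw [integral_mul_const]
      refine mul_le_mul_of_nonneg_right ?_ hη.le
      refine (setIntegral_le_integral (hv n).abs
        (Eventually.of_forall fun x => abs_nonneg _)).trans (hM n)
    have hnonneg : (0:ℝ) ≤ ∫ x in U, |v n x| * |w n x - wlim x| :=
      integral_nonneg fun x => mul_nonneg (abs_nonneg _) (abs_nonneg _)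
    rw [Real.norm_eq_abs, abs_of_nonneg hnonneg, hsplit]
    have hb1 : ε₁ * (2*C) < ε/4 := by
      rw [hε₁def, div_mul_eq_mul_div, div_lt_iff₀ (by positivity)]
      nlinarith
    have hb2 : M * η ≤ ε/4 := by
      rw [hηdef]
      have h4 : (0:ℝ) < 4*(M+1) := by positivity
      calc M * (ε/(4*(M+1))) = (M*ε)/(4*(M+1)) := by ring
        _ ≤ ε/4 := by rw [div_le_div_iff₀ h4 (by norm_num : (0:ℝ) < 4)]; nlinarith
    linarith
  refine ⟨part1, ?_⟩
  intro g hgm hgbdd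
  obtain ⟨Cg, hgb⟩ := hgbdd
  set Cg' : ℝ := max Cg 0 with hCg'def
  have hgb' : ∀ᵐ x ∂(volume.restrict U), |g x| ≤ Cg' :=
    hgb.mono fun x hx => hx.trans (le_max_left _ _)
  have hCg'0 : 0 ≤ Cg' := le_max_right _ _
  have hwg : Tendsto (fun n => ∫ x in U, v n x * (wlim x * g x)) atTop
      (nhds (∫ x in U, vlim x * (wlim x * g x))) := by
    refine hweak _ (hwlimmeas.mul hgm) ⟨C * Cg', ?_⟩
    filter_upwards [hwlimbdd, hgb'] with x h1 h2
    rw [abs_mul]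
    exact mul_le_mul h1 h2 (abs_nonneg _) hC.le
  have hint1 : ∀ n, Integrable (fun x => v n x * ((w n x - wlim x) * g x))
      (volume.restrict U) := by
    intro n
    have hb : ∀ᵐ x ∂(volume.restrict U), ‖(w n x - wlim x) * g x‖ ≤ 2*C*Cg' := by
      filter_upwards [hwbdd n, hwlimbdd, hgb'] with x h1 h2 h3
      rw [Real.norm_eq_abs, abs_mul]
      have h4 : |w n x - wlim x| ≤ 2*C := by
        calc |w n x - wlim x| ≤ |w n x| + |wlim x| := abs_sub _ _
          _ ≤ 2*C := by linarith
      calc |w n x - wlim x| * |g x| ≤ (2*C) * Cg' :=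
        mul_le_mul h4 h3 (abs_nonneg _) (by linarith)
        _ = 2*C*Cg' := by ring
    have h := Integrable.bdd_mul (c := 2*C*Cg') (hv n)
      (((hwmeas n).sub hwlimmeas).mul hgm) hb
    exact h.congr (Eventually.of_forall fun x => mul_comm _ _)
  have hint2 : ∀ n, Integrable (fun x => v n x * (wlim x * g x)) (volume.restrict U) := by
    intro n
    have hb : ∀ᵐ x ∂(volume.restrict U), ‖wlim x * g x‖ ≤ C*Cg' := by
      filter_upwards [hwlimbdd, hgb'] with x h1 h2
      rw [Real.norm_eq_abs, abs_mul]
      exact mul_le_mul h1 h2 (abs_nonneg _) hC.le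
    have h := Integrable.bdd_mul (c := C*Cg') (hv n) (hwlimmeas.mul hgm) hb
    exact h.congr (Eventually.of_forall fun x => mul_comm _ _)
  have hdecomp : ∀ n, (∫ x in U, v n x * w n x * g x) =
      (∫ x in U, v n x * ((w n x - wlim x) * g x)) +
      ∫ x in U, v n x * (wlim x * g x) := by
    intro n
    rw [← integral_add (hint1 n) (hint2 n)]
    refine integral_congr_ae (Eventually.of_forall fun x => ?_)
    show v n x * w n x * g x = _
    ring
  have hfirst : Tendsto (fun n => ∫ x in U, v n x * ((w n x - wlim x) * g x))
      atTop (nhds 0) := by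
    have hb : ∀ n, ‖∫ x in U, v n x * ((w n x - wlim x) * g x)‖ ≤
        (∫ x in U, |v n x| * |w n x - wlim x|) * Cg' := by
      intro n
      calc ‖∫ x in U, v n x * ((w n x - wlim x) * g x)‖
          ≤ ∫ x in U, ‖v n x * ((w n x - wlim x) * g x)‖ :=
            norm_integral_le_integral_norm _
        _ ≤ ∫ x in U, |v n x| * |w n x - wlim x| * Cg' := by
            refine integral_mono_ae (hint1 n).norm ((habsint n).mul_const _) ?_
            filter_upwards [hgb'] with x h1
            rw [Real.norm_eq_abs, abs_mul, abs_mul]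
            rw [← mul_assoc]
            refine mul_le_mul_of_nonneg_left h1 ?_
            positivity
        _ = (∫ x in U, |v n x| * |w n x - wlim x|) * Cg' := by
            rw [← integral_mul_const]
    have hlim : Tendsto (fun n => (∫ x in U, |v n x| * |w n x - wlim x|) * Cg')
        atTop (nhds 0) := by
      simpa using part1.mul_const Cg'
    exact squeeze_zero_norm hb hlim
  have hsum := hfirst.add hwg
  rw [zero_add] at hsum
  have hfin : (∫ x in U, vlim x * (wlim x * g x)) = ∫ x in U, vlim x * wlim x * g x :=
    integral_congr_ae (Eventually.of_forall fun x => by show vlim x * _ = _; ring)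
  rw [hfin] at hsum
  exact hsum.congr fun n => (hdecomp n).symm
end

section
/- Let G > 0, L > 0, M ≥ 0 and define A₁(r) := G r⁴/12 for r ≥ 0. There is a constant C = C(G, L, M) such that for every nonnegative h ∈ C([0,L]) with ∫₀ᴸ h dx ≤ M and A₁∘h ∈ C¹([0,L]): ‖A₁(h)‖_∞ ≤ C ( 1 + ‖∂ₓ A₁(h)‖_{L₂(0,L)} ). -/
open MeasureTheory Set

/-- `A₁(r) = G r⁴ / 12`. -/
noncomputable def A1 (G r : ℝ) : ℝ := G * r ^ 4 / 12

/-- Sup bound for `A₁(h)` in terms of the `L₂` norm of its derivative,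
uniform over nonnegative continuous `h` with mass `∫₀ᴸ h ≤ M`. -/
theorem sup_bound_A1
    (G L M : ℝ) (hG : 0 < G) (hL : 0 < L) (hM : 0 ≤ M) :
    ∃ C : ℝ, ∀ h : ℝ → ℝ,
      ContinuousOn h (Icc 0 L) →
      (∀ x ∈ Icc (0:ℝ) L, 0 ≤ h x) →
      (∫ x in (0:ℝ)..L, h x) ≤ M →
      (∀ x ∈ Icc (0:ℝ) L, DifferentiableAt ℝ (fun y => A1 G (h y)) x) →
      ContinuousOn (deriv (fun y => A1 G (h y))) (Icc 0 L) →
      sSup ((fun x => A1 G (h x)) '' Icc (0:ℝ) L) ≤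
        C * (1 + Real.sqrt (∫ x in (0:ℝ)..L, (deriv (fun y => A1 G (h y)) x) ^ 2)) := by
  set A : ℝ := G * (M / L) ^ 4 / 12 with hA
  refine ⟨max A ((L + 1) / 2), ?_⟩
  intro h hcont hpos hmass hdiff hdcont
  set f : ℝ → ℝ := fun y => A1 G (h y) with hf
  set g : ℝ → ℝ := deriv f with hg
  set S : ℝ := ∫ x in (0:ℝ)..L, g x ^ 2 with hS
  have hLle : (0:ℝ) ≤ L := hL.le
  have huIcc : uIcc (0:ℝ) L = Icc 0 L := uIcc_of_le hLle
  -- integrability facts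
  have hg_int : IntervalIntegrable g volume 0 L :=
    (huIcc ▸ hdcont).intervalIntegrable
  have hgabs_int : IntervalIntegrable (fun x => |g x|) volume 0 L :=
    (huIcc ▸ hdcont.abs).intervalIntegrable
  have hgsq_int : IntervalIntegrable (fun x => g x ^ 2) volume 0 L :=
    (huIcc ▸ (hdcont.pow 2)).intervalIntegrable
  have hh_int : IntervalIntegrable h volume 0 L := (huIcc ▸ hcont).intervalIntegrable
  have hS0 : 0 ≤ S :=
    intervalIntegral.integral_nonneg hLle (fun u _ => sq_nonneg _)
  have hsqrtS : 0 ≤ Real.sqrt S := Real.sqrt_nonneg _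
  -- a point where h is small
  obtain ⟨x₀, hx₀, hmin⟩ :=
    isCompact_Icc.exists_isMinOn (nonempty_Icc.mpr hLle) hcont
  have hx₀le : h x₀ ≤ M / L := by
    rw [le_div_iff₀ hL]
    have h1 : (∫ x in (0:ℝ)..L, h x₀) ≤ ∫ x in (0:ℝ)..L, h x :=
      intervalIntegral.integral_mono_on hLle intervalIntegrable_const hh_int
        (fun x hx => hmin hx)
    rw [intervalIntegral.integral_const, smul_eq_mul, sub_zero] at h1
    linarith [h1.trans hmass]
  have hfx₀ : f x₀ ≤ A := by
    have h0 : 0 ≤ h x₀ := hpos _ hx₀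
    have : h x₀ ^ 4 ≤ (M / L) ^ 4 := pow_le_pow_left₀ h0 hx₀le 4
    simp only [hf, A1, hA]
    have := mul_le_mul_of_nonneg_left this hG.le
    linarith
  -- ∫ |g| ≤ (L+1)/2 * sqrt S
  have hb : ∀ ε : ℝ, 0 < ε → (∫ x in (0:ℝ)..L, |g x|) ≤ ε * L / 2 + S / (2 * ε) := by
    intro ε hε
    have hpt : ∀ x ∈ Icc (0:ℝ) L, |g x| ≤ ε / 2 + g x ^ 2 / (2 * ε) := by
      intro x _
      have h1 : g x ^ 2 / (2 * ε) * (2 * ε) = g x ^ 2 :=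
        div_mul_cancel₀ _ (by positivity)
      nlinarith [sq_nonneg (ε - |g x|), sq_abs (g x), abs_nonneg (g x)]
    have hint2 : IntervalIntegrable (fun x => ε / 2 + g x ^ 2 / (2 * ε)) volume 0 L :=
      intervalIntegrable_const.add (hgsq_int.div_const _)
    have := intervalIntegral.integral_mono_on hLle hgabs_int hint2 hpt
    rw [intervalIntegral.integral_add intervalIntegrable_const (hgsq_int.div_const _),
      intervalIntegral.integral_div, intervalIntegral.integral_const, smul_eq_mul,
      sub_zero] at this
    rw [intervalIntegral.integral_div (2 * ε) (fun x => g x ^ 2)] at this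
    rw [hS, mul_comm ε L]
    exact this
  have key : (∫ x in (0:ℝ)..L, |g x|) ≤ (L + 1) / 2 * Real.sqrt S := by
    rcases eq_or_lt_of_le hS0 with hS0' | hSpos
    · have : (∫ x in (0:ℝ)..L, |g x|) ≤ 0 := by
        refine le_of_forall_pos_le_add fun δ hδ => ?_
        have hε : 0 < 2 * δ / L := by positivity
        have := hb _ hε
        rw [← hS0'] at this
        calc (∫ x in (0:ℝ)..L, |g x|) ≤ 2 * δ / L * L / 2 + 0 / (2 * (2 * δ / L)) := this
          _ = δ := by field_simp; ring
          _ ≤ 0 + δ := by linarith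
      rw [← hS0', Real.sqrt_zero, mul_zero]
      exact this
    · have hε : 0 < Real.sqrt S := Real.sqrt_pos.mpr hSpos
      have hmul : Real.sqrt S * Real.sqrt S = S := Real.mul_self_sqrt hS0
      have h2 : S / (2 * Real.sqrt S) = Real.sqrt S / 2 := by
        rw [eq_div_iff (by norm_num : (2:ℝ) ≠ 0)]
        field_simp
        nlinarith
      have := hb _ hε
      rw [h2] at this
      calc (∫ x in (0:ℝ)..L, |g x|) ≤ Real.sqrt S * L / 2 + Real.sqrt S / 2 := this
        _ = (L + 1) / 2 * Real.sqrt S := by ring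
  -- main pointwise bound
  have bound : ∀ x ∈ Icc (0:ℝ) L, f x ≤ A + (L + 1) / 2 * Real.sqrt S := by
    intro x hx
    have hsub : uIcc x₀ x ⊆ Icc 0 L := by
      rw [← huIcc]; exact uIcc_subset_uIcc (huIcc ▸ hx₀) (huIcc ▸ hx)
    have hftc : (∫ y in x₀..x, g y) = f x - f x₀ :=
      intervalIntegral.integral_deriv_eq_sub (fun y hy => hdiff y (hsub hy))
        ((hdcont.mono hsub).intervalIntegrable)
    have habs : |∫ y in x₀..x, g y| ≤ ∫ y in (0:ℝ)..L, |g y| := by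
      rcases le_total x₀ x with hxx | hxx
      · calc |∫ y in x₀..x, g y| ≤ ∫ y in x₀..x, |g y| :=
              intervalIntegral.abs_integral_le_integral_abs hxx
          _ ≤ ∫ y in (0:ℝ)..L, |g y| :=
              intervalIntegral.integral_mono_interval hx₀.1 hxx hx.2
                (ae_of_all _ fun y => abs_nonneg _) hgabs_int
      · rw [intervalIntegral.integral_symm, abs_neg]
        calc |∫ y in x..x₀, g y| ≤ ∫ y in x..x₀, |g y| :=
              intervalIntegral.abs_integral_le_integral_abs hxx
          _ ≤ ∫ y in (0:ℝ)..L, |g y| :=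
              intervalIntegral.integral_mono_interval hx.1 hxx hx₀.2
                (ae_of_all _ fun y => abs_nonneg _) hgabs_int
    have : f x ≤ f x₀ + |∫ y in x₀..x, g y| := by
      have := le_abs_self (∫ y in x₀..x, g y); linarith [hftc]
    linarith [habs.trans key]
  -- conclude via csSup_le
  have hA0 : 0 ≤ A := by positivity
  have hC1 : A ≤ max A ((L + 1) / 2) := le_max_left _ _
  have hC2 : (L + 1) / 2 ≤ max A ((L + 1) / 2) := le_max_right _ _
  refine csSup_le (by simp [nonempty_Icc.mpr hLle]) ?_
  rintro y ⟨x, hx, rfl⟩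
  calc f x ≤ A + (L + 1) / 2 * Real.sqrt S := bound x hx
    _ ≤ max A ((L + 1) / 2) * (1 + Real.sqrt S) := by
        have := mul_le_mul_of_nonneg_right hC2 hsqrtS
        nlinarith
end
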